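/- arXiv:0802.2197 — 7 statements merged into one kernel-verified Lean document; each statement's English description precedes it below -/
import Mathlib

section
/- For every integer n ≥ 1, the sum over all integers j in n + 2ℤ with j ≠ ±n of 1/|n² - j²| is at most (2 log(6n))/n. -/
open Finset

/-- real harmonic number -/
noncomputable def Hr (n : ℕ) : ℝ := ∑ i ∈ Finset.range n, (1:ℝ)/((i:ℝ)+1)

lemma Hr_nonneg (n : ℕ) : 0 ≤ Hr n := by
  unfold Hr; positivity

lemma Hr_mono {p n : ℕ} (h : p ≤ n) : Hr p ≤ Hr n := by
  unfold Hr
  exact Finset.sum_le_sum_of_subset_of_nonneg (Finset.range_subset_range.2 h)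
    (fun i _ _ => by positivity)

lemma Hr_eq_harmonic (n : ℕ) : Hr n = (harmonic n : ℝ) := by
  unfold Hr harmonic
  push_cast
  refine Finset.sum_congr rfl fun i _ => ?_
  rw [one_div]

lemma tele (n M : ℕ) :
    ∑ m ∈ range M, ((1:ℝ)/((m:ℝ)+1) - 1/((m:ℝ)+n+1))
      = ∑ i ∈ range n, ((1:ℝ)/((i:ℝ)+1) - 1/((M:ℝ)+i+1)) := by
  induction M with
  | zero => simp
  | succ M ih =>
    rw [Finset.sum_range_succ, ih]
    set f : ℕ → ℝ := fun i => 1/((M:ℝ)+(i:ℝ)+1) with hf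
    have h := Finset.sum_range_sub' f n
    have key : ∀ i ∈ range n,
        (1:ℝ)/((i:ℝ)+1) - 1/(((M+1:ℕ):ℝ)+i+1)
          = ((1:ℝ)/((i:ℝ)+1) - 1/((M:ℝ)+i+1)) + (f i - f (i+1)) := by
      intro i _
      simp only [hf]
      push_cast
      ring
    rw [Finset.sum_congr rfl key, Finset.sum_add_distrib, h]
    push_cast
    ring

lemma posBound (n M : ℕ) (hn : 1 ≤ n) :
    ∑ m ∈ range M, (1:ℝ)/(((m:ℝ)+1)*((m:ℝ)+n+1)) ≤ Hr n / n := by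
  have hn' : (0:ℝ) < n := by exact_mod_cast hn
  have key : ∀ m ∈ range M, (1:ℝ)/(((m:ℝ)+1)*((m:ℝ)+n+1))
      = (1/(n:ℝ)) * ((1:ℝ)/((m:ℝ)+1) - 1/((m:ℝ)+n+1)) := by
    intro m _
    have h1 : ((m:ℝ)+1) ≠ 0 := by positivity
    have h2 : ((m:ℝ)+n+1) ≠ 0 := by positivity
    field_simp
    ring
  rw [Finset.sum_congr rfl key, ← Finset.mul_sum, tele n M]
  have hle : ∑ i ∈ range n, ((1:ℝ)/((i:ℝ)+1) - 1/((M:ℝ)+i+1)) ≤ Hr n := by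
    unfold Hr
    refine Finset.sum_le_sum fun i _ => ?_
    have : (0:ℝ) ≤ 1/((M:ℝ)+i+1) := by positivity
    linarith
  calc (1/(n:ℝ)) * ∑ i ∈ range n, ((1:ℝ)/((i:ℝ)+1) - 1/((M:ℝ)+i+1))
      ≤ (1/(n:ℝ)) * Hr n := by
        apply mul_le_mul_of_nonneg_left hle (by positivity)
    _ = Hr n / n := by ring

lemma sumPos (n : ℕ) (hn : 1 ≤ n) :
    Summable (fun m : ℕ => (1:ℝ)/(((m:ℝ)+1)*((m:ℝ)+n+1))) :=
  summable_of_sum_range_le (fun m => by positivity) (fun M => posBound n M hn)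

lemma tsumPos (n : ℕ) (hn : 1 ≤ n) :
    ∑' m : ℕ, (1:ℝ)/(((m:ℝ)+1)*((m:ℝ)+n+1)) ≤ Hr n / n :=
  Real.tsum_le_of_sum_range_le (fun m => by positivity) (fun M => posBound n M hn)

lemma midBound (p : ℕ) :
    ∑ m ∈ range p, (1:ℝ)/(((m:ℝ)+1)*((p:ℝ)-(m:ℝ))) ≤ 2 * Hr p / ((p:ℝ)+1) := by
  have key : ∀ m ∈ range p, (1:ℝ)/(((m:ℝ)+1)*((p:ℝ)-(m:ℝ)))
      = (1/((p:ℝ)+1)) * ((1:ℝ)/((m:ℝ)+1) + 1/((p:ℝ)-(m:ℝ))) := by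
    intro m hm
    have hm' : m < p := Finset.mem_range.1 hm
    have h1 : ((m:ℝ)+1) ≠ 0 := by positivity
    have h2 : (0:ℝ) < (p:ℝ)-(m:ℝ) := by
      have : (m:ℝ) < p := by exact_mod_cast hm'
      linarith
    field_simp
    ring
  rw [Finset.sum_congr rfl key, ← Finset.mul_sum, Finset.sum_add_distrib]
  have hrefl : ∑ m ∈ range p, (1:ℝ)/((p:ℝ)-(m:ℝ)) = Hr p := by
    unfold Hr
    rw [← Finset.sum_range_reflect (fun j => (1:ℝ)/((j:ℝ)+1)) p]
    refine Finset.sum_congr rfl fun j hj => ?_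
    have hj' : j < p := Finset.mem_range.1 hj
    have hc : ((p - 1 - j : ℕ) : ℝ) = (p:ℝ) - 1 - j := by
      push_cast [Nat.cast_sub (show j ≤ p - 1 by omega), Nat.cast_sub (show 1 ≤ p by omega)]
      ring
    rw [hc]
    ring_nf
  rw [hrefl]
  show (1/((p:ℝ)+1)) * (Hr p + Hr p) ≤ _
  have := Hr_nonneg p
  rw [div_eq_mul_inv]
  ring_nf
  nlinarith [inv_nonneg.2 (by positivity : (0:ℝ) ≤ (p:ℝ)+1)]


/-- For every integer `n ≥ 1`, the sum over all integers `j ∈ n + 2ℤ` with `j ≠ ±n`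
of `1/|n² - j²|` is at most `(2 log (6n))/n`. -/
theorem stmt0 (n : ℕ) (hn : 1 ≤ n) :
    ∑' j : {j : ℤ // j % 2 = (n : ℤ) % 2 ∧ j ≠ (n : ℤ) ∧ j ≠ -(n : ℤ)},
      (1 : ℝ) / |(n : ℝ) ^ 2 - (j.1 : ℝ) ^ 2| ≤ 2 * Real.log (6 * n) / n := by
  have hn' : (0:ℝ) < n := by exact_mod_cast hn
  set g : ℤ → ℝ := fun k => 1/(4*|(k:ℝ)| * |(k:ℝ)+n|) with hg
  set ι : {j : ℤ // j % 2 = (n : ℤ) % 2 ∧ j ≠ (n : ℤ) ∧ j ≠ -(n : ℤ)} → ℤ :=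
    fun s => (s.1 - n)/2 with hι
  have hinj : Function.Injective ι := by
    rintro ⟨a, ha, _, _⟩ ⟨b, hb, _, _⟩ h
    simp only [hι] at h
    have hab : a = b := by omega
    exact Subtype.ext hab
  have hsupp : Function.support g ⊆ Set.range ι := by
    intro k hk
    have hk0 : k ≠ 0 := by
      rintro rfl; apply hk; simp [hg]
    have hkn : k ≠ -(n:ℤ) := by
      rintro rfl
      apply hk
      have h0 : ((-(n:ℤ) : ℤ):ℝ) + n = 0 := by push_cast; ring
      simp [hg, h0]
    exact ⟨⟨n + 2*k, by omega, by omega, by omega⟩, by simp only [hι]; omega⟩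
  have hterm : ∀ s : {j : ℤ // j % 2 = (n : ℤ) % 2 ∧ j ≠ (n : ℤ) ∧ j ≠ -(n : ℤ)},
      (1 : ℝ) / |(n : ℝ) ^ 2 - (s.1 : ℝ) ^ 2| = g (ι s) := by
    rintro ⟨j, hj, _, _⟩
    have hjk : j = n + 2*((j - n)/2) := by omega
    have hcast : (j:ℝ) = (n:ℝ) + 2*(((j - (n:ℤ))/2 : ℤ):ℝ) := by exact_mod_cast hjk
    simp only [hι, hg]
    set a : ℝ := (((j - (n:ℤ))/2 : ℤ):ℝ)
    rw [hcast]
    have h1 : (n:ℝ)^2 - ((n:ℝ) + 2*a)^2 = (-4)*(a*(a+n)) := by ring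
    rw [h1, abs_mul, abs_mul]
    have h4 : |(-4:ℝ)| = 4 := by norm_num
    rw [h4, ← mul_assoc]
  rw [tsum_congr hterm, hinj.tsum_eq hsupp]
  -- pointwise identities
  have hgnat : ∀ m : ℕ, g ((m+1 : ℕ) : ℤ) = 1/4 * ((1:ℝ)/(((m:ℝ)+1)*((m:ℝ)+n+1))) := by
    intro m
    simp only [hg]
    push_cast
    rw [abs_of_nonneg (by positivity : (0:ℝ) ≤ (m:ℝ)+1),
        abs_of_nonneg (by positivity : (0:ℝ) ≤ (m:ℝ)+1+(n:ℝ))]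
    rw [div_mul_div_comm, one_mul]
    ring_nf
  have hgnegtail : ∀ m : ℕ, g (-((((m+n : ℕ)):ℤ) + 1)) = 1/4 * ((1:ℝ)/(((m:ℝ)+1)*((m:ℝ)+n+1))) := by
    intro m
    simp only [hg]
    push_cast
    rw [show (-(((m:ℝ)+(n:ℝ))+1)) = -(((m:ℝ)+(n:ℝ)+1)) by ring, abs_neg,
        abs_of_nonneg (by positivity : (0:ℝ) ≤ (m:ℝ)+(n:ℝ)+1),
        show (-((m:ℝ)+(n:ℝ)+1)+(n:ℝ)) = -(((m:ℝ)+1)) by ring, abs_neg,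
        abs_of_nonneg (by positivity : (0:ℝ) ≤ (m:ℝ)+1)]
    rw [div_mul_div_comm, one_mul]
    ring_nf
  -- summability
  have Spos : Summable (fun m : ℕ => (1:ℝ)/(((m:ℝ)+1)*((m:ℝ)+n+1))) :=
    sumPos n hn
  have S1 : Summable (fun m : ℕ => g (m : ℤ)) := by
    rw [← summable_nat_add_iff 1]
    exact (Spos.mul_left (1/4)).congr (fun m => (hgnat m).symm)
  have S2 : Summable (fun m : ℕ => g (-((m : ℤ) + 1))) := by
    rw [← summable_nat_add_iff n]
    exact (Spos.mul_left (1/4)).congr (fun m => (hgnegtail m).symm)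
  rw [tsum_of_nat_of_neg_add_one S1 S2]
  have Qbound : ∀ (f : ℕ → ℝ), (∀ m, f m = 1/4 * ((1:ℝ)/(((m:ℝ)+1)*((m:ℝ)+n+1)))) →
      ∑' m, f m ≤ Hr n / (4*n) := by
    intro f hf
    rw [tsum_congr hf, tsum_mul_left]
    calc (1:ℝ)/4 * ∑' m : ℕ, (1:ℝ)/(((m:ℝ)+1)*((m:ℝ)+n+1)) ≤ 1/4 * (Hr n / n) :=
          mul_le_mul_of_nonneg_left (tsumPos n hn) (by norm_num)
      _ = Hr n / (4*n) := by ring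
  have hA : ∑' m : ℕ, g (m : ℤ) ≤ Hr n / (4*n) := by
    rw [S1.tsum_eq_zero_add]
    have h0 : g ((0:ℕ) : ℤ) = 0 := by simp [hg]
    rw [h0, zero_add]
    exact Qbound _ (fun m => hgnat m)
  have hB : ∑' m : ℕ, g (-((m : ℤ) + 1)) ≤ Hr n/(2*n) + Hr n/(4*n) := by
    rw [← S2.sum_add_tsum_nat_add n]
    have htail : ∑' m : ℕ, g (-(((m + n : ℕ) : ℤ) + 1)) ≤ Hr n / (4*n) :=
      Qbound _ (fun m => hgnegtail m)
    have hhead : ∑ m ∈ range n, g (-((m : ℤ) + 1)) ≤ Hr n / (2*n) := by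
      set p := n - 1 with hpdef
      have hp : n = p + 1 := by omega
      have hnp : (n:ℝ) = (p:ℝ) + 1 := by exact_mod_cast hp
      have hsplit : ∑ m ∈ range n, g (-((m : ℤ) + 1))
          = ∑ m ∈ range p, g (-((m : ℤ) + 1)) + g (-((p : ℤ) + 1)) := by
        rw [show range n = range (p+1) by rw [← hp], Finset.sum_range_succ]
      have hzero : g (-((p : ℤ) + 1)) = 0 := by
        have hcast : (((-((p:ℤ)+1)) : ℤ) : ℝ) + (n:ℝ) = 0 := by
          push_cast
          linarith
        simp only [hg]
        rw [hcast, abs_zero, mul_zero, div_zero]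
      have hmid : ∀ m ∈ range p, g (-((m : ℤ) + 1))
          = 1/4 * ((1:ℝ)/(((m:ℝ)+1)*((p:ℝ)-(m:ℝ)))) := by
        intro m hm
        have hm' : m < p := Finset.mem_range.1 hm
        have hmr : (m:ℝ) < p := by exact_mod_cast hm'
        simp only [hg]
        push_cast
        rw [show -((m:ℝ)+1) + (n:ℝ) = (p:ℝ) - (m:ℝ) by rw [hnp]; ring,
            abs_neg, abs_of_nonneg (by positivity : (0:ℝ) ≤ (m:ℝ)+1),
            abs_of_nonneg (by linarith : (0:ℝ) ≤ (p:ℝ)-(m:ℝ))]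
        rw [div_mul_div_comm, one_mul]
        ring_nf
      rw [hsplit, hzero, add_zero, Finset.sum_congr rfl hmid, ← Finset.mul_sum]
      have hmb := midBound p
      calc (1:ℝ)/4 * ∑ m ∈ range p, (1:ℝ)/(((m:ℝ)+1)*((p:ℝ)-(m:ℝ)))
          ≤ 1/4 * (2 * Hr p / ((p:ℝ)+1)) := mul_le_mul_of_nonneg_left hmb (by norm_num)
        _ = Hr p / (2*((p:ℝ)+1)) := by
            have hppos : (0:ℝ) < (p:ℝ)+1 := by positivity
            field_simp
            ring
        _ = Hr p / (2*n) := by rw [hnp]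
        _ ≤ Hr n / (2*n) :=
            (div_le_div_iff_of_pos_right (by linarith : (0:ℝ) < 2*(n:ℝ))).2 (Hr_mono (by omega))
    exact add_le_add hhead htail
  have hHn : Hr n ≤ 1 + Real.log n := by
    rw [Hr_eq_harmonic]
    exact harmonic_le_one_add_log n
  have hlog6 : 1 < Real.log 6 := by
    rw [Real.lt_log_iff_exp_lt (by norm_num : (0:ℝ) < 6)]
    have := Real.exp_one_lt_d9
    linarith
  have hlogn : 0 ≤ Real.log n := Real.log_nonneg (by exact_mod_cast hn)
  have hlogsplit : Real.log (6 * n) = Real.log 6 + Real.log n :=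
    Real.log_mul (by norm_num) (by positivity)
  calc ∑' m : ℕ, g (m : ℤ) + ∑' m : ℕ, g (-((m : ℤ) + 1))
      ≤ Hr n / (4*n) + (Hr n/(2*n) + Hr n/(4*n)) := add_le_add hA hB
    _ = Hr n / n := by field_simp; ring
    _ ≤ 2 * Real.log (6 * n) / n := by
        refine (div_le_div_iff_of_pos_right hn').2 ?_
        rw [hlogsplit]
        linarith
end

section
/- Let r = (r(m))_{m ∈ 2ℤ} be a nonnegative square-summable sequence with ℓ²-norm ‖r‖, and for n ∈ ℕ let E_n(r) = (∑_{|m| ≥ n} r(m)²)^{1/2} denote the tail. Then for all n ≥ 4 and every m ∈ n + 2ℤ, the sum σ₁(n,1;m) = ∑_{j ≠ n, j ∈ n+2ℤ} r(m+j)/|n-j| satisfies σ₁(n,1;m) ≤ ‖r‖; and if additionally |m - n| ≤ n/2, then σ₁(n,1;m) ≤ E_n(r) + 2‖r‖/√n. -/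
open Finset

/-- Finite tail bound for `∑ 1/k²`. -/
private lemma key_fin (K : ℕ) (s : Finset ℕ) :
    ∑ k ∈ s, (if K < k then ((k : ℝ) ^ 2)⁻¹ else 0) ≤ 2 / (K + 1) := by
  classical
  have hsub : s.filter (fun k => K < k) ⊆ Finset.Ioo K (s.sup id + 1) := by
    intro k hk
    simp only [Finset.mem_filter, Finset.mem_Ioo] at *
    exact ⟨hk.2, Nat.lt_succ_of_le (Finset.le_sup (f := id) hk.1)⟩
  calc ∑ k ∈ s, (if K < k then ((k : ℝ) ^ 2)⁻¹ else 0)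
      = ∑ k ∈ s.filter (fun k => K < k), ((k : ℝ) ^ 2)⁻¹ := by
        rw [Finset.sum_filter]
    _ ≤ ∑ k ∈ Finset.Ioo K (s.sup id + 1), ((k : ℝ) ^ 2)⁻¹ :=
        Finset.sum_le_sum_of_subset_of_nonneg hsub (by intros; positivity)
    _ ≤ 2 / (K + 1) := by
        have h := sum_Ioo_inv_sq_le (α := ℝ) K (s.sup id + 1)
        push_cast at h ⊢
        linarith

private lemma summable_inv_sq : Summable (fun k : ℕ => ((k : ℝ) ^ 2)⁻¹) := by
  have := Real.summable_one_div_nat_pow.mpr (show 1 < 2 by norm_num)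
  simpa [one_div] using this

private lemma summable_u (K : ℕ) :
    Summable (fun k : ℕ => if K < k then ((k : ℝ) ^ 2)⁻¹ else 0) := by
  refine Summable.of_nonneg_of_le (fun k => by positivity) (fun k => ?_) summable_inv_sq
  split
  · exact le_rfl
  · positivity

private lemma tsum_u_le (K : ℕ) :
    ∑' k : ℕ, (if K < k then ((k : ℝ) ^ 2)⁻¹ else 0) ≤ 2 / (K + 1) :=
  Summable.tsum_le_of_sum_le (summable_u K) (key_fin K)

/-- Cauchy–Schwarz for `tsum`s of nonnegative reals. -/
private lemma aux_cs {ι : Type*} (f g : ι → ℝ) (hf : ∀ i, 0 ≤ f i) (hg : ∀ i, 0 ≤ g i)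
    (hf2 : Summable fun i => f i ^ 2) (hg2 : Summable fun i => g i ^ 2) :
    Summable (fun i => f i * g i) ∧
      ∑' i, f i * g i ≤ Real.sqrt (∑' i, f i ^ 2) * Real.sqrt (∑' i, g i ^ 2) := by
  have hs : Summable (fun i => f i * g i) := by
    refine Summable.of_nonneg_of_le (fun i => mul_nonneg (hf i) (hg i)) (fun i => ?_)
      ((hf2.add hg2).div_const 2)
    nlinarith [sq_nonneg (f i - g i)]
  refine ⟨hs, Summable.tsum_le_of_sum_le hs fun s => ?_⟩
  have h1 := Finset.sum_mul_sq_le_sq_mul_sq s f g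
  have h2 : ∑ i ∈ s, f i ^ 2 ≤ ∑' i, f i ^ 2 :=
    Summable.sum_le_tsum s (fun i _ => sq_nonneg _) hf2
  have h3 : ∑ i ∈ s, g i ^ 2 ≤ ∑' i, g i ^ 2 :=
    Summable.sum_le_tsum s (fun i _ => sq_nonneg _) hg2
  have hsq : (∑ i ∈ s, f i * g i) ^ 2 ≤ (∑' i, f i ^ 2) * (∑' i, g i ^ 2) :=
    h1.trans (mul_le_mul h2 h3 (Finset.sum_nonneg fun i _ => sq_nonneg _)
      (tsum_nonneg fun i => sq_nonneg _))
  calc ∑ i ∈ s, f i * g i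
      = Real.sqrt ((∑ i ∈ s, f i * g i) ^ 2) :=
        (Real.sqrt_sq (Finset.sum_nonneg fun i _ => mul_nonneg (hf i) (hg i))).symm
    _ ≤ Real.sqrt ((∑' i, f i ^ 2) * (∑' i, g i ^ 2)) := Real.sqrt_le_sqrt hsq
    _ = Real.sqrt (∑' i, f i ^ 2) * Real.sqrt (∑' i, g i ^ 2) :=
        Real.sqrt_mul (tsum_nonneg fun i => sq_nonneg _) _

/-- One-step bounds for `σ₁(n,1;m) = ∑_{j ≠ n, j ∈ n+2ℤ} r(m+j)/|n-j|`. -/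
theorem stmt4 (r : ℤ → ℝ) (hr : ∀ m, 0 ≤ r m) (hsum : Summable fun m => (r m) ^ 2)
    (n : ℕ) (hn : 4 ≤ n) (m : ℤ) (hm : m % 2 = (n : ℤ) % 2) :
    (∑' j : {j : ℤ // j % 2 = (n : ℤ) % 2 ∧ j ≠ (n : ℤ)},
        r (m + j.1) / |(n : ℝ) - (j.1 : ℝ)| ≤ Real.sqrt (∑' k : ℤ, (r k) ^ 2)) ∧
    (|(m : ℝ) - (n : ℝ)| ≤ (n : ℝ) / 2 →
      ∑' j : {j : ℤ // j % 2 = (n : ℤ) % 2 ∧ j ≠ (n : ℤ)},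
          r (m + j.1) / |(n : ℝ) - (j.1 : ℝ)| ≤
        Real.sqrt (∑' k : {k : ℤ // (n : ℤ) ≤ |k|}, (r k.1) ^ 2) +
          2 * Real.sqrt (∑' k : ℤ, (r k) ^ 2) / Real.sqrt n) := by
  classical
  set J := {j : ℤ // j % 2 = (n : ℤ) % 2 ∧ j ≠ (n : ℤ)} with hJ
  set f : J → ℝ := fun j => r (m + j.1) with hf_def
  set g : J → ℝ := fun j => |(n : ℝ) - (j.1 : ℝ)|⁻¹ with hg_def
  have hfnn : ∀ j, 0 ≤ f j := fun j => hr _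
  have hgnn : ∀ j, 0 ≤ g j := fun j => by positivity
  -- the weight function on ℤ
  set w : ℤ → ℝ := fun k => (4 * (k : ℝ) ^ 2)⁻¹ with hw_def
  have hwnn : ∀ k, 0 ≤ w k := fun k => by positivity
  -- nat parts of w-type functions
  have hwnat : (fun k : ℕ => w (k : ℤ)) =
      fun k : ℕ => (1 / 4) * (if 0 < k then ((k : ℝ) ^ 2)⁻¹ else 0) := by
    funext k
    rcases Nat.eq_zero_or_pos k with h | h
    · subst h; simp [hw_def]
    · simp only [hw_def, if_pos h]
      rw [mul_inv]
      push_cast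
      ring
  have hwneg : (fun k : ℕ => w (-((k : ℤ) + 1))) =
      fun k : ℕ => (1 / 4) * (if 0 < k + 1 then (((k + 1 : ℕ) : ℝ) ^ 2)⁻¹ else 0) := by
    funext k
    simp only [if_pos (Nat.succ_pos k), hw_def]
    rw [mul_inv]
    push_cast
    ring_nf
  have hsumw_nat : Summable (fun k : ℕ => w (k : ℤ)) := by
    rw [hwnat]; exact (summable_u 0).mul_left _
  have hsumw_neg : Summable (fun k : ℕ => w (-((k : ℤ) + 1))) := by
    rw [hwneg]
    exact (((summable_u 0).comp_injective (add_left_injective 1)).mul_left _)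
  have hsumw : Summable w := Summable.of_nat_of_neg_add_one hsumw_nat hsumw_neg
  have htsum_u0 : ∑' k : ℕ, (if 0 < k then ((k : ℝ) ^ 2)⁻¹ else 0) ≤ 2 := by
    have := tsum_u_le 0
    norm_num at this
    convert this using 2 <;> norm_num
  have htsum_shift : ∀ K : ℕ,
      ∑' k : ℕ, (if K < k + 1 then (((k + 1 : ℕ) : ℝ) ^ 2)⁻¹ else 0) ≤
        ∑' k : ℕ, (if K < k then ((k : ℝ) ^ 2)⁻¹ else 0) := by
    intro K
    refine Summable.tsum_le_tsum_of_inj (fun k => k + 1) (add_left_injective 1)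
      (fun c _ => by positivity) (fun k => le_rfl)
      ((summable_u K).comp_injective (add_left_injective 1)) (summable_u K)
  have htsumw : ∑' k : ℤ, w k ≤ 1 := by
    rw [tsum_of_nat_of_neg_add_one hsumw_nat hsumw_neg]
    have h1 : ∑' k : ℕ, w (k : ℤ) ≤ 1 / 2 := by
      rw [hwnat, tsum_mul_left]
      nlinarith [htsum_u0]
    have h2 : ∑' k : ℕ, w (-((k : ℤ) + 1)) ≤ 1 / 2 := by
      rw [hwneg, tsum_mul_left]
      have := (htsum_shift 0).trans htsum_u0
      nlinarith [this]
    linarith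
  -- the map ι : J → ℤ
  set ι : J → ℤ := fun j => ((n : ℤ) - j.1) / 2 with hι_def
  have hι2 : ∀ j : J, 2 * ι j = (n : ℤ) - j.1 := by
    intro j
    have h := j.2.1
    simp only [hι_def]
    omega
  have hιinj : Function.Injective ι := by
    intro a b hab
    have ha := hι2 a
    have hb := hι2 b
    rw [hab] at ha
    exact Subtype.ext (by omega)
  have hgsq : ∀ j : J, g j ^ 2 = w (ι j) := by
    intro j
    have h2 : ((n : ℝ) - (j.1 : ℝ)) = 2 * ((ι j : ℤ) : ℝ) := by
      have h := congrArg (fun z : ℤ => (z : ℝ)) (hι2 j)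
      push_cast at h
      linarith
    simp only [hg_def, hw_def]
    rw [inv_pow, sq_abs, h2]
    ring_nf
  have hιnat : ∀ j : J, (2 : ℤ) * |ι j| = |j.1 - (n : ℤ)| := by
    intro j
    calc (2 : ℤ) * |ι j| = |2 * ι j| := by rw [abs_mul]; norm_num
      _ = |(n : ℤ) - j.1| := by rw [hι2 j]
      _ = |j.1 - (n : ℤ)| := abs_sub_comm _ _
  have hg2 : Summable (fun j : J => g j ^ 2) := by
    have : Summable (w ∘ ι) := hsumw.comp_injective hιinj
    exact this.congr fun j => (hgsq j).symm
  have hminj : Function.Injective (fun j : J => m + j.1) := by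
    intro a b hab
    exact Subtype.ext (by simpa using hab)
  have hf2 : Summable (fun j : J => f j ^ 2) := hsum.comp_injective hminj
  have hFeq : (fun j : J => r (m + j.1) / |(n : ℝ) - (j.1 : ℝ)|) = fun j => f j * g j := by
    funext j; rw [div_eq_mul_inv]
  have hgtsum : ∑' j : J, g j ^ 2 ≤ 1 :=
    (Summable.tsum_le_tsum_of_inj ι hιinj (fun c _ => hwnn c) (fun j => le_of_eq (hgsq j))
      hg2 hsumw).trans htsumw
  have hftsum : ∑' j : J, f j ^ 2 ≤ ∑' k : ℤ, r k ^ 2 :=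
    Summable.tsum_le_tsum_of_inj (fun j : J => m + j.1) hminj (fun c _ => sq_nonneg _)
      (fun j => le_rfl) hf2 hsum
  obtain ⟨hS, hCS⟩ := aux_cs f g hfnn hgnn hf2 hg2
  have part1 : ∑' j : J, r (m + j.1) / |(n : ℝ) - (j.1 : ℝ)| ≤
      Real.sqrt (∑' k : ℤ, r k ^ 2) := by
    rw [hFeq]
    refine hCS.trans ?_
    have e1 : Real.sqrt (∑' j : J, f j ^ 2) ≤ Real.sqrt (∑' k : ℤ, r k ^ 2) :=
      Real.sqrt_le_sqrt hftsum
    have e2 : Real.sqrt (∑' j : J, g j ^ 2) ≤ 1 := by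
      have := Real.sqrt_le_sqrt hgtsum
      simpa using this
    calc Real.sqrt (∑' j : J, f j ^ 2) * Real.sqrt (∑' j : J, g j ^ 2)
        ≤ Real.sqrt (∑' k : ℤ, r k ^ 2) * 1 :=
          mul_le_mul e1 e2 (Real.sqrt_nonneg _) (Real.sqrt_nonneg _)
      _ = Real.sqrt (∑' k : ℤ, r k ^ 2) := mul_one _
  refine ⟨part1, fun hm2 => ?_⟩
  -- integer form of the hypothesis on m
  have hm2' : 2 * |m - (n : ℤ)| ≤ (n : ℤ) := by
    have h1 : ((2 * |m - (n : ℤ)| : ℤ) : ℝ) ≤ ((n : ℤ) : ℝ) := by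
      push_cast
      rw [abs_sub_comm] at hm2
      rw [abs_sub_comm]
      linarith [hm2]
    exact_mod_cast h1
  set s : Set J := {j : J | 2 * |j.1 - (n : ℤ)| ≤ (n : ℤ)} with hs_def
  have hsplit : ∑' j : ↥s, (f j.1 * g j.1) + ∑' j : ↥sᶜ, (f j.1 * g j.1) =
      ∑' j : J, f j * g j :=
    Summable.tsum_add_tsum_compl (hS.subtype s) (hS.subtype sᶜ)
  -- piece on s
  have htail_sum : Summable (fun k : {k : ℤ // (n : ℤ) ≤ |k|} => r k.1 ^ 2) :=
    hsum.comp_injective Subtype.val_injective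
  have hmem : ∀ j : ↥s, (n : ℤ) ≤ |m + j.1.1| := by
    intro j
    have hj : 2 * |j.1.1 - (n : ℤ)| ≤ (n : ℤ) := j.2
    have h1 : (n : ℤ) ≤ m + j.1.1 := by
      rcases abs_cases (m - (n : ℤ)) with ⟨h, _⟩ | ⟨h, _⟩ <;>
        rcases abs_cases (j.1.1 - (n : ℤ)) with ⟨h', _⟩ | ⟨h', _⟩ <;> omega
    exact h1.trans (le_abs_self _)
  have hfs_le : ∑' j : ↥s, f j.1 ^ 2 ≤ ∑' k : {k : ℤ // (n : ℤ) ≤ |k|}, r k.1 ^ 2 := by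
    refine Summable.tsum_le_tsum_of_inj
      (fun j : ↥s => (⟨m + j.1.1, hmem j⟩ : {k : ℤ // (n : ℤ) ≤ |k|}))
      ?_ (fun c _ => sq_nonneg _) (fun j => le_rfl) (hf2.subtype s) htail_sum
    intro a b hab
    have h : m + a.1.1 = m + b.1.1 := congrArg Subtype.val hab
    apply Subtype.ext
    apply Subtype.ext
    omega
  have hgs_le : ∑' j : ↥s, g j.1 ^ 2 ≤ 1 :=
    (Summable.tsum_le_tsum_of_inj (fun j : ↥s => ι j.1) (hιinj.comp Subtype.val_injective)
      (fun c _ => hwnn c) (fun j => le_of_eq (hgsq j.1)) (hg2.subtype s) hsumw).trans htsumw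
  obtain ⟨hS1, hCS1⟩ := aux_cs (fun j : ↥s => f j.1) (fun j => g j.1)
    (fun j => hfnn _) (fun j => hgnn _) (hf2.subtype s) (hg2.subtype s)
  have hp1 : ∑' j : ↥s, f j.1 * g j.1 ≤
      Real.sqrt (∑' k : {k : ℤ // (n : ℤ) ≤ |k|}, r k.1 ^ 2) := by
    refine hCS1.trans ?_
    have e1 := Real.sqrt_le_sqrt hfs_le
    have e2 : Real.sqrt (∑' j : ↥s, g j.1 ^ 2) ≤ 1 := by
      have := Real.sqrt_le_sqrt hgs_le
      simpa using this
    calc Real.sqrt (∑' j : ↥s, f j.1 ^ 2) * Real.sqrt (∑' j : ↥s, g j.1 ^ 2)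
        ≤ Real.sqrt (∑' k : {k : ℤ // (n : ℤ) ≤ |k|}, r k.1 ^ 2) * 1 :=
          mul_le_mul e1 e2 (Real.sqrt_nonneg _) (Real.sqrt_nonneg _)
      _ = _ := mul_one _
  -- piece on the complement
  set w' : ℤ → ℝ := fun k => if (n : ℤ) < 4 * |k| then w k else 0 with hw'_def
  have hw'nn : ∀ k, 0 ≤ w' k := by
    intro k; simp only [hw'_def]; split
    · exact hwnn k
    · exact le_rfl
  have hcondnat : ∀ k : ℕ, ((n : ℤ) < 4 * |(k : ℤ)| ↔ n / 4 < k) := by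
    intro k
    rw [show |(k : ℤ)| = (k : ℤ) from abs_of_nonneg (by positivity)]
    constructor
    · intro h
      have : n < 4 * k := by exact_mod_cast h
      omega
    · intro h
      have : n < 4 * k := by omega
      exact_mod_cast this
  have hcondneg : ∀ k : ℕ, ((n : ℤ) < 4 * |(-((k : ℤ) + 1))| ↔ n / 4 < k + 1) := by
    intro k
    rw [show |(-((k : ℤ) + 1))| = (k : ℤ) + 1 by rw [abs_neg]; exact abs_of_nonneg (by positivity)]
    constructor
    · intro h
      have : n < 4 * (k + 1) := by exact_mod_cast h
      omega
    · intro h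
      have : n < 4 * (k + 1) := by omega
      exact_mod_cast this
  have hw'nat : (fun k : ℕ => w' (k : ℤ)) =
      fun k : ℕ => (1 / 4) * (if n / 4 < k then ((k : ℝ) ^ 2)⁻¹ else 0) := by
    funext k
    by_cases h : n / 4 < k
    · rw [hw'_def]
      simp only [if_pos ((hcondnat k).mpr h), if_pos h, hw_def]
      rw [mul_inv]
      push_cast
      ring
    · rw [hw'_def]
      simp only [if_neg (fun hc => h ((hcondnat k).mp hc)), if_neg h, mul_zero]
  have hw'neg : (fun k : ℕ => w' (-((k : ℤ) + 1))) =
      fun k : ℕ => (1 / 4) * (if n / 4 < k + 1 then (((k + 1 : ℕ) : ℝ) ^ 2)⁻¹ else 0) := by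
    funext k
    by_cases h : n / 4 < k + 1
    · rw [hw'_def]
      simp only [if_pos ((hcondneg k).mpr h), if_pos h, hw_def]
      rw [mul_inv]
      push_cast
      ring_nf
    · rw [hw'_def]
      simp only [if_neg (fun hc => h ((hcondneg k).mp hc)), if_neg h, mul_zero]
  have hsumw'_nat : Summable (fun k : ℕ => w' (k : ℤ)) := by
    rw [hw'nat]; exact (summable_u (n / 4)).mul_left _
  have hsumw'_neg : Summable (fun k : ℕ => w' (-((k : ℤ) + 1))) := by
    rw [hw'neg]
    exact (((summable_u (n / 4)).comp_injective (add_left_injective 1)).mul_left _)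
  have hsumw' : Summable w' := Summable.of_nat_of_neg_add_one hsumw'_nat hsumw'_neg
  have hq : (n : ℝ) ≤ 4 * ((n / 4 : ℕ) + 1) := by
    have : n ≤ 4 * (n / 4 + 1) := by omega
    exact_mod_cast this
  have hnpos : (0 : ℝ) < n := by
    have : 0 < n := by omega
    exact_mod_cast this
  have htsumw' : ∑' k : ℤ, w' k ≤ 4 / n := by
    rw [tsum_of_nat_of_neg_add_one hsumw'_nat hsumw'_neg]
    have hK : (0 : ℝ) < ((n / 4 : ℕ) : ℝ) + 1 := by positivity
    have hhalf : 2 / (((n / 4 : ℕ) : ℝ) + 1) ≤ 8 / n := by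
      rw [div_le_div_iff₀ hK hnpos]
      nlinarith [hq]
    have h1 : ∑' k : ℕ, w' (k : ℤ) ≤ 2 / n := by
      rw [hw'nat, tsum_mul_left]
      have h := (tsum_u_le (n / 4)).trans hhalf
      calc (1 / 4 : ℝ) * ∑' k : ℕ, (if n / 4 < k then ((k : ℝ) ^ 2)⁻¹ else 0)
          ≤ (1 / 4 : ℝ) * (8 / n) :=
            mul_le_mul_of_nonneg_left h (by norm_num)
        _ = 2 / n := by ring
    have h2 : ∑' k : ℕ, w' (-((k : ℤ) + 1)) ≤ 2 / n := by
      rw [hw'neg, tsum_mul_left]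
      have h := ((htsum_shift (n / 4)).trans (tsum_u_le (n / 4))).trans hhalf
      calc (1 / 4 : ℝ) * ∑' k : ℕ, (if n / 4 < k + 1 then (((k + 1 : ℕ) : ℝ) ^ 2)⁻¹ else 0)
          ≤ (1 / 4 : ℝ) * (8 / n) :=
            mul_le_mul_of_nonneg_left h (by norm_num)
        _ = 2 / n := by ring
    calc ∑' k : ℕ, w' (k : ℤ) + ∑' k : ℕ, w' (-((k : ℤ) + 1)) ≤ 2 / n + 2 / n :=
          add_le_add h1 h2
      _ = 4 / n := by ring
  have hfsc_le : ∑' j : ↥sᶜ, f j.1 ^ 2 ≤ ∑' k : ℤ, r k ^ 2 := by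
    refine Summable.tsum_le_tsum_of_inj (fun j : ↥sᶜ => m + j.1.1)
      ?_ (fun c _ => sq_nonneg _) (fun j => le_rfl) (hf2.subtype sᶜ) hsum
    intro a b hab
    apply Subtype.ext
    apply Subtype.ext
    simpa using hab
  have hgsc_le : ∑' j : ↥sᶜ, g j.1 ^ 2 ≤ 4 / n := by
    refine (Summable.tsum_le_tsum_of_inj (fun j : ↥sᶜ => ι j.1)
      (hιinj.comp Subtype.val_injective)
      (fun c _ => hw'nn c) (fun j => ?_) (hg2.subtype sᶜ) hsumw').trans htsumw'
    have hj : ¬ (2 * |j.1.1 - (n : ℤ)| ≤ (n : ℤ)) := j.2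
    have hc : (n : ℤ) < 4 * |ι j.1| := by
      have h := hιnat j.1
      omega
    show g j.1 ^ 2 ≤ w' (ι j.1)
    rw [hgsq j.1]
    simp only [hw'_def, if_pos hc]
    exact le_rfl
  obtain ⟨hS2, hCS2⟩ := aux_cs (fun j : ↥sᶜ => f j.1) (fun j => g j.1)
    (fun j => hfnn _) (fun j => hgnn _) (hf2.subtype sᶜ) (hg2.subtype sᶜ)
  have hsqrt4n : Real.sqrt (4 / n) ≤ 2 / Real.sqrt n := by
    rw [show (4 : ℝ) / n = (2 / Real.sqrt n) ^ 2 by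
      rw [div_pow, Real.sq_sqrt hnpos.le]; norm_num]
    exact (Real.sqrt_sq (by positivity)).le
  have hp2 : ∑' j : ↥sᶜ, f j.1 * g j.1 ≤
      2 * Real.sqrt (∑' k : ℤ, r k ^ 2) / Real.sqrt n := by
    refine hCS2.trans ?_
    have e1 := Real.sqrt_le_sqrt hfsc_le
    have e2 := (Real.sqrt_le_sqrt hgsc_le).trans hsqrt4n
    calc Real.sqrt (∑' j : ↥sᶜ, f j.1 ^ 2) * Real.sqrt (∑' j : ↥sᶜ, g j.1 ^ 2)
        ≤ Real.sqrt (∑' k : ℤ, r k ^ 2) * (2 / Real.sqrt n) :=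
          mul_le_mul e1 e2 (Real.sqrt_nonneg _) (Real.sqrt_nonneg _)
      _ = 2 * Real.sqrt (∑' k : ℤ, r k ^ 2) / Real.sqrt n := by ring
  rw [hFeq, ← hsplit]
  exact add_le_add hp1 hp2
end

section
/- Let r = (r(m))_{m∈2ℤ} be a nonnegative ℓ² sequence, n ≥ 4, and set ρ̃_n = E_n(r) + 2‖r‖/√n where E_n(r) = (∑_{|m|≥n} r(m)²)^{1/2}. Define σ₁(n,s;m) = ∑_{j₁,…,j_s ≠ n} r(m+j₁)/|n-j₁| · r(j₁+j₂)/|n-j₂| ⋯ r(j_{s-1}+j_s)/|n-j_s| with all indices in n+2ℤ. Then σ₁(n,2;m) ≤ 2‖r‖ρ̃_n for every m ∈ n+2ℤ. -/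
set_option linter.unreachableTactic false
set_option linter.unusedTactic false

open Real

private lemma mul_summable_of_sq {ι : Type*} {f g : ι → ℝ}
    (hf : ∀ i, 0 ≤ f i) (hg : ∀ i, 0 ≤ g i)
    (hf2 : Summable fun i => f i ^ 2) (hg2 : Summable fun i => g i ^ 2) :
    Summable fun i => f i * g i := by
  refine Summable.of_nonneg_of_le (fun i => mul_nonneg (hf i) (hg i))
    (fun i => ?_) ((hf2.add hg2).mul_left (1/2))
  have := sq_nonneg (f i - g i)
  nlinarith

private lemma cs_tsum {ι : Type*} {f g : ι → ℝ}
    (hf : ∀ i, 0 ≤ f i) (hg : ∀ i, 0 ≤ g i)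
    (hf2 : Summable fun i => f i ^ 2) (hg2 : Summable fun i => g i ^ 2) :
    ∑' i, f i * g i ≤ Real.sqrt (∑' i, f i ^ 2) * Real.sqrt (∑' i, g i ^ 2) := by
  refine Summable.tsum_le_of_sum_le (mul_summable_of_sq hf hg hf2 hg2) (fun s => ?_)
  have h1 : (∑ i ∈ s, f i * g i) ^ 2 ≤ (∑ i ∈ s, f i ^ 2) * ∑ i ∈ s, g i ^ 2 :=
    Finset.sum_mul_sq_le_sq_mul_sq s f g
  have hnn : 0 ≤ ∑ i ∈ s, f i * g i := Finset.sum_nonneg fun i _ => mul_nonneg (hf i) (hg i)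
  calc ∑ i ∈ s, f i * g i = Real.sqrt ((∑ i ∈ s, f i * g i) ^ 2) := (Real.sqrt_sq hnn).symm
    _ ≤ Real.sqrt ((∑ i ∈ s, f i ^ 2) * ∑ i ∈ s, g i ^ 2) := Real.sqrt_le_sqrt h1
    _ = Real.sqrt (∑ i ∈ s, f i ^ 2) * Real.sqrt (∑ i ∈ s, g i ^ 2) :=
        Real.sqrt_mul (Finset.sum_nonneg fun i _ => sq_nonneg _) _
    _ ≤ _ :=
        mul_le_mul (Real.sqrt_le_sqrt (Summable.sum_le_tsum s (fun i _ => sq_nonneg _) hf2))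
          (Real.sqrt_le_sqrt (Summable.sum_le_tsum s (fun i _ => sq_nonneg _) hg2))
          (Real.sqrt_nonneg _) (Real.sqrt_nonneg _)

private lemma nat_sum_bound (c : ℕ) :
    Summable (fun a : ℕ => if c < 4 * a then ((2 * (a : ℝ)) ^ 2)⁻¹ else 0) ∧
    ∑' a : ℕ, (if c < 4 * a then ((2 * (a : ℝ)) ^ 2)⁻¹ else 0) ≤
      (1 / 2) * ((2 * (c / 4 : ℕ) + 1 : ℝ))⁻¹ := by
  set l := c / 4 with hl
  set G : ℕ → ℝ := fun a => (1 / 2) * ((2 * (max a l : ℕ) + 1 : ℝ))⁻¹ with hG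
  set h : ℕ → ℝ := fun a => if c < 4 * a then ((2 * (a : ℝ)) ^ 2)⁻¹ else 0 with hh
  have hnn : ∀ a, 0 ≤ h a := fun a => by
    simp only [hh]; split <;> positivity
  have hGnn : ∀ a, 0 ≤ G a := fun a => by simp only [hG]; positivity
  have h0 : h 0 = 0 := by simp [hh]
  have hG0 : G 0 = (1 / 2) * ((2 * (l : ℕ) + 1 : ℝ))⁻¹ := by
    simp only [hG, Nat.max_eq_right (Nat.zero_le l)]
  have key : ∀ a : ℕ, h (a + 1) ≤ G a - G (a + 1) := by
    intro a
    by_cases hca : c < 4 * (a + 1)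
    · have hal : l ≤ a := by omega
      have h1 : max a l = a := max_eq_left hal
      have h2 : max (a + 1) l = a + 1 := max_eq_left (by omega)
      simp only [hh, hG, if_pos hca, h1, h2]
      have p1 : (0:ℝ) < 2 * (a:ℝ) + 1 := by positivity
      have p2 : (0:ℝ) < 2 * (a:ℝ) + 3 := by positivity
      have e1 : (1:ℝ)/2 * (2 * (a:ℝ) + 1)⁻¹ - 1/2 * (2 * ((a:ℝ) + 1) + 1)⁻¹
          = ((2 * (a:ℝ) + 1) * (2 * (a:ℝ) + 3))⁻¹ := by
        field_simp
        ring
      push_cast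
      rw [e1]
      have hp : (0:ℝ) < (2 * (a:ℝ) + 1) * (2 * (a:ℝ) + 3) := by positivity
      apply inv_anti₀ hp
      nlinarith [sq_nonneg ((a:ℝ))]
    · have : h (a + 1) = 0 := by simp [hh, hca]
      rw [this, sub_nonneg]
      simp only [hG]
      have hm : max a l ≤ max (a + 1) l := sup_le_sup_right (Nat.le_succ a) l
      have c1 : (0:ℝ) < 2 * (max a l : ℕ) + 1 := by positivity
      have c2 : (2 * (max a l : ℕ) + 1 : ℝ) ≤ 2 * (max (a + 1) l : ℕ) + 1 := by
        have := (Nat.cast_le (α := ℝ)).mpr hm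
        linarith
      exact mul_le_mul_of_nonneg_left (inv_anti₀ c1 c2) (by norm_num)
  have partial_bound : ∀ s : Finset ℕ, ∑ a ∈ s, h a ≤ G 0 := by
    intro s
    obtain ⟨N, hN⟩ := s.exists_nat_subset_range
    calc ∑ a ∈ s, h a ≤ ∑ a ∈ Finset.range (N + 1), h a :=
          Finset.sum_le_sum_of_subset_of_nonneg
            (hN.trans (Finset.range_subset_range.mpr (Nat.le_succ N))) (fun a _ _ => hnn a)
      _ = (∑ a ∈ Finset.range N, h (a + 1)) + h 0 := Finset.sum_range_succ' h N
      _ ≤ (∑ a ∈ Finset.range N, (G a - G (a + 1))) + 0 := by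
          rw [h0]
          exact add_le_add (Finset.sum_le_sum fun a _ => key a) le_rfl
      _ = G 0 - G N := by rw [add_zero, Finset.sum_range_sub' G N]
      _ ≤ G 0 := by linarith [hGnn N]
  have hs : Summable h := summable_of_sum_le (fun a => hnn a) partial_bound
  refine ⟨hs, ?_⟩
  have := Summable.tsum_le_of_sum_le hs partial_bound
  rwa [hG0] at this

private lemma int_sum_bound (c : ℕ) :
    Summable (fun k : ℤ => if c < 4 * k.natAbs then ((2 * (k : ℝ)) ^ 2)⁻¹ else 0) ∧
    ∑' k : ℤ, (if c < 4 * k.natAbs then ((2 * (k : ℝ)) ^ 2)⁻¹ else 0) ≤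
      ((2 * (c / 4 : ℕ) + 1 : ℝ))⁻¹ := by
  obtain ⟨hs, hb⟩ := nat_sum_bound c
  set h : ℕ → ℝ := fun a => if c < 4 * a then ((2 * (a : ℝ)) ^ 2)⁻¹ else 0 with hh
  set v : ℤ → ℝ := fun k => if c < 4 * k.natAbs then ((2 * (k : ℝ)) ^ 2)⁻¹ else 0 with hv
  have hpos : (fun a : ℕ => v (a : ℤ)) = h := by
    funext a; simp [hv, hh]
  have hneg : (fun a : ℕ => v (-((a : ℤ) + 1))) = fun a => h (a + 1) := by
    funext a
    simp only [hv, hh]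
    have h1 : ((-((a : ℤ) + 1)).natAbs) = a + 1 := by omega
    have h2 : ((-((a : ℤ) + 1) : ℤ) : ℝ) = -((a : ℝ) + 1) := by push_cast; ring
    rw [h1, h2]
    have h3 : (2 * -((a : ℝ) + 1)) ^ 2 = (2 * ((a : ℝ) + 1)) ^ 2 := by ring
    rw [h3]
    norm_num
  have hs1 : Summable (fun a : ℕ => h (a + 1)) := (summable_nat_add_iff 1).mpr hs
  have hsv : Summable v := by
    apply Summable.of_nat_of_neg_add_one
    · rw [hpos]; exact hs
    · rw [hneg]; exact hs1
  refine ⟨hsv, ?_⟩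
  have h0 : h 0 = 0 := by simp [hh]
  have hshift : ∑' a : ℕ, h (a + 1) = ∑' a : ℕ, h a := by
    rw [Summable.tsum_eq_zero_add hs, h0, zero_add]
  have := tsum_of_nat_of_neg_add_one (f := v) (by rw [hpos]; exact hs) (by rw [hneg]; exact hs1)
  rw [this, hpos, hneg, hshift]
  calc (∑' a : ℕ, h a) + ∑' a : ℕ, h a
      ≤ (1 / 2) * ((2 * (c / 4 : ℕ) + 1 : ℝ))⁻¹ + (1 / 2) * ((2 * (c / 4 : ℕ) + 1 : ℝ))⁻¹ :=
        add_le_add hb hb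
    _ = ((2 * (c / 4 : ℕ) + 1 : ℝ))⁻¹ := by ring

private def cosetEquiv (n : ℕ) :
    {k : ℤ // k ≠ 0} ≃ {j : ℤ // j % 2 = (n : ℤ) % 2 ∧ j ≠ (n : ℤ)} where
  toFun k := ⟨(n : ℤ) - 2 * k.1, by omega, by have := k.2; omega⟩
  invFun j := ⟨((n : ℤ) - j.1) / 2, by have h1 := j.2.1; have h2 := j.2.2; omega⟩
  left_inv k := Subtype.ext (by have := k.2; simp only; omega)
  right_inv j := Subtype.ext (by have h1 := j.2.1; have h2 := j.2.2; simp only; omega)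

private lemma weight_sum_bound (n : ℕ) (c : ℕ) :
    Summable (fun j : {j : ℤ // j % 2 = (n : ℤ) % 2 ∧ j ≠ (n : ℤ)} =>
      if c < 2 * ((n : ℤ) - j.1).natAbs then (|(n : ℝ) - (j.1 : ℝ)|⁻¹) ^ 2 else 0) ∧
    ∑' j : {j : ℤ // j % 2 = (n : ℤ) % 2 ∧ j ≠ (n : ℤ)},
      (if c < 2 * ((n : ℤ) - j.1).natAbs then (|(n : ℝ) - (j.1 : ℝ)|⁻¹) ^ 2 else 0) ≤
      ((2 * (c / 4 : ℕ) + 1 : ℝ))⁻¹ := by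
  obtain ⟨hs, hb⟩ := int_sum_bound c
  set v : ℤ → ℝ := fun k => if c < 4 * k.natAbs then ((2 * (k : ℝ)) ^ 2)⁻¹ else 0 with hv
  set F : {j : ℤ // j % 2 = (n : ℤ) % 2 ∧ j ≠ (n : ℤ)} → ℝ := fun j =>
    if c < 2 * ((n : ℤ) - j.1).natAbs then (|(n : ℝ) - (j.1 : ℝ)|⁻¹) ^ 2 else 0 with hF
  have hvnn : ∀ k, 0 ≤ v k := fun k => by simp only [hv]; split <;> positivity
  have hcomp : ∀ k : {k : ℤ // k ≠ 0}, F (cosetEquiv n k) = v k.1 := by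
    intro k
    simp only [hF, hv, cosetEquiv, Equiv.coe_fn_mk]
    have hcond : ((n : ℤ) - ((n : ℤ) - 2 * k.1)).natAbs = 2 * k.1.natAbs := by omega
    have hval : |(n : ℝ) - (((n : ℤ) - 2 * k.1 : ℤ) : ℝ)| = |2 * (k.1 : ℝ)| := by
      push_cast
      ring_nf
    rw [hcond, hval]
    have : (|2 * (k.1 : ℝ)|⁻¹) ^ 2 = ((2 * (k.1 : ℝ)) ^ 2)⁻¹ := by
      rw [← inv_pow, ← abs_inv, sq_abs]
    rw [this]
    congr 1
    simp only [eq_iff_iff]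
    omega
  have hFe : (F ∘ (cosetEquiv n)) = (fun k : {k : ℤ // k ≠ 0} => v k.1) := funext hcomp
  have hsub : Summable (fun k : {k : ℤ // k ≠ 0} => v k.1) := by
    have := hs.subtype {k : ℤ | k ≠ 0}
    exact this
  have hFsum : Summable F := by
    rw [← (cosetEquiv n).summable_iff, hFe]
    exact hsub
  refine ⟨hFsum, ?_⟩
  rw [← (cosetEquiv n).tsum_eq F]
  calc ∑' k : {k : ℤ // k ≠ 0}, F (cosetEquiv n k)
      = ∑' k : {k : ℤ // k ≠ 0}, v k.1 := tsum_congr hcomp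
    _ ≤ ∑' k : ℤ, v k := by
        apply Summable.tsum_le_tsum_of_inj (fun k : {k : ℤ // k ≠ 0} => k.1) Subtype.val_injective
          (fun k _ => hvnn k) (fun k => le_rfl) hsub hs
    _ ≤ _ := hb

section helpers

variable {r : ℤ → ℝ} (n : ℕ)

-- the weight squared, full sum
private lemma weight_sq (n : ℕ) :
    Summable (fun j : {j : ℤ // j % 2 = (n : ℤ) % 2 ∧ j ≠ (n : ℤ)} =>
      (|(n : ℝ) - (j.1 : ℝ)|⁻¹) ^ 2) ∧
    ∑' j : {j : ℤ // j % 2 = (n : ℤ) % 2 ∧ j ≠ (n : ℤ)}, (|(n : ℝ) - (j.1 : ℝ)|⁻¹) ^ 2 ≤ 1 := by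
  obtain ⟨h1, h2⟩ := weight_sum_bound n 0
  have he : (fun j : {j : ℤ // j % 2 = (n : ℤ) % 2 ∧ j ≠ (n : ℤ)} =>
      if 0 < 2 * ((n : ℤ) - j.1).natAbs then (|(n : ℝ) - (j.1 : ℝ)|⁻¹) ^ 2 else 0) =
      (fun j => (|(n : ℝ) - (j.1 : ℝ)|⁻¹) ^ 2) := by
    funext j
    exact if_pos (by have := j.2.2; omega)
  rw [he] at h1 h2
  refine ⟨h1, h2.trans ?_⟩
  norm_num

private lemma weight_far (n : ℕ) (hn : 4 ≤ n) :
    Summable (fun j : {j : ℤ // j % 2 = (n : ℤ) % 2 ∧ j ≠ (n : ℤ)} =>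
      if n < 2 * ((n : ℤ) - j.1).natAbs then (|(n : ℝ) - (j.1 : ℝ)|⁻¹) ^ 2 else 0) ∧
    ∑' j : {j : ℤ // j % 2 = (n : ℤ) % 2 ∧ j ≠ (n : ℤ)},
      (if n < 2 * ((n : ℤ) - j.1).natAbs then (|(n : ℝ) - (j.1 : ℝ)|⁻¹) ^ 2 else 0) ≤
      4 / (n : ℝ) := by
  obtain ⟨h1, h2⟩ := weight_sum_bound n n
  refine ⟨h1, h2.trans ?_⟩
  have hnat : (n : ℕ) ≤ 4 * (2 * (n / 4) + 1) := by omega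
  have hx : (0 : ℝ) < 2 * ((n / 4 : ℕ) : ℝ) + 1 := by positivity
  have hn0 : (0 : ℝ) < (n : ℝ) := by
    have : (0 : ℕ) < n := by omega
    exact_mod_cast this
  rw [inv_eq_one_div, div_le_div_iff₀ hx hn0]
  have := (Nat.cast_le (α := ℝ)).mpr hnat
  push_cast at this
  linarith

-- shifted r squared sums
private lemma shift_sq (hsum : Summable fun m => (r m) ^ 2) (n : ℕ) (a : ℤ) :
    Summable (fun j : {j : ℤ // j % 2 = (n : ℤ) % 2 ∧ j ≠ (n : ℤ)} => r (a + j.1) ^ 2) ∧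
    ∑' j : {j : ℤ // j % 2 = (n : ℤ) % 2 ∧ j ≠ (n : ℤ)}, r (a + j.1) ^ 2 ≤
      ∑' k : ℤ, (r k) ^ 2 := by
  have hinj : Function.Injective
      (fun j : {j : ℤ // j % 2 = (n : ℤ) % 2 ∧ j ≠ (n : ℤ)} => a + j.1) := by
    intro x y h
    simp only at h
    exact Subtype.ext (by omega)
  have hs : Summable ((fun k => r k ^ 2) ∘
      (fun j : {j : ℤ // j % 2 = (n : ℤ) % 2 ∧ j ≠ (n : ℤ)} => a + j.1)) :=
    hsum.comp_injective hinj
  exact ⟨hs, Summable.tsum_le_tsum_of_inj _ hinj (fun c _ => sq_nonneg _) (fun b => le_rfl) hs hsum⟩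

private lemma near_tail (hsum : Summable fun m => (r m) ^ 2) (n : ℕ) (j₀ : ℤ)
    (hj₀ : 2 * ((n : ℤ) - j₀).natAbs ≤ n) :
    ∑' j : {j : ℤ // j % 2 = (n : ℤ) % 2 ∧ j ≠ (n : ℤ)},
      (if 2 * ((n : ℤ) - j.1).natAbs ≤ n then r (j₀ + j.1) ^ 2 else 0) ≤
    ∑' k : {k : ℤ // (n : ℤ) ≤ |k|}, (r k.1) ^ 2 := by
  classical
  set s : Set {j : ℤ // j % 2 = (n : ℤ) % 2 ∧ j ≠ (n : ℤ)} :=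
    {j | 2 * ((n : ℤ) - j.1).natAbs ≤ n} with hsdef
  have hind : (fun j : {j : ℤ // j % 2 = (n : ℤ) % 2 ∧ j ≠ (n : ℤ)} =>
      if 2 * ((n : ℤ) - j.1).natAbs ≤ n then r (j₀ + j.1) ^ 2 else 0) =
      s.indicator (fun j => r (j₀ + j.1) ^ 2) := by
    funext j
    rw [Set.indicator_apply]
    rfl
  rw [hind, ← tsum_subtype s (fun j => r (j₀ + j.1) ^ 2)]
  set e : s → {k : ℤ // (n : ℤ) ≤ |k|} := fun x =>
    ⟨j₀ + x.1.1, by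
      have hx : 2 * ((n : ℤ) - x.1.1).natAbs ≤ n := x.2
      rw [Int.abs_eq_natAbs]
      omega⟩ with he
  have hinj : Function.Injective e := by
    intro x y hxy
    have h1 : j₀ + x.1.1 = j₀ + y.1.1 := congrArg Subtype.val hxy
    exact Subtype.ext (Subtype.ext (by omega))
  have hsrc : Summable (fun x : s => r (j₀ + x.1.1) ^ 2) :=
    ((shift_sq hsum n j₀).1).subtype s
  have htgt : Summable (fun k : {k : ℤ // (n : ℤ) ≤ |k|} => (r k.1) ^ 2) :=
    hsum.subtype _
  exact Summable.tsum_le_tsum_of_inj e hinj (fun c _ => sq_nonneg _) (fun b => le_rfl) hsrc htgt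

end helpers

/-- The `s`-fold weighted convolution sum
`σ₁(n,s;m) = ∑_{j₁,…,j_s ≠ n, j_ν ∈ n+2ℤ} ∏_ν r(j_{ν-1}+j_ν)/|n-j_ν|` with `j₀ = m`. -/
noncomputable def sigma1 (r : ℤ → ℝ) (n : ℤ) : ℕ → ℤ → ℝ
  | 0, _ => 1
  | s + 1, m =>
      ∑' j : {j : ℤ // j % 2 = n % 2 ∧ j ≠ n},
        r (m + j.1) / |(n : ℝ) - (j.1 : ℝ)| * sigma1 r n s j.1

private lemma tsum_split {ι : Type*} (P : ι → Prop) [DecidablePred P] {F : ι → ℝ}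
    (hF : Summable F) (hnn : ∀ i, 0 ≤ F i) :
    (Summable fun i => if P i then F i else 0) ∧
    (Summable fun i => if ¬ P i then F i else 0) ∧
    ∑' i, F i = (∑' i, if P i then F i else 0) + (∑' i, if ¬ P i then F i else 0) := by
  have s1 : Summable (fun i => if P i then F i else 0) :=
    Summable.of_nonneg_of_le (fun i => by split; exacts [hnn i, le_rfl])
      (fun i => by split; exacts [le_rfl, hnn i]) hF
  have s2 : Summable (fun i => if ¬ P i then F i else 0) :=
    Summable.of_nonneg_of_le (fun i => by split; exacts [hnn i, le_rfl])
      (fun i => by split; exacts [le_rfl, hnn i]) hF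
  refine ⟨s1, s2, ?_⟩
  rw [← Summable.tsum_add s1 s2]
  exact tsum_congr fun i => by by_cases h : P i <;> simp [h]

section steps

variable {r : ℤ → ℝ}

private lemma step_summable (hr : ∀ m, 0 ≤ r m) (hsum : Summable fun m => (r m) ^ 2) (n : ℕ) (a : ℤ) :
    Summable (fun i : {j : ℤ // j % 2 = (n : ℤ) % 2 ∧ j ≠ (n : ℤ)} =>
      r (a + i.1) * |(n : ℝ) - (i.1 : ℝ)|⁻¹) :=
  mul_summable_of_sq (fun i => hr _) (fun i => by positivity)
    (shift_sq hsum n a).1 (weight_sq n).1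

private lemma step_crude (hr : ∀ m, 0 ≤ r m) (hsum : Summable fun m => (r m) ^ 2) (n : ℕ) (a : ℤ) :
    ∑' i : {j : ℤ // j % 2 = (n : ℤ) % 2 ∧ j ≠ (n : ℤ)},
      r (a + i.1) * |(n : ℝ) - (i.1 : ℝ)|⁻¹ ≤ Real.sqrt (∑' k : ℤ, (r k) ^ 2) := by
  calc ∑' i : {j : ℤ // j % 2 = (n : ℤ) % 2 ∧ j ≠ (n : ℤ)},
      r (a + i.1) * |(n : ℝ) - (i.1 : ℝ)|⁻¹
      ≤ Real.sqrt (∑' i : {j : ℤ // j % 2 = (n : ℤ) % 2 ∧ j ≠ (n : ℤ)}, r (a + i.1) ^ 2) *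
        Real.sqrt (∑' i : {j : ℤ // j % 2 = (n : ℤ) % 2 ∧ j ≠ (n : ℤ)},
          (|(n : ℝ) - (i.1 : ℝ)|⁻¹) ^ 2) :=
        cs_tsum (fun i => hr _) (fun i => by positivity) (shift_sq hsum n a).1 (weight_sq n).1
    _ ≤ Real.sqrt (∑' k : ℤ, (r k) ^ 2) * Real.sqrt 1 := by
        apply mul_le_mul (Real.sqrt_le_sqrt (shift_sq hsum n a).2)
          (Real.sqrt_le_sqrt (weight_sq n).2) (Real.sqrt_nonneg _) (Real.sqrt_nonneg _)
    _ = Real.sqrt (∑' k : ℤ, (r k) ^ 2) := by rw [Real.sqrt_one, mul_one]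

private lemma far_sum (hr : ∀ m, 0 ≤ r m) (hsum : Summable fun m => (r m) ^ 2) (n : ℕ) (hn : 4 ≤ n) (a : ℤ) :
    ∑' j : {j : ℤ // j % 2 = (n : ℤ) % 2 ∧ j ≠ (n : ℤ)},
      (if n < 2 * ((n : ℤ) - j.1).natAbs then r (a + j.1) * |(n : ℝ) - (j.1 : ℝ)|⁻¹ else 0) ≤
      Real.sqrt (∑' k : ℤ, (r k) ^ 2) * (2 / Real.sqrt n) := by
  classical
  set fP : {j : ℤ // j % 2 = (n : ℤ) % 2 ∧ j ≠ (n : ℤ)} → ℝ := fun j =>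
    if n < 2 * ((n : ℤ) - j.1).natAbs then r (a + j.1) else 0 with hfP
  set gP : {j : ℤ // j % 2 = (n : ℤ) % 2 ∧ j ≠ (n : ℤ)} → ℝ := fun j =>
    if n < 2 * ((n : ℤ) - j.1).natAbs then |(n : ℝ) - (j.1 : ℝ)|⁻¹ else 0 with hgP
  have hprod : (fun j : {j : ℤ // j % 2 = (n : ℤ) % 2 ∧ j ≠ (n : ℤ)} =>
      if n < 2 * ((n : ℤ) - j.1).natAbs then r (a + j.1) * |(n : ℝ) - (j.1 : ℝ)|⁻¹ else 0) =
      fun j => fP j * gP j := by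
    funext j
    by_cases h : n < 2 * ((n : ℤ) - j.1).natAbs <;> simp [hfP, hgP, h]
  have hfP2 : (fun j => fP j ^ 2) = fun j : {j : ℤ // j % 2 = (n : ℤ) % 2 ∧ j ≠ (n : ℤ)} =>
      if n < 2 * ((n : ℤ) - j.1).natAbs then r (a + j.1) ^ 2 else 0 := by
    funext j
    by_cases h : n < 2 * ((n : ℤ) - j.1).natAbs <;> simp [hfP, h]
  have hgP2 : (fun j => gP j ^ 2) = fun j : {j : ℤ // j % 2 = (n : ℤ) % 2 ∧ j ≠ (n : ℤ)} =>
      if n < 2 * ((n : ℤ) - j.1).natAbs then (|(n : ℝ) - (j.1 : ℝ)|⁻¹) ^ 2 else 0 := by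
    funext j
    by_cases h : n < 2 * ((n : ℤ) - j.1).natAbs <;> simp [hgP, h]
  have hsf2 : Summable (fun j => fP j ^ 2) := by
    rw [hfP2]
    exact Summable.of_nonneg_of_le (fun i => by split; exacts [sq_nonneg _, le_rfl])
      (fun i => by split; exacts [le_rfl, sq_nonneg _]) (shift_sq hsum n a).1
  have hsg2 : Summable (fun j => gP j ^ 2) := by
    rw [hgP2]; exact (weight_far n hn).1
  have hb1 : ∑' j, fP j ^ 2 ≤ ∑' k : ℤ, (r k) ^ 2 := by
    rw [hfP2]
    refine le_trans (Summable.tsum_le_tsum (fun i => ?_) (hfP2 ▸ hsf2) (shift_sq hsum n a).1)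
      (shift_sq hsum n a).2
    split
    exacts [le_rfl, sq_nonneg _]
  have hb2 : ∑' j, gP j ^ 2 ≤ 4 / (n : ℝ) := by
    rw [hgP2]; exact (weight_far n hn).2
  have hsqrt4n : Real.sqrt (4 / (n : ℝ)) = 2 / Real.sqrt n := by
    rw [Real.sqrt_div (by norm_num : (0:ℝ) ≤ 4) (n : ℝ),
      show (4:ℝ) = 2 ^ 2 by norm_num, Real.sqrt_sq (by norm_num : (0:ℝ) ≤ 2)]
  rw [hprod]
  calc ∑' j, fP j * gP j ≤ Real.sqrt (∑' j, fP j ^ 2) * Real.sqrt (∑' j, gP j ^ 2) :=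
        cs_tsum (fun i => by simp only [hfP]; split; exacts [hr _, le_rfl])
          (fun i => by simp only [hgP]; split; exacts [by positivity, le_rfl]) hsf2 hsg2
    _ ≤ Real.sqrt (∑' k : ℤ, (r k) ^ 2) * Real.sqrt (4 / (n : ℝ)) :=
        mul_le_mul (Real.sqrt_le_sqrt hb1) (Real.sqrt_le_sqrt hb2)
          (Real.sqrt_nonneg _) (Real.sqrt_nonneg _)
    _ = Real.sqrt (∑' k : ℤ, (r k) ^ 2) * (2 / Real.sqrt n) := by rw [hsqrt4n]

end steps

section main

variable {r : ℤ → ℝ}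

private lemma step_near (hr : ∀ m, 0 ≤ r m) (hsum : Summable fun m => (r m) ^ 2)
    (n : ℕ) (hn : 4 ≤ n) (j₀ : ℤ) (hj₀ : 2 * ((n : ℤ) - j₀).natAbs ≤ n) :
    ∑' i : {j : ℤ // j % 2 = (n : ℤ) % 2 ∧ j ≠ (n : ℤ)},
      r (j₀ + i.1) * |(n : ℝ) - (i.1 : ℝ)|⁻¹ ≤
    Real.sqrt (∑' k : {k : ℤ // (n : ℤ) ≤ |k|}, (r k.1) ^ 2) +
      2 * Real.sqrt (∑' k : ℤ, (r k) ^ 2) / Real.sqrt n := by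
  classical
  set P : {j : ℤ // j % 2 = (n : ℤ) % 2 ∧ j ≠ (n : ℤ)} → Prop := fun i =>
    2 * ((n : ℤ) - i.1).natAbs ≤ n with hP
  obtain ⟨s1, s2, hsplit⟩ := tsum_split P (step_summable hr hsum n j₀)
    (fun i => mul_nonneg (hr _) (by positivity))
  rw [hsplit]
  -- near piece
  set fP : {j : ℤ // j % 2 = (n : ℤ) % 2 ∧ j ≠ (n : ℤ)} → ℝ := fun j =>
    if P j then r (j₀ + j.1) else 0 with hfP
  set gP : {j : ℤ // j % 2 = (n : ℤ) % 2 ∧ j ≠ (n : ℤ)} → ℝ := fun j =>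
    if P j then |(n : ℝ) - (j.1 : ℝ)|⁻¹ else 0 with hgP
  have hprod : (fun j : {j : ℤ // j % 2 = (n : ℤ) % 2 ∧ j ≠ (n : ℤ)} =>
      if P j then r (j₀ + j.1) * |(n : ℝ) - (j.1 : ℝ)|⁻¹ else 0) = fun j => fP j * gP j := by
    funext j; by_cases h : P j <;> simp [hfP, hgP, h]
  have hfP2 : (fun j => fP j ^ 2) = fun j : {j : ℤ // j % 2 = (n : ℤ) % 2 ∧ j ≠ (n : ℤ)} =>
      if 2 * ((n : ℤ) - j.1).natAbs ≤ n then r (j₀ + j.1) ^ 2 else 0 := by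
    funext j; by_cases h : P j <;> simp [hfP, hP, h] <;> simp [hP] at h <;> simp [h]
  have hgP2 : (fun j => gP j ^ 2) = fun j : {j : ℤ // j % 2 = (n : ℤ) % 2 ∧ j ≠ (n : ℤ)} =>
      if P j then (|(n : ℝ) - (j.1 : ℝ)|⁻¹) ^ 2 else 0 := by
    funext j; by_cases h : P j <;> simp [hgP, h]
  have hsf2 : Summable (fun j => fP j ^ 2) := by
    rw [hfP2]
    exact Summable.of_nonneg_of_le (fun i => by split; exacts [sq_nonneg _, le_rfl])
      (fun i => by split; exacts [le_rfl, sq_nonneg _]) (shift_sq hsum n j₀).1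
  have hsg2 : Summable (fun j => gP j ^ 2) := by
    rw [hgP2]
    exact Summable.of_nonneg_of_le (fun i => by split; exacts [sq_nonneg _, le_rfl])
      (fun i => by split; exacts [le_rfl, sq_nonneg _]) (weight_sq n).1
  have hb1 : ∑' j, fP j ^ 2 ≤ ∑' k : {k : ℤ // (n : ℤ) ≤ |k|}, (r k.1) ^ 2 := by
    rw [hfP2]; exact near_tail hsum n j₀ hj₀
  have hb2 : ∑' j, gP j ^ 2 ≤ 1 := by
    rw [hgP2]
    refine le_trans (Summable.tsum_le_tsum (fun i => ?_) (hgP2 ▸ hsg2) (weight_sq n).1) (weight_sq n).2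
    split
    exacts [le_rfl, sq_nonneg _]
  have hnear : (∑' j, if P j then r (j₀ + j.1) * |(n : ℝ) - (j.1 : ℝ)|⁻¹ else 0) ≤
      Real.sqrt (∑' k : {k : ℤ // (n : ℤ) ≤ |k|}, (r k.1) ^ 2) := by
    rw [hprod]
    calc ∑' j, fP j * gP j ≤ Real.sqrt (∑' j, fP j ^ 2) * Real.sqrt (∑' j, gP j ^ 2) :=
          cs_tsum (fun i => by simp only [hfP]; split; exacts [hr _, le_rfl])
            (fun i => by simp only [hgP]; split; exacts [by positivity, le_rfl]) hsf2 hsg2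
      _ ≤ Real.sqrt (∑' k : {k : ℤ // (n : ℤ) ≤ |k|}, (r k.1) ^ 2) * Real.sqrt 1 :=
          mul_le_mul (Real.sqrt_le_sqrt hb1) (Real.sqrt_le_sqrt hb2)
            (Real.sqrt_nonneg _) (Real.sqrt_nonneg _)
      _ = _ := by rw [Real.sqrt_one, mul_one]
  have hfar : (∑' j, if ¬ P j then r (j₀ + j.1) * |(n : ℝ) - (j.1 : ℝ)|⁻¹ else 0) ≤
      2 * Real.sqrt (∑' k : ℤ, (r k) ^ 2) / Real.sqrt n := by
    have hconv : (fun j : {j : ℤ // j % 2 = (n : ℤ) % 2 ∧ j ≠ (n : ℤ)} =>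
        if ¬ P j then r (j₀ + j.1) * |(n : ℝ) - (j.1 : ℝ)|⁻¹ else 0) =
        fun j => if n < 2 * ((n : ℤ) - j.1).natAbs then
          r (j₀ + j.1) * |(n : ℝ) - (j.1 : ℝ)|⁻¹ else 0 := by
      funext j; simp [hP, not_le]
    rw [hconv]
    refine (far_sum hr hsum n hn j₀).trans (le_of_eq ?_)
    ring
  exact add_le_add hnear hfar

/-- `σ₁(n,2;m) ≤ 2‖r‖ρ̃_n` where `ρ̃_n = E_n(r) + 2‖r‖/√n`. -/
theorem stmt5 (r : ℤ → ℝ) (hr : ∀ m, 0 ≤ r m) (hsum : Summable fun m => (r m) ^ 2)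
    (n : ℕ) (hn : 4 ≤ n) (m : ℤ) (hm : m % 2 = (n : ℤ) % 2) :
    sigma1 r (n : ℤ) 2 m ≤
      2 * Real.sqrt (∑' k : ℤ, (r k) ^ 2) *
        (Real.sqrt (∑' k : {k : ℤ // (n : ℤ) ≤ |k|}, (r k.1) ^ 2) +
          2 * Real.sqrt (∑' k : ℤ, (r k) ^ 2) / Real.sqrt n) := by
  classical
  set N := Real.sqrt (∑' k : ℤ, (r k) ^ 2) with hN
  set T := Real.sqrt (∑' k : {k : ℤ // (n : ℤ) ≤ |k|}, (r k.1) ^ 2) with hT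
  have hN0 : 0 ≤ N := Real.sqrt_nonneg _
  have hT0 : 0 ≤ T := Real.sqrt_nonneg _
  have hsqn : 0 < Real.sqrt n := Real.sqrt_pos.mpr (by
    have : (0:ℕ) < n := by omega
    exact_mod_cast this)
  set ρ := T + 2 * N / Real.sqrt n with hρ
  have hρ0 : 0 ≤ ρ := by
    have : 0 ≤ 2 * N / Real.sqrt n := by positivity
    simp only [hρ]; linarith
  set S : ℤ → ℝ := fun a => ∑' i : {j : ℤ // j % 2 = (n : ℤ) % 2 ∧ j ≠ (n : ℤ)},
    r (a + i.1) * |(n : ℝ) - (i.1 : ℝ)|⁻¹ with hS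
  have hS_nonneg : ∀ a, 0 ≤ S a := fun a =>
    tsum_nonneg (fun i => mul_nonneg (hr _) (by positivity))
  have hS_crude : ∀ a, S a ≤ N := fun a => step_crude hr hsum n a
  set x : {j : ℤ // j % 2 = (n : ℤ) % 2 ∧ j ≠ (n : ℤ)} → ℝ := fun j =>
    r (m + j.1) * |(n : ℝ) - (j.1 : ℝ)|⁻¹ with hx
  have hxnn : ∀ j, 0 ≤ x j := fun j => mul_nonneg (hr _) (by positivity)
  have hxsum : Summable x := step_summable hr hsum n m
  set G : {j : ℤ // j % 2 = (n : ℤ) % 2 ∧ j ≠ (n : ℤ)} → ℝ := fun j => x j * S j.1 with hG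
  have hGnn : ∀ j, 0 ≤ G j := fun j => mul_nonneg (hxnn j) (hS_nonneg _)
  have hGsum : Summable G :=
    Summable.of_nonneg_of_le hGnn
      (fun j => mul_le_mul_of_nonneg_left (hS_crude _) (hxnn j)) (hxsum.mul_right N)
  have hunfold : sigma1 r (n : ℤ) 2 m = ∑' j, G j := by
    simp only [sigma1, mul_one, div_eq_mul_inv, hG, hx, hS, Int.cast_natCast]
  set P : {j : ℤ // j % 2 = (n : ℤ) % 2 ∧ j ≠ (n : ℤ)} → Prop := fun i =>
    2 * ((n : ℤ) - i.1).natAbs ≤ n with hP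
  obtain ⟨s1, s2, hsplit⟩ := tsum_split P hGsum hGnn
  obtain ⟨sx1, sx2, _⟩ := tsum_split P hxsum hxnn
  -- near piece
  have hA : (∑' j, if P j then G j else 0) ≤ N * ρ := by
    have hrw : (fun j : {j : ℤ // j % 2 = (n : ℤ) % 2 ∧ j ≠ (n : ℤ)} =>
        if P j then x j * ρ else 0) = fun j => (if P j then x j else 0) * ρ := by
      funext j; by_cases h : P j <;> simp [h]
    have hpt : ∀ j, (if P j then G j else 0) ≤ (if P j then x j * ρ else 0) := by
      intro j
      by_cases h : P j
      · simp only [if_pos h]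
        exact mul_le_mul_of_nonneg_left (step_near hr hsum n hn j.1 h) (hxnn j)
      · simp [h]
    calc (∑' j, if P j then G j else 0) ≤ ∑' j, if P j then x j * ρ else 0 :=
          Summable.tsum_le_tsum hpt s1 (by rw [hrw]; exact sx1.mul_right ρ)
      _ = (∑' j, if P j then x j else 0) * ρ := by rw [hrw, tsum_mul_right]
      _ ≤ S m * ρ := by
          refine mul_le_mul_of_nonneg_right ?_ hρ0
          refine Summable.tsum_le_tsum (fun j => ?_) sx1 hxsum
          split
          exacts [le_rfl, hxnn j]
      _ ≤ N * ρ := mul_le_mul_of_nonneg_right (hS_crude m) hρ0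
  -- far piece
  have hB : (∑' j, if ¬ P j then G j else 0) ≤ N * ρ := by
    have hrw : (fun j : {j : ℤ // j % 2 = (n : ℤ) % 2 ∧ j ≠ (n : ℤ)} =>
        if ¬ P j then x j * N else 0) = fun j => (if ¬ P j then x j else 0) * N := by
      funext j; by_cases h : P j <;> simp [h]
    have hpt : ∀ j, (if ¬ P j then G j else 0) ≤ (if ¬ P j then x j * N else 0) := by
      intro j
      by_cases h : P j
      · simp [h]
      · simp only [if_pos (show ¬ P j from h), hG]
        exact mul_le_mul_of_nonneg_left (hS_crude _) (hxnn j)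
    have hconv : (fun j : {j : ℤ // j % 2 = (n : ℤ) % 2 ∧ j ≠ (n : ℤ)} =>
        if ¬ P j then x j else 0) =
        fun j => if n < 2 * ((n : ℤ) - j.1).natAbs then
          r (m + j.1) * |(n : ℝ) - (j.1 : ℝ)|⁻¹ else 0 := by
      funext j; simp [hP, hx, not_le]
    calc (∑' j, if ¬ P j then G j else 0) ≤ ∑' j, if ¬ P j then x j * N else 0 :=
          Summable.tsum_le_tsum hpt s2 (by rw [hrw]; exact sx2.mul_right N)
      _ = (∑' j, if ¬ P j then x j else 0) * N := by rw [hrw, tsum_mul_right]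
      _ ≤ (N * (2 / Real.sqrt n)) * N := by
          refine mul_le_mul_of_nonneg_right ?_ hN0
          rw [hconv]
          exact far_sum hr hsum n hn m
      _ ≤ N * ρ := by
          have h1 : (N * (2 / Real.sqrt n)) * N = N * (2 * N / Real.sqrt n) := by ring
          rw [h1]
          refine mul_le_mul_of_nonneg_left ?_ hN0
          simp only [hρ]
          linarith
  rw [hunfold, hsplit]
  calc (∑' j, if P j then G j else 0) + (∑' j, if ¬ P j then G j else 0) ≤ N * ρ + N * ρ :=
        add_le_add hA hB
    _ = 2 * N * ρ := by ring
end main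
end

section
/- With the same notation (nonnegative r ∈ ℓ²(2ℤ), n ≥ 4, ρ̃_n = E_n(r) + 2‖r‖/√n, and σ₁(n,s;m) the s-fold weighted convolution sum), for every p ≥ 1 and every m ∈ n + 2ℤ one has σ₁(n,2p;m) ≤ (2‖r‖ρ̃_n)^p and σ₁(n,2p+1;m) ≤ ‖r‖·(2‖r‖ρ̃_n)^p. -/
namespace Stmt6Aux

open Real Finset

/-! ### Elementary `ℕ`-indexed inverse square sums -/

lemma natSummable : Summable (fun a : ℕ => (((a : ℝ) + 1) ^ 2)⁻¹) := by
  have h : Summable (fun n : ℕ => 1 / (n : ℝ) ^ 2) :=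
    Real.summable_one_div_nat_pow.2 one_lt_two
  have h2 := (summable_nat_add_iff (f := fun n : ℕ => 1 / (n : ℝ) ^ 2) 1).2 h
  refine h2.congr fun a => ?_
  push_cast
  rw [one_div]

/-- the truncated inverse-square sequence -/
noncomputable def vL (L : ℕ) (a : ℕ) : ℝ := if L ≤ a + 1 then (((a : ℝ) + 1) ^ 2)⁻¹ else 0

lemma vL_nonneg (L a : ℕ) : 0 ≤ vL L a := by
  unfold vL; split <;> positivity

lemma vL_summable (L : ℕ) : Summable (vL L) := by
  refine Summable.of_nonneg_of_le (vL_nonneg L) (fun a => ?_) natSummable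
  unfold vL; split
  · exact le_rfl
  · positivity

lemma vL_sum_range (L : ℕ) (hL : 1 ≤ L) :
    ∀ N : ℕ, ∑ a ∈ Finset.range N, vL L a ≤ if L ≤ N then 2 / (L:ℝ) - 1 / (N:ℝ) else 0 := by
  intro N
  induction N with
  | zero =>
    simp only [Finset.range_zero, Finset.sum_empty]
    rw [if_neg (by omega : ¬ L ≤ 0)]
  | succ N ih =>
    rw [Finset.sum_range_succ]
    by_cases h1 : L ≤ N
    · have hN1 : (1 : ℝ) ≤ (N : ℝ) := by exact_mod_cast le_trans hL h1
      have hNpos : (0 : ℝ) < N := by linarith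
      have hterm : vL L N ≤ 1 / (N : ℝ) - 1 / ((N : ℝ) + 1) := by
        unfold vL
        rw [if_pos (by omega)]
        have heq : 1 / (N : ℝ) - 1 / ((N : ℝ) + 1) = ((N : ℝ) * ((N : ℝ) + 1))⁻¹ := by
          field_simp
          ring
        rw [heq]
        apply inv_anti₀ (by positivity)
        nlinarith
      rw [if_pos h1] at ih
      rw [if_pos (by omega : L ≤ N + 1)]
      push_cast
      linarith
    · by_cases h2 : L ≤ N + 1
      · have hLN : N + 1 = L := by omega
        have hL1 : (1 : ℝ) ≤ (L : ℝ) := by exact_mod_cast hL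
        have hterm : vL L N ≤ 1 / (L : ℝ) := by
          unfold vL
          rw [if_pos h2]
          have : ((N : ℝ) + 1) = (L : ℝ) := by exact_mod_cast congrArg (Nat.cast : ℕ → ℝ) hLN
          rw [this]
          rw [sq]
          calc ((L : ℝ) * L)⁻¹ ≤ (L : ℝ)⁻¹ := by
                apply inv_anti₀ (by positivity)
                nlinarith
            _ = 1 / L := (one_div _).symm
        rw [if_neg h1] at ih
        rw [if_pos h2]
        have : (N : ℝ) + 1 = (L : ℝ) := by exact_mod_cast congrArg (Nat.cast : ℕ → ℝ) hLN
        push_cast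
        rw [this]
        have h7 : 2 / (L:ℝ) - 1 / (L:ℝ) = 1 / (L:ℝ) := by ring
        linarith
      · rw [if_neg h1] at ih
        rw [if_neg h2]
        have : vL L N = 0 := by unfold vL; rw [if_neg (by omega)]
        linarith

lemma vL_tsum_le (L : ℕ) (hL : 1 ≤ L) : ∑' a : ℕ, vL L a ≤ 2 / L := by
  refine Summable.tsum_le_of_sum_le (vL_summable L) fun s => ?_
  obtain ⟨N, hN⟩ := s.exists_nat_subset_range
  have h1 : ∑ a ∈ s, vL L a ≤ ∑ a ∈ Finset.range N, vL L a :=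
    Finset.sum_le_sum_of_subset_of_nonneg hN fun a _ _ => vL_nonneg L a
  have h2 := vL_sum_range L hL N
  have hL0 : (0 : ℝ) < L := by exact_mod_cast hL
  refine h1.trans (h2.trans ?_)
  split
  · have : (0:ℝ) ≤ 1 / N := by positivity
    linarith
  · positivity

/-! ### The index subtype and its parametrization -/

/-- the index set `n + 2ℤ ∖ {n}` -/
abbrev JJ (n : ℕ) := {j : ℤ // j % 2 = (n : ℤ) % 2 ∧ j ≠ (n : ℤ)}

/-- explicit parametrization of `JJ n` by `Bool × ℕ` -/
noncomputable def eJ (n : ℕ) : Bool × ℕ ≃ JJ n where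
  toFun x := ⟨(n : ℤ) + (if x.1 then 1 else -1) * (2 * ((x.2 : ℤ) + 1)),
    by rcases x with ⟨b, a⟩; cases b <;> simp <;> omega⟩
  invFun j := (decide ((n : ℤ) < j.1), ((n : ℤ) - j.1).natAbs / 2 - 1)
  left_inv := by
    rintro ⟨b, a⟩
    cases b <;> simp <;> omega
  right_inv := by
    rintro ⟨j, h1, h2⟩
    ext
    by_cases h : (n : ℤ) < j <;> simp [h] <;> omega

lemma eJ_absZ (n : ℕ) (x : Bool × ℕ) :
    |(n : ℤ) - ((eJ n x).1 : ℤ)| = 2 * ((x.2 : ℤ) + 1) := by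
  rcases x with ⟨b, a⟩
  rw [Int.abs_eq_natAbs]
  cases b <;> simp [eJ] <;> omega

lemma eJ_absR (n : ℕ) (x : Bool × ℕ) :
    |((n : ℤ) : ℝ) - (((eJ n x).1 : ℤ) : ℝ)| = 2 * ((x.2 : ℝ) + 1) := by
  have h := congrArg (fun z : ℤ => (z : ℝ)) (eJ_absZ n x)
  push_cast at h
  exact_mod_cast h

/-! ### Weight sums over `JJ n` -/

/-- truncated weight function on `JJ n` -/
noncomputable def gw (n L : ℕ) (j : JJ n) : ℝ :=
  if 2 * (L : ℤ) ≤ |(n : ℤ) - j.1| then ((((n : ℤ) : ℝ) - (j.1 : ℝ)) ^ 2)⁻¹ else 0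

lemma gw_nonneg (n L : ℕ) (j : JJ n) : 0 ≤ gw n L j := by
  unfold gw; split <;> positivity

lemma gw_comp (n L : ℕ) (x : Bool × ℕ) : gw n L (eJ n x) = 4⁻¹ * vL L x.2 := by
  unfold gw vL
  have habs := eJ_absR n x
  have hcond : (2 * (L : ℤ) ≤ |(n : ℤ) - ((eJ n x).1 : ℤ)|) ↔ (L ≤ x.2 + 1) := by
    rw [eJ_absZ n x]; omega
  have hval : ((((n : ℤ) : ℝ) - (((eJ n x).1 : ℤ) : ℝ)) ^ 2)⁻¹ = 4⁻¹ * (((x.2 : ℝ) + 1) ^ 2)⁻¹ := by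
    rw [← sq_abs, habs, mul_pow, mul_inv]
    norm_num
  by_cases h : L ≤ x.2 + 1
  · rw [if_pos (hcond.2 h), if_pos h, hval]
  · rw [if_neg (fun hc => h (hcond.1 hc)), if_neg h, mul_zero]

lemma gw_prod_summable (n L : ℕ) : Summable (fun x : Bool × ℕ => 4⁻¹ * vL L x.2) := by
  refine (summable_prod_of_nonneg (fun x => by
      have := vL_nonneg L x.2; positivity)).2 ⟨fun b => (vL_summable L).mul_left _, ?_⟩
  exact Summable.of_finite

lemma gw_summable (n L : ℕ) : Summable (gw n L) := by
  have h : Summable (fun x : Bool × ℕ => gw n L (eJ n x)) := by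
    refine (gw_prod_summable n L).congr fun x => ?_
    rw [gw_comp]
  exact (Equiv.summable_iff (eJ n)).1 h

lemma gw_tsum_le (n L : ℕ) (hL : 1 ≤ L) : ∑' j : JJ n, gw n L j ≤ 1 / L := by
  have hL0 : (0 : ℝ) < L := by exact_mod_cast hL
  have h1 : ∑' j : JJ n, gw n L j = ∑' x : Bool × ℕ, gw n L (eJ n x) :=
    ((eJ n).tsum_eq (gw n L)).symm
  have h2 : ∑' x : Bool × ℕ, gw n L (eJ n x) = ∑' x : Bool × ℕ, 4⁻¹ * vL L x.2 :=
    tsum_congr fun x => gw_comp n L x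
  have h3 : ∑' x : Bool × ℕ, 4⁻¹ * vL L x.2 = ∑' b : Bool, ∑' a : ℕ, 4⁻¹ * vL L a :=
    Summable.tsum_prod (gw_prod_summable n L)
  have h4 : ∑' b : Bool, ∑' a : ℕ, 4⁻¹ * vL L a = 2 * (4⁻¹ * ∑' a : ℕ, vL L a) := by
    rw [tsum_fintype, tsum_mul_left]
    simp [two_mul]
  rw [h1, h2, h3, h4]
  have h5 := vL_tsum_le L hL
  have h6 : 2 * (4⁻¹ * ∑' a : ℕ, vL L a) ≤ 2 * (4⁻¹ * (2 / L)) := by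
    have : (0:ℝ) ≤ 2 * 4⁻¹ := by norm_num
    nlinarith
  exact h6.trans (le_of_eq (by ring))

/-! ### Cauchy–Schwarz for nonnegative tsums -/

lemma cs_tsum {ι : Type*} (f g : ι → ℝ) (hf0 : ∀ i, 0 ≤ f i) (hg0 : ∀ i, 0 ≤ g i)
    (hf : Summable fun i => f i ^ 2) (hg : Summable fun i => g i ^ 2) :
    Summable (fun i => f i * g i) ∧
      ∑' i, f i * g i ≤ √(∑' i, f i ^ 2) * √(∑' i, g i ^ 2) := by
  have hs : Summable (fun i => f i * g i) := by
    refine Summable.of_nonneg_of_le (fun i => mul_nonneg (hf0 i) (hg0 i)) (fun i => ?_)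
      ((hf.add hg).div_const 2)
    nlinarith [sq_nonneg (f i - g i)]
  refine ⟨hs, Summable.tsum_le_of_sum_le hs fun s => ?_⟩
  calc ∑ i ∈ s, f i * g i ≤ √(∑ i ∈ s, f i ^ 2) * √(∑ i ∈ s, g i ^ 2) :=
        Real.sum_mul_le_sqrt_mul_sqrt s f g
    _ ≤ √(∑' i, f i ^ 2) * √(∑' i, g i ^ 2) := by
        apply mul_le_mul
        · exact Real.sqrt_le_sqrt (Summable.sum_le_tsum s (fun i _ => sq_nonneg _) hf)
        · exact Real.sqrt_le_sqrt (Summable.sum_le_tsum s (fun i _ => sq_nonneg _) hg)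
        · exact Real.sqrt_nonneg _
        · exact Real.sqrt_nonneg _

lemma sq_shift (n : ℕ) (f : ℤ → ℝ) (hf2 : Summable fun k => f k ^ 2) (a : ℤ) :
    Summable (fun j : JJ n => f (a + j.1) ^ 2) ∧
      ∑' j : JJ n, f (a + j.1) ^ 2 ≤ ∑' k : ℤ, f k ^ 2 := by
  have hinj : Function.Injective (fun j : JJ n => a + j.1) := by
    intro x y h
    simp only at h
    exact Subtype.ext (by omega)
  have hsumm : Summable (fun j : JJ n => f (a + j.1) ^ 2) :=
    hf2.comp_injective hinj
  exact ⟨hsumm, Summable.tsum_le_tsum_of_inj _ hinj (fun c _ => sq_nonneg _) (fun i => le_rfl) hsumm hf2⟩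


/-! ### The two key one-index estimates -/

lemma key1 (n : ℕ) (f : ℤ → ℝ) (hf0 : ∀ x, 0 ≤ f x)
    (hf2 : Summable fun k => f k ^ 2) (a : ℤ) :
    Summable (fun j : JJ n => f (a + j.1) / |((n : ℤ) : ℝ) - (j.1 : ℝ)|) ∧
      ∑' j : JJ n, f (a + j.1) / |((n : ℤ) : ℝ) - (j.1 : ℝ)| ≤ √(∑' k : ℤ, f k ^ 2) := by
  set F : JJ n → ℝ := fun j => f (a + j.1) with hF
  set G : JJ n → ℝ := fun j => |((n : ℤ) : ℝ) - (j.1 : ℝ)|⁻¹ with hG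
  have hterm : ∀ j : JJ n, f (a + j.1) / |((n : ℤ) : ℝ) - (j.1 : ℝ)| = F j * G j :=
    fun j => div_eq_mul_inv _ _
  have hG2 : ∀ j : JJ n, G j ^ 2 = gw n 1 j := by
    intro j
    have hcond : 2 * ((1 : ℕ) : ℤ) ≤ |(n : ℤ) - j.1| := by
      have h1 := j.2.1
      have h2 := j.2.2
      rw [Int.abs_eq_natAbs]
      omega
    unfold gw
    rw [if_pos hcond, hG]
    simp only
    rw [inv_pow, sq_abs]
  have hG2sum : Summable (fun j : JJ n => G j ^ 2) :=
    (gw_summable n 1).congr fun j => (hG2 j).symm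
  have hF2 := sq_shift n f hf2 a
  obtain ⟨hs, hle⟩ := cs_tsum F G (fun j => hf0 _) (fun j => inv_nonneg.2 (abs_nonneg _))
    hF2.1 hG2sum
  constructor
  · exact hs.congr fun j => (hterm j).symm
  · have hG2tsum : ∑' j : JJ n, G j ^ 2 ≤ 1 := by
      calc ∑' j : JJ n, G j ^ 2 = ∑' j : JJ n, gw n 1 j := tsum_congr hG2
        _ ≤ 1 / (((1:ℕ)):ℝ) := gw_tsum_le n 1 le_rfl
        _ = 1 := by norm_num
    calc ∑' j : JJ n, f (a + j.1) / |((n : ℤ) : ℝ) - (j.1 : ℝ)| = ∑' j : JJ n, F j * G j :=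
          tsum_congr hterm
      _ ≤ √(∑' j : JJ n, F j ^ 2) * √(∑' j : JJ n, G j ^ 2) := hle
      _ ≤ √(∑' k : ℤ, f k ^ 2) * 1 := by
          apply mul_le_mul (Real.sqrt_le_sqrt hF2.2) ?_ (Real.sqrt_nonneg _) (Real.sqrt_nonneg _)
          calc √(∑' j : JJ n, G j ^ 2) ≤ √1 := Real.sqrt_le_sqrt hG2tsum
            _ = 1 := Real.sqrt_one
      _ = √(∑' k : ℤ, f k ^ 2) := mul_one _

lemma key1' (n : ℕ) (hn : 1 ≤ n) (f : ℤ → ℝ) (hf0 : ∀ x, 0 ≤ f x)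
    (hf2 : Summable fun k => f k ^ 2) (a : ℤ) :
    Summable (fun j : JJ n =>
        if (n : ℤ) < 2 * |(n : ℤ) - j.1| then f (a + j.1) / |((n : ℤ) : ℝ) - (j.1 : ℝ)| else 0) ∧
      ∑' j : JJ n, (if (n : ℤ) < 2 * |(n : ℤ) - j.1| then
          f (a + j.1) / |((n : ℤ) : ℝ) - (j.1 : ℝ)| else 0) ≤
        √(∑' k : ℤ, f k ^ 2) * (2 / √(n : ℝ)) := by
  set L : ℕ := n / 4 + 1 with hLdef
  have hL1 : 1 ≤ L := by omega
  have hL0 : (0 : ℝ) < L := by exact_mod_cast hL1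
  have hn0 : (0 : ℝ) < (n : ℝ) := by exact_mod_cast hn
  set F : JJ n → ℝ := fun j => f (a + j.1) with hF
  set G : JJ n → ℝ := fun j =>
    if (n : ℤ) < 2 * |(n : ℤ) - j.1| then |((n : ℤ) : ℝ) - (j.1 : ℝ)|⁻¹ else 0 with hG
  have hG0 : ∀ j, 0 ≤ G j := by
    intro j; rw [hG]; dsimp only; split
    · exact inv_nonneg.2 (abs_nonneg _)
    · exact le_rfl
  have hterm : ∀ j : JJ n,
      (if (n : ℤ) < 2 * |(n : ℤ) - j.1| then
        f (a + j.1) / |((n : ℤ) : ℝ) - (j.1 : ℝ)| else 0) = F j * G j := by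
    intro j
    rw [hG]; dsimp only
    by_cases h : (n : ℤ) < 2 * |(n : ℤ) - j.1|
    · rw [if_pos h, if_pos h, div_eq_mul_inv]
    · rw [if_neg h, if_neg h, mul_zero]
  have hG2le : ∀ j : JJ n, G j ^ 2 ≤ gw n L j := by
    intro j
    rw [hG]; dsimp only
    by_cases h : (n : ℤ) < 2 * |(n : ℤ) - j.1|
    · have hcond2 : 2 * (L : ℤ) ≤ |(n : ℤ) - j.1| := by
        have hp := j.2.1
        rw [Int.abs_eq_natAbs] at h ⊢
        omega
      rw [if_pos h]
      unfold gw
      rw [if_pos hcond2, inv_pow, sq_abs]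
    · rw [if_neg h]
      simpa using gw_nonneg n L j
  have hG2sum : Summable (fun j : JJ n => G j ^ 2) :=
    Summable.of_nonneg_of_le (fun j => sq_nonneg _) hG2le (gw_summable n L)
  have hF2 := sq_shift n f hf2 a
  obtain ⟨hs, hle⟩ := cs_tsum F G (fun j => hf0 _) hG0 hF2.1 hG2sum
  have hG2tsum : ∑' j : JJ n, G j ^ 2 ≤ 4 / (n : ℝ) := by
    have h1 : ∑' j : JJ n, G j ^ 2 ≤ ∑' j : JJ n, gw n L j :=
      Summable.tsum_le_tsum hG2le hG2sum (gw_summable n L)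
    have h2 := gw_tsum_le n L hL1
    have h3 : (1 : ℝ) / L ≤ 4 / (n : ℝ) := by
      rw [div_le_div_iff₀ hL0 hn0]
      have hcast : (n : ℝ) ≤ 4 * (L : ℝ) := by exact_mod_cast (by omega : n ≤ 4 * L)
      linarith
    linarith
  have hsqrt4 : √(4 / (n : ℝ)) = 2 / √(n : ℝ) := by
    rw [Real.sqrt_div (by norm_num : (0:ℝ) ≤ 4)]
    congr 1
    rw [show (4 : ℝ) = 2 ^ 2 by norm_num, Real.sqrt_sq (by norm_num : (0:ℝ) ≤ 2)]
  constructor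
  · exact hs.congr fun j => (hterm j).symm
  · calc ∑' j : JJ n, (if (n : ℤ) < 2 * |(n : ℤ) - j.1| then
          f (a + j.1) / |((n : ℤ) : ℝ) - (j.1 : ℝ)| else 0) = ∑' j : JJ n, F j * G j :=
          tsum_congr hterm
      _ ≤ √(∑' j : JJ n, F j ^ 2) * √(∑' j : JJ n, G j ^ 2) := hle
      _ ≤ √(∑' k : ℤ, f k ^ 2) * (2 / √(n : ℝ)) := by
          apply mul_le_mul (Real.sqrt_le_sqrt hF2.2) ?_ (Real.sqrt_nonneg _) (Real.sqrt_nonneg _)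
          calc √(∑' j : JJ n, G j ^ 2) ≤ √(4 / (n : ℝ)) := Real.sqrt_le_sqrt hG2tsum
            _ = 2 / √(n : ℝ) := hsqrt4

/-! ### Norm-type quantities -/

noncomputable def RR (r : ℤ → ℝ) : ℝ := √(∑' k : ℤ, (r k) ^ 2)

noncomputable def EN (r : ℤ → ℝ) (n : ℕ) : ℝ :=
  √(∑' k : {k : ℤ // (n : ℤ) ≤ |k|}, (r k.1) ^ 2)

noncomputable def BB (r : ℤ → ℝ) (n : ℕ) : ℝ :=
  2 * RR r * (EN r n + 2 * RR r / √(n : ℝ))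

lemma RR_nonneg (r : ℤ → ℝ) : 0 ≤ RR r := Real.sqrt_nonneg _

lemma EN_nonneg (r : ℤ → ℝ) (n : ℕ) : 0 ≤ EN r n := Real.sqrt_nonneg _

lemma BB_nonneg (r : ℤ → ℝ) (n : ℕ) : 0 ≤ BB r n := by
  unfold BB
  have h1 := RR_nonneg r
  have h2 := EN_nonneg r n
  have h3 : (0:ℝ) ≤ √(n : ℝ) := Real.sqrt_nonneg _
  positivity

/-! ### The weight factors in `sigma1` -/

noncomputable def wt (r : ℤ → ℝ) (n : ℕ) (a : ℤ) (j : JJ n) : ℝ :=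
  r (a + j.1) / |((n : ℤ) : ℝ) - (j.1 : ℝ)|

lemma wt_nonneg (r : ℤ → ℝ) (hr : ∀ x, 0 ≤ r x) (n : ℕ) (a : ℤ) (j : JJ n) :
    0 ≤ wt r n a j := div_nonneg (hr _) (abs_nonneg _)

lemma wt_summable (r : ℤ → ℝ) (hr : ∀ x, 0 ≤ r x) (hsum : Summable fun k => r k ^ 2)
    (n : ℕ) (a : ℤ) : Summable (wt r n a) := (key1 n r hr hsum a).1

lemma wt_tsum_le (r : ℤ → ℝ) (hr : ∀ x, 0 ≤ r x) (hsum : Summable fun k => r k ^ 2)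
    (n : ℕ) (a : ℤ) : ∑' j : JJ n, wt r n a j ≤ RR r := (key1 n r hr hsum a).2

lemma sigma1_succ (r : ℤ → ℝ) (n : ℕ) (s : ℕ) (m : ℤ) :
    sigma1 r (n : ℤ) (s + 1) m = ∑' j : JJ n, wt r n m j * sigma1 r (n : ℤ) s j.1 := rfl

lemma sig_nonneg (r : ℤ → ℝ) (hr : ∀ x, 0 ≤ r x) (n : ℕ) :
    ∀ (s : ℕ) (m : ℤ), 0 ≤ sigma1 r (n : ℤ) s m := by
  intro s
  induction s with
  | zero =>
    intro m
    rw [show sigma1 r (n : ℤ) 0 m = 1 from rfl]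
    exact zero_le_one
  | succ s ih =>
    intro m
    rw [sigma1_succ]
    exact tsum_nonneg fun j => mul_nonneg (wt_nonneg r hr n m j) (ih j.1)

lemma sig1_eq (r : ℤ → ℝ) (n : ℕ) (a : ℤ) :
    sigma1 r (n : ℤ) 1 a = ∑' j : JJ n, wt r n a j := by
  rw [sigma1_succ]
  exact tsum_congr fun j => by rw [show sigma1 r (n : ℤ) 0 j.1 = 1 from rfl, mul_one]

lemma sig1_le (r : ℤ → ℝ) (hr : ∀ x, 0 ≤ r x) (hsum : Summable fun k => r k ^ 2)
    (n : ℕ) (a : ℤ) : sigma1 r (n : ℤ) 1 a ≤ RR r := by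
  rw [sig1_eq]
  exact wt_tsum_le r hr hsum n a

/-! ### Tail part of `r` -/

noncomputable def gf (r : ℤ → ℝ) (n : ℕ) : ℤ → ℝ :=
  fun t => if (n : ℤ) ≤ |t| then r t else 0

lemma gf_nonneg (r : ℤ → ℝ) (hr : ∀ x, 0 ≤ r x) (n : ℕ) : ∀ t, 0 ≤ gf r n t := by
  intro t; unfold gf; split
  · exact hr t
  · exact le_rfl

lemma gf_sq_summable (r : ℤ → ℝ) (hsum : Summable fun k => r k ^ 2) (n : ℕ) :
    Summable fun t => gf r n t ^ 2 := by
  refine Summable.of_nonneg_of_le (fun t => sq_nonneg _) (fun t => ?_) hsum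
  unfold gf; split
  · exact le_rfl
  · simpa using sq_nonneg (r t)

lemma gf_sq_tsum (r : ℤ → ℝ) (n : ℕ) :
    ∑' t : ℤ, gf r n t ^ 2 = ∑' k : {k : ℤ // (n : ℤ) ≤ |k|}, (r k.1) ^ 2 := by
  have h1 : ∀ t : ℤ, gf r n t ^ 2 =
      Set.indicator {k : ℤ | (n : ℤ) ≤ |k|} (fun k => (r k) ^ 2) t := by
    intro t
    rw [Set.indicator_apply]
    unfold gf
    by_cases h : (n : ℤ) ≤ |t|
    · rw [if_pos h, if_pos (by exact h : t ∈ {k : ℤ | (n : ℤ) ≤ |k|})]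
    · rw [if_neg h, if_neg (by exact h : t ∉ {k : ℤ | (n : ℤ) ≤ |k|})]
      exact zero_pow (by norm_num)
  refine (tsum_congr h1).trans ?_
  exact (tsum_subtype {k : ℤ | (n : ℤ) ≤ |k|} (fun k => (r k) ^ 2)).symm

/-! ### The inner estimate: `σ₁(n,1;j) ≤ E + [Q j]·R + 2R/√n` -/

lemma inner_le (r : ℤ → ℝ) (hr : ∀ x, 0 ≤ r x) (hsum : Summable fun k => r k ^ 2)
    (n : ℕ) (hn : 1 ≤ n) (j : JJ n) :
    sigma1 r (n : ℤ) 1 j.1 ≤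
      EN r n + (if (n : ℤ) < 2 * |(n : ℤ) - j.1| then RR r else 0) + 2 * RR r / √(n : ℝ) := by
  have hRR := RR_nonneg r
  have hEN := EN_nonneg r n
  have hc0 : (0:ℝ) ≤ 2 * RR r / √(n : ℝ) := by positivity
  by_cases hq : (n : ℤ) < 2 * |(n : ℤ) - j.1|
  · rw [if_pos hq]
    have h1 := sig1_le r hr hsum n j.1
    linarith
  · rw [if_neg hq]
    rw [sig1_eq]
    set A : JJ n → ℝ := fun k => gf r n (j.1 + k.1) / |((n : ℤ) : ℝ) - (k.1 : ℝ)| with hA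
    set B : JJ n → ℝ := fun k =>
      if (n : ℤ) < 2 * |(n : ℤ) - k.1| then r (j.1 + k.1) / |((n : ℤ) : ℝ) - (k.1 : ℝ)| else 0
      with hB
    have hAkey := key1 n (gf r n) (gf_nonneg r hr n) (gf_sq_summable r hsum n) j.1
    have hBkey := key1' n hn r hr hsum j.1
    have hptw : ∀ k : JJ n, wt r n j.1 k ≤ A k + B k := by
      intro k
      by_cases hk : (n : ℤ) < 2 * |(n : ℤ) - k.1|
      · have hApos : 0 ≤ A k :=
          div_nonneg (gf_nonneg r hr n _) (abs_nonneg _)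
        have hBeq : B k = wt r n j.1 k := by rw [hB]; exact if_pos hk
        rw [hBeq]
        linarith
      · have hBeq : B k = 0 := by rw [hB]; exact if_neg hk
        have habs : (n : ℤ) ≤ |j.1 + k.1| := by
          rw [Int.abs_eq_natAbs]
          rw [Int.abs_eq_natAbs] at hq hk
          omega
        have hAeq : A k = wt r n j.1 k := by
          rw [hA]; dsimp only; unfold wt gf
          rw [if_pos habs]
        rw [hBeq, hAeq, add_zero]
    have hABsum : Summable (fun k : JJ n => A k + B k) := hAkey.1.add hBkey.1
    calc ∑' k : JJ n, wt r n j.1 k ≤ ∑' k : JJ n, (A k + B k) :=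
          Summable.tsum_le_tsum hptw (wt_summable r hr hsum n j.1) hABsum
      _ = (∑' k : JJ n, A k) + ∑' k : JJ n, B k := Summable.tsum_add hAkey.1 hBkey.1
      _ ≤ EN r n + RR r * (2 / √(n : ℝ)) := by
          apply add_le_add
          · calc ∑' k : JJ n, A k ≤ √(∑' t : ℤ, gf r n t ^ 2) := hAkey.2
              _ = EN r n := by rw [gf_sq_tsum]; rfl
          · exact hBkey.2
      _ ≤ EN r n + 0 + 2 * RR r / √(n : ℝ) := by
          have : RR r * (2 / √(n : ℝ)) = 2 * RR r / √(n : ℝ) := by ring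
          linarith

/-! ### The two-step estimate: `σ₁(n,2;m) ≤ B₂` -/

lemma core2 (r : ℤ → ℝ) (hr : ∀ x, 0 ≤ r x) (hsum : Summable fun k => r k ^ 2)
    (n : ℕ) (hn : 1 ≤ n) (m : ℤ) : sigma1 r (n : ℤ) 2 m ≤ BB r n := by
  have hRR := RR_nonneg r
  have hEN := EN_nonneg r n
  have hc0 : (0:ℝ) ≤ 2 * RR r / √(n : ℝ) := by positivity
  set c : ℝ := 2 * RR r / √(n : ℝ) with hcdef
  set U : JJ n → ℝ := fun j =>
    EN r n + (if (n : ℤ) < 2 * |(n : ℤ) - j.1| then RR r else 0) + c with hU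
  have hU0 : ∀ j, 0 ≤ U j := by
    intro j; rw [hU]; dsimp only; split <;> linarith
  have hUle : ∀ j, U j ≤ EN r n + RR r + c := by
    intro j; rw [hU]; dsimp only; split <;> linarith
  have hinner : ∀ j : JJ n, sigma1 r (n : ℤ) 1 j.1 ≤ U j := fun j =>
    inner_le r hr hsum n hn j
  rw [show sigma1 r (n : ℤ) 2 m =
    ∑' j : JJ n, wt r n m j * sigma1 r (n : ℤ) 1 j.1 from rfl]
  have hsumU : Summable (fun j : JJ n => wt r n m j * U j) := by
    refine Summable.of_nonneg_of_le
      (fun j => mul_nonneg (wt_nonneg r hr n m j) (hU0 j))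
      (fun j => mul_le_mul_of_nonneg_left (hUle j) (wt_nonneg r hr n m j))
      ((wt_summable r hr hsum n m).mul_right (EN r n + RR r + c))
  have hsumL : Summable (fun j : JJ n => wt r n m j * sigma1 r (n : ℤ) 1 j.1) := by
    refine Summable.of_nonneg_of_le
      (fun j => mul_nonneg (wt_nonneg r hr n m j) (sig_nonneg r hr n 1 j.1))
      (fun j => mul_le_mul_of_nonneg_left (hinner j) (wt_nonneg r hr n m j)) hsumU
  have step1 : ∑' j : JJ n, wt r n m j * sigma1 r (n : ℤ) 1 j.1 ≤
      ∑' j : JJ n, wt r n m j * U j := by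
    exact Summable.tsum_le_tsum (fun j => mul_le_mul_of_nonneg_left (hinner j) (wt_nonneg r hr n m j))
      hsumL hsumU
  set X : JJ n → ℝ := fun j => wt r n m j * EN r n with hX
  set Y : JJ n → ℝ := fun j =>
    RR r * (if (n : ℤ) < 2 * |(n : ℤ) - j.1| then
      r (m + j.1) / |((n : ℤ) : ℝ) - (j.1 : ℝ)| else 0) with hY
  set Z : JJ n → ℝ := fun j => wt r n m j * c with hZ
  have hkey' := key1' n hn r hr hsum m
  have hdecomp : ∀ j : JJ n, wt r n m j * U j = X j + Y j + Z j := by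
    intro j
    rw [hU, hX, hY, hZ]; dsimp only
    by_cases h : (n : ℤ) < 2 * |(n : ℤ) - j.1|
    · rw [if_pos h, if_pos h]
      unfold wt
      ring
    · rw [if_neg h, if_neg h]
      unfold wt
      ring
  have hsumX : Summable X := (wt_summable r hr hsum n m).mul_right _
  have hsumY : Summable Y := hkey'.1.mul_left _
  have hsumZ : Summable Z := (wt_summable r hr hsum n m).mul_right _
  have step2 : ∑' j : JJ n, wt r n m j * U j =
      (∑' j : JJ n, X j) + (∑' j : JJ n, Y j) + ∑' j : JJ n, Z j := by
    calc ∑' j : JJ n, wt r n m j * U j = ∑' j : JJ n, (X j + Y j + Z j) :=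
          tsum_congr hdecomp
      _ = (∑' j : JJ n, (X j + Y j)) + ∑' j : JJ n, Z j := Summable.tsum_add (hsumX.add hsumY) hsumZ
      _ = (∑' j : JJ n, X j) + (∑' j : JJ n, Y j) + ∑' j : JJ n, Z j := by
          rw [Summable.tsum_add hsumX hsumY]
  have hXle : ∑' j : JJ n, X j ≤ RR r * EN r n := by
    rw [hX]
    rw [tsum_mul_right]
    exact mul_le_mul_of_nonneg_right (wt_tsum_le r hr hsum n m) hEN
  have hYle : ∑' j : JJ n, Y j ≤ RR r * (RR r * (2 / √(n : ℝ))) := by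
    rw [hY]
    rw [tsum_mul_left]
    exact mul_le_mul_of_nonneg_left hkey'.2 hRR
  have hZle : ∑' j : JJ n, Z j ≤ RR r * c := by
    rw [hZ]
    rw [tsum_mul_right]
    exact mul_le_mul_of_nonneg_right (wt_tsum_le r hr hsum n m) hc0
  have e1 : BB r n = 2 * RR r * EN r n + 2 * RR r * c := by
    rw [hcdef]; unfold BB; ring
  have e2 : RR r * (RR r * (2 / √(n : ℝ))) + RR r * c = 2 * RR r * c := by
    rw [hcdef]; ring
  have e3 : 0 ≤ RR r * EN r n := mul_nonneg hRR hEN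
  linarith

/-! ### Recursion lemmas -/

lemma recA (r : ℤ → ℝ) (hr : ∀ x, 0 ≤ r x) (hsum : Summable fun k => r k ^ 2)
    (n : ℕ) (s : ℕ) (C : ℝ) (hC : 0 ≤ C) (hs : ∀ k, sigma1 r (n : ℤ) s k ≤ C) (a : ℤ) :
    sigma1 r (n : ℤ) (s + 1) a ≤ C * sigma1 r (n : ℤ) 1 a := by
  rw [sigma1_succ, sig1_eq]
  have hsum1 : Summable (fun j : JJ n => wt r n a j * C) :=
    (wt_summable r hr hsum n a).mul_right C
  have hle : ∀ j : JJ n, wt r n a j * sigma1 r (n : ℤ) s j.1 ≤ wt r n a j * C := fun j =>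
    mul_le_mul_of_nonneg_left (hs j.1) (wt_nonneg r hr n a j)
  have hsum0 : Summable (fun j : JJ n => wt r n a j * sigma1 r (n : ℤ) s j.1) :=
    Summable.of_nonneg_of_le
      (fun j => mul_nonneg (wt_nonneg r hr n a j) (sig_nonneg r hr n s j.1)) hle hsum1
  calc ∑' j : JJ n, wt r n a j * sigma1 r (n : ℤ) s j.1 ≤ ∑' j : JJ n, wt r n a j * C :=
        Summable.tsum_le_tsum hle hsum0 hsum1
    _ = (∑' j : JJ n, wt r n a j) * C := tsum_mul_right
    _ = C * ∑' j : JJ n, wt r n a j := mul_comm _ _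

lemma recB (r : ℤ → ℝ) (hr : ∀ x, 0 ≤ r x) (hsum : Summable fun k => r k ^ 2)
    (n : ℕ) (hn : 1 ≤ n) (s : ℕ) (C : ℝ) (hC : 0 ≤ C)
    (hs : ∀ k, sigma1 r (n : ℤ) s k ≤ C) (m : ℤ) :
    sigma1 r (n : ℤ) (s + 2) m ≤ C * BB r n := by
  have hA : ∀ a : ℤ, sigma1 r (n : ℤ) (s + 1) a ≤ C * sigma1 r (n : ℤ) 1 a := fun a =>
    recA r hr hsum n s C hC hs a
  have h1R : ∀ j : JJ n, sigma1 r (n : ℤ) 1 j.1 ≤ RR r := fun j => sig1_le r hr hsum n j.1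
  rw [show sigma1 r (n : ℤ) (s + 2) m =
    ∑' j : JJ n, wt r n m j * sigma1 r (n : ℤ) (s + 1) j.1 from rfl]
  have hptw : ∀ j : JJ n, wt r n m j * sigma1 r (n : ℤ) (s + 1) j.1 ≤
      wt r n m j * (C * sigma1 r (n : ℤ) 1 j.1) := fun j =>
    mul_le_mul_of_nonneg_left (hA j.1) (wt_nonneg r hr n m j)
  have hsumR : Summable (fun j : JJ n => wt r n m j * (C * sigma1 r (n : ℤ) 1 j.1)) := by
    refine Summable.of_nonneg_of_le
      (fun j => mul_nonneg (wt_nonneg r hr n m j)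
        (mul_nonneg hC (sig_nonneg r hr n 1 j.1)))
      (fun j => mul_le_mul_of_nonneg_left
        (mul_le_mul_of_nonneg_left (h1R j) hC) (wt_nonneg r hr n m j))
      ((wt_summable r hr hsum n m).mul_right (C * RR r))
  have hsumL : Summable (fun j : JJ n => wt r n m j * sigma1 r (n : ℤ) (s + 1) j.1) :=
    Summable.of_nonneg_of_le
      (fun j => mul_nonneg (wt_nonneg r hr n m j) (sig_nonneg r hr n (s + 1) j.1))
      hptw hsumR
  calc ∑' j : JJ n, wt r n m j * sigma1 r (n : ℤ) (s + 1) j.1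
      ≤ ∑' j : JJ n, wt r n m j * (C * sigma1 r (n : ℤ) 1 j.1) :=
        Summable.tsum_le_tsum hptw hsumL hsumR
    _ = ∑' j : JJ n, C * (wt r n m j * sigma1 r (n : ℤ) 1 j.1) :=
        tsum_congr fun j => by ring
    _ = C * ∑' j : JJ n, wt r n m j * sigma1 r (n : ℤ) 1 j.1 := tsum_mul_left
    _ = C * sigma1 r (n : ℤ) 2 m := by
        rw [show sigma1 r (n : ℤ) 2 m =
          ∑' j : JJ n, wt r n m j * sigma1 r (n : ℤ) 1 j.1 from rfl]
    _ ≤ C * BB r n := mul_le_mul_of_nonneg_left (core2 r hr hsum n hn m) hC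

lemma main_induction (r : ℤ → ℝ) (hr : ∀ x, 0 ≤ r x) (hsum : Summable fun k => r k ^ 2)
    (n : ℕ) (hn : 1 ≤ n) :
    ∀ q : ℕ, 1 ≤ q → ∀ a : ℤ,
      sigma1 r (n : ℤ) (2 * q) a ≤ BB r n ^ q ∧
      sigma1 r (n : ℤ) (2 * q + 1) a ≤ RR r * BB r n ^ q := by
  intro q hq
  induction q, hq using Nat.le_induction with
  | base =>
    intro a
    constructor
    · rw [show 2 * 1 = 2 from rfl, pow_one]
      exact core2 r hr hsum n hn a
    · rw [show 2 * 1 + 1 = 1 + 2 from rfl, pow_one]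
      exact recB r hr hsum n hn 1 (RR r) (RR_nonneg r) (fun k => sig1_le r hr hsum n k) a
  | succ q hq ih =>
    intro a
    constructor
    · rw [show 2 * (q + 1) = 2 * q + 2 from by ring, pow_succ]
      exact recB r hr hsum n hn (2 * q) (BB r n ^ q) (pow_nonneg (BB_nonneg r n) q)
        (fun k => (ih k).1) a
    · rw [show 2 * (q + 1) + 1 = (2 * q + 1) + 2 from by ring]
      calc sigma1 r (n : ℤ) ((2 * q + 1) + 2) a ≤ (RR r * BB r n ^ q) * BB r n :=
            recB r hr hsum n hn (2 * q + 1) (RR r * BB r n ^ q)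
              (mul_nonneg (RR_nonneg r) (pow_nonneg (BB_nonneg r n) q))
              (fun k => (ih k).2) a
        _ = RR r * BB r n ^ (q + 1) := by rw [pow_succ]; ring

end Stmt6Aux

/-- `σ₁(n,2p;m) ≤ (2‖r‖ρ̃_n)^p` and `σ₁(n,2p+1;m) ≤ ‖r‖·(2‖r‖ρ̃_n)^p`
where `ρ̃_n = E_n(r) + 2‖r‖/√n`. -/
theorem stmt6 (r : ℤ → ℝ) (hr : ∀ m, 0 ≤ r m) (hsum : Summable fun m => (r m) ^ 2)
    (n : ℕ) (hn : 4 ≤ n) (p : ℕ) (hp : 1 ≤ p) (m : ℤ) (hm : m % 2 = (n : ℤ) % 2) :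
    sigma1 r (n : ℤ) (2 * p) m ≤
      (2 * Real.sqrt (∑' k : ℤ, (r k) ^ 2) *
        (Real.sqrt (∑' k : {k : ℤ // (n : ℤ) ≤ |k|}, (r k.1) ^ 2) +
          2 * Real.sqrt (∑' k : ℤ, (r k) ^ 2) / Real.sqrt n)) ^ p ∧
    sigma1 r (n : ℤ) (2 * p + 1) m ≤
      Real.sqrt (∑' k : ℤ, (r k) ^ 2) *
        (2 * Real.sqrt (∑' k : ℤ, (r k) ^ 2) *
          (Real.sqrt (∑' k : {k : ℤ // (n : ℤ) ≤ |k|}, (r k.1) ^ 2) +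
            2 * Real.sqrt (∑' k : ℤ, (r k) ^ 2) / Real.sqrt n)) ^ p := by
  have hn1 : 1 ≤ n := by omega
  have h := Stmt6Aux.main_induction r hr hsum n hn1 p hp m
  exact ⟨h.1, h.2⟩
end

section
/- Let r ∈ ℓ²(2ℤ) be nonnegative and n ≥ 1. Define σ₂(n,2;m) = ∑_{j₁,j₂ ∈ (n+2ℤ)\{±n}} r(m+j₁) r(j₁+j₂) / |n² - j₂²|. Then σ₂(n,2;m) ≤ ‖r‖² · (2 log 6n)/n for every m ∈ n + 2ℤ. -/
open Finset


private lemma harm_eq (n : ℕ) : (harmonic n : ℝ) = ∑ i ∈ range n, (1:ℝ)/((i:ℝ)+1) := by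
  simp [harmonic, one_div]

private lemma diff_bound (n N : ℕ) :
    ∑ k ∈ range N, (1:ℝ)/((k:ℝ)+1) - ∑ k ∈ range N, (1:ℝ)/((k:ℝ)+1+n)
      ≤ ∑ i ∈ range n, (1:ℝ)/((i:ℝ)+1) := by
  set f : ℕ → ℝ := fun j => 1/((j:ℝ)+1) with hf
  have hfnn : ∀ j, 0 ≤ f j := fun j => by positivity
  have hB : ∑ k ∈ range N, (1:ℝ)/((k:ℝ)+1+n) = ∑ j ∈ Ico n (n+N), f j := by
    rw [Finset.sum_Ico_eq_sum_range]
    simp only [Nat.add_sub_cancel_left, hf]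
    apply Finset.sum_congr rfl
    intro k _
    push_cast
    ring_nf
  rw [hB]
  rcases le_or_gt N n with h | h
  · have h1 : ∑ k ∈ range N, f k ≤ ∑ i ∈ range n, f i :=
      Finset.sum_le_sum_of_subset_of_nonneg (Finset.range_subset_range.2 h) (fun i _ _ => hfnn i)
    have h2 : (0:ℝ) ≤ ∑ j ∈ Ico n (n+N), f j := Finset.sum_nonneg fun j _ => hfnn j
    simpa [hf] using sub_le_sub h1 h2
  · have hsplit : ∑ k ∈ range N, f k = ∑ i ∈ range n, f i + ∑ j ∈ Ico n N, f j := by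
      simp only [range_eq_Ico]
      exact (Finset.sum_Ico_consecutive f (Nat.zero_le n) h.le).symm
    have h2 : ∑ j ∈ Ico n N, f j ≤ ∑ j ∈ Ico n (n+N), f j :=
      Finset.sum_le_sum_of_subset_of_nonneg (Finset.Ico_subset_Ico le_rfl (by omega))
        (fun j _ _ => hfnn j)
    simp only [hf] at hsplit h2 ⊢
    linarith

private lemma partial_bound (n : ℕ) (hn : 1 ≤ n) (N : ℕ) :
    ∑ k ∈ range N, (1:ℝ)/(((k:ℝ)+1)*((k:ℝ)+1+n)) ≤ (harmonic n : ℝ)/n := by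
  have hn' : (0:ℝ) < n := by exact_mod_cast hn
  have hterm : ∀ k : ℕ, (1:ℝ)/(((k:ℝ)+1)*((k:ℝ)+1+n))
      = (1/(n:ℝ)) * (1/((k:ℝ)+1) - 1/((k:ℝ)+1+n)) := by
    intro k
    have h1 : ((k:ℝ)+1) ≠ 0 := by positivity
    have h2 : ((k:ℝ)+1+n) ≠ 0 := by positivity
    field_simp
    ring
  rw [Finset.sum_congr rfl fun k _ => hterm k, ← Finset.mul_sum, Finset.sum_sub_distrib]
  rw [harm_eq]
  have h14 : 0 ≤ (1:ℝ)/(n:ℝ) := by positivity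
  refine le_trans (mul_le_mul_of_nonneg_left (diff_bound n N) h14) (le_of_eq ?_)
  ring

private lemma tele_summable (n : ℕ) (hn : 1 ≤ n) :
    Summable (fun k : ℕ => (1:ℝ)/(((k:ℝ)+1)*((k:ℝ)+1+n))) :=
  summable_of_sum_range_le (fun k => by positivity) (partial_bound n hn)

private lemma tele_tsum_le (n : ℕ) (hn : 1 ≤ n) :
    ∑' k : ℕ, (1:ℝ)/(((k:ℝ)+1)*((k:ℝ)+1+n)) ≤ (harmonic n : ℝ)/n :=
  Real.tsum_le_of_sum_range_le (fun k => by positivity) (partial_bound n hn)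



private noncomputable def gw (n : ℕ) : ℤ → ℝ :=
  fun t => if t = 0 ∨ t = -(n:ℤ) then 0 else 1/(4*|(t:ℝ)| * |(n:ℝ)+(t:ℝ)|)

private lemma gw_nonneg (n : ℕ) (t : ℤ) : 0 ≤ gw n t := by
  unfold gw
  split
  · exact le_refl _
  · positivity

private lemma gw_pos_eq (n : ℕ) (hn : 1 ≤ n) (k : ℕ) :
    gw n ((k:ℤ)+1) = (1/4) * ((1:ℝ)/(((k:ℝ)+1)*((k:ℝ)+1+n))) := by
  unfold gw
  rw [if_neg (by push_neg; constructor <;> omega)]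
  have h1 : ((((k:ℤ)+1 : ℤ)):ℝ) = (k:ℝ)+1 := by push_cast; ring
  rw [h1, abs_of_pos (by positivity), abs_of_pos (by positivity)]
  have h2 : ((k:ℝ)+1) ≠ 0 := by positivity
  have h3 : ((k:ℝ)+1+n) ≠ 0 := by positivity
  field_simp
  ring

private lemma gw_neg_eq (n : ℕ) (hn : 1 ≤ n) (k : ℕ) :
    gw n (-((k:ℤ)+(n:ℤ)+1)) = (1/4) * ((1:ℝ)/(((k:ℝ)+1)*((k:ℝ)+1+n))) := by
  unfold gw
  rw [if_neg (by push_neg; constructor <;> omega)]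
  have h1 : |((-((k:ℤ)+(n:ℤ)+1) : ℤ):ℝ)| = (k:ℝ)+(n:ℝ)+1 := by
    push_cast
    rw [abs_neg, abs_of_pos (by positivity)]
  have h2 : |(n:ℝ)+((-((k:ℤ)+(n:ℤ)+1) : ℤ):ℝ)| = (k:ℝ)+1 := by
    push_cast
    rw [show (n:ℝ) + (-((k:ℝ)+(n:ℝ)+1)) = -((k:ℝ)+1) by ring, abs_neg,
      abs_of_pos (by positivity)]
  rw [h1, h2]
  have h3 : ((k:ℝ)+1) ≠ 0 := by positivity
  have h4 : ((k:ℝ)+1+n) ≠ 0 := by positivity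
  field_simp
  ring

-- head sum bound: ∑_{k<n} gw n (-(k+1)) ≤ harmonic n / (2n)
private lemma head_bound (n : ℕ) (hn : 1 ≤ n) :
    ∑ k ∈ range n, gw n (-((k:ℤ)+1)) ≤ (harmonic n : ℝ)/(2*n) := by
  have hn' : (0:ℝ) < n := by exact_mod_cast hn
  -- termwise bound
  have hterm : ∀ k ∈ range n, gw n (-((k:ℤ)+1))
      ≤ (1/(4*(n:ℝ))) * (1/((k:ℝ)+1) + 1/((n:ℝ)-((k:ℝ)+1))) := by
    intro k hk
    have hkn : k < n := mem_range.mp hk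
    rcases eq_or_lt_of_le (Nat.succ_le_of_lt hkn) with he | hlt
    · -- k+1 = n : LHS is 0
      have : (-((k:ℤ)+1)) = -(n:ℤ) := by omega
      unfold gw
      rw [if_pos (Or.inr this)]
      have hz : (n:ℝ)-((k:ℝ)+1) = 0 := by
        have hkn' : (k:ℕ)+1 = n := he
        rw [← hkn']; push_cast; ring
      rw [hz]
      simp only [div_zero, add_zero]
      positivity
    · -- k+1 < n
      have h1 : ((n:ℝ)-((k:ℝ)+1)) > 0 := by
        have : (k:ℝ)+1 < n := by exact_mod_cast hlt
        linarith
      unfold gw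
      rw [if_neg (by push_neg; constructor <;> omega)]
      have e1 : |((-((k:ℤ)+1) : ℤ):ℝ)| = (k:ℝ)+1 := by
        push_cast; rw [abs_neg, abs_of_pos (by positivity)]
      have e2 : |(n:ℝ)+((-((k:ℤ)+1) : ℤ):ℝ)| = (n:ℝ)-((k:ℝ)+1) := by
        push_cast
        rw [show (n:ℝ) + (-((k:ℝ)+1)) = (n:ℝ)-((k:ℝ)+1) by ring, abs_of_pos h1]
      rw [e1, e2]
      have h2 : ((k:ℝ)+1) ≠ 0 := by positivity
      apply le_of_eq
      field_simp
      ring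
  refine le_trans (Finset.sum_le_sum hterm) ?_
  rw [← Finset.mul_sum, Finset.sum_add_distrib]
  -- second sum equals ∑_{j<n} 1/j via reflection
  have hrefl : ∑ k ∈ range n, (1:ℝ)/((n:ℝ)-((k:ℝ)+1)) = ∑ j ∈ range n, (1:ℝ)/(j:ℝ) := by
    rw [← Finset.sum_range_reflect (fun j => (1:ℝ)/(j:ℝ)) n]
    apply Finset.sum_congr rfl
    intro k hk
    have hkn : k < n := mem_range.mp hk
    have : ((n - 1 - k : ℕ) : ℝ) = (n:ℝ) - ((k:ℝ)+1) := by
      rw [Nat.sub_sub, Nat.cast_sub (by omega : 1 + k ≤ n)]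
      push_cast; ring
    rw [this]
  have hzero : ∑ j ∈ range n, (1:ℝ)/(j:ℝ) ≤ (harmonic n : ℝ) := by
    obtain ⟨m, rfl⟩ : ∃ m, n = m + 1 := ⟨n-1, by omega⟩
    rw [Finset.sum_range_succ' (fun j => (1:ℝ)/(j:ℝ)) m]
    simp only [Nat.cast_zero, div_zero, add_zero]
    rw [harm_eq]
    have : ∑ i ∈ range m, (1:ℝ)/((i:ℝ)+1) ≤ ∑ i ∈ range (m+1), (1:ℝ)/((i:ℝ)+1) :=
      Finset.sum_le_sum_of_subset_of_nonneg (Finset.range_subset_range.2 (by omega))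
        (fun i _ _ => by positivity)
    refine le_trans (le_of_eq ?_) this
    apply Finset.sum_congr rfl
    intro k _
    push_cast
    ring_nf
  have hfirst : ∑ k ∈ range n, (1:ℝ)/((k:ℝ)+1) = (harmonic n : ℝ) := (harm_eq n).symm
  have h14 : (0:ℝ) ≤ 1/(4*(n:ℝ)) := by positivity
  have hsum2 : ∑ k ∈ range n, (1:ℝ)/((n:ℝ)-((k:ℝ)+1)) ≤ (harmonic n : ℝ) := by
    rw [hrefl]; exact hzero
  have hH : (0:ℝ) ≤ (harmonic n : ℝ) := by
    rw [harm_eq]; exact Finset.sum_nonneg fun i _ => by positivity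
  calc (1/(4*(n:ℝ))) * (∑ k ∈ range n, (1:ℝ)/((k:ℝ)+1) + ∑ k ∈ range n, (1:ℝ)/((n:ℝ)-((k:ℝ)+1)))
      ≤ (1/(4*(n:ℝ))) * ((harmonic n : ℝ) + (harmonic n : ℝ)) := by
        apply mul_le_mul_of_nonneg_left _ h14
        rw [hfirst]
        linarith
    _ = (harmonic n : ℝ)/(2*n) := by field_simp; ring

private lemma gw_summable_tsum (n : ℕ) (hn : 1 ≤ n) :
    Summable (gw n) ∧ ∑' t : ℤ, gw n t ≤ (harmonic n : ℝ)/n := by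
  set f0 : ℕ → ℝ := fun k => (1:ℝ)/(((k:ℝ)+1)*((k:ℝ)+1+n)) with hf0
  have hf0S : Summable f0 := tele_summable n hn
  have hf0T : ∑' k, f0 k ≤ (harmonic n : ℝ)/n := tele_tsum_le n hn
  have hf0nn : (0:ℝ) ≤ ∑' k, f0 k := tsum_nonneg fun k => by positivity
  -- positive part
  have hpe : (fun k : ℕ => gw n ((k:ℤ)+1)) = fun k => (1/4) * f0 k := by
    funext k; exact gw_pos_eq n hn k
  have hfpshift : Summable (fun k : ℕ => gw n (((k+1:ℕ):ℤ))) := by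
    have : (fun k : ℕ => gw n (((k+1:ℕ):ℤ))) = fun k => (1/4) * f0 k := by
      funext k
      rw [show (((k+1:ℕ):ℤ)) = (k:ℤ)+1 by push_cast; ring]
      exact gw_pos_eq n hn k
    rw [this]
    exact hf0S.mul_left _
  have hfpS : Summable (fun k : ℕ => gw n (k:ℤ)) := (summable_nat_add_iff 1).mp hfpshift
  have hfpT : ∑' k : ℕ, gw n (k:ℤ) ≤ (1/4) * ((harmonic n : ℝ)/n) := by
    rw [hfpS.tsum_eq_zero_add]
    have h0 : gw n ((0:ℕ):ℤ) = 0 := by unfold gw; rw [if_pos (Or.inl (by norm_num))]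
    rw [h0, zero_add]
    have : ∑' k : ℕ, gw n (((k+1:ℕ):ℤ)) = (1/4) * ∑' k, f0 k := by
      rw [show (fun k : ℕ => gw n (((k+1:ℕ):ℤ))) = fun k => (1/4) * f0 k by
        funext k
        rw [show (((k+1:ℕ):ℤ)) = (k:ℤ)+1 by push_cast; ring]
        exact gw_pos_eq n hn k]
      exact tsum_mul_left
    rw [this]
    nlinarith [hf0T]
  -- negative part
  have hfmshift : Summable (fun k : ℕ => gw n (-(((k+n:ℕ):ℤ)+1))) := by
    have : (fun k : ℕ => gw n (-(((k+n:ℕ):ℤ)+1))) = fun k => (1/4) * f0 k := by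
      funext k
      rw [show (-(((k+n:ℕ):ℤ)+1)) = -((k:ℤ)+(n:ℤ)+1) by push_cast; ring]
      exact gw_neg_eq n hn k
    rw [this]
    exact hf0S.mul_left _
  have hfmS : Summable (fun k : ℕ => gw n (-((k:ℤ)+1))) := by
    apply (summable_nat_add_iff n).mp
    have : (fun k : ℕ => gw n (-(((k+n:ℕ):ℤ)+1))) = fun k : ℕ => gw n (-(((k+n:ℕ):ℤ)+1)) := rfl
    exact hfmshift.congr (fun k => by push_cast; ring_nf)
  have hfmT : ∑' k : ℕ, gw n (-((k:ℤ)+1)) ≤ (harmonic n : ℝ)/(2*n) + (1/4) * ((harmonic n : ℝ)/n) := by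
    have hsplit := Summable.sum_add_tsum_nat_add (f := fun k : ℕ => gw n (-((k:ℤ)+1))) n hfmS
    rw [← hsplit]
    have htail : ∑' k : ℕ, gw n (-(((k+n:ℕ):ℤ)+1)) = (1/4) * ∑' k, f0 k := by
      rw [show (fun k : ℕ => gw n (-(((k+n:ℕ):ℤ)+1))) = fun k => (1/4) * f0 k by
        funext k
        rw [show (-(((k+n:ℕ):ℤ)+1)) = -((k:ℤ)+(n:ℤ)+1) by push_cast; ring]
        exact gw_neg_eq n hn k]
      exact tsum_mul_left
    refine add_le_add (head_bound n hn) ?_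
    rw [htail]
    nlinarith [hf0T, hf0nn]
  constructor
  · exact Summable.of_nat_of_neg_add_one hfpS hfmS
  · rw [tsum_of_nat_of_neg_add_one hfpS hfmS]
    have := head_bound n hn
    have hnn : (0:ℝ) < n := by exact_mod_cast hn
    calc ∑' k : ℕ, gw n (k:ℤ) + ∑' k : ℕ, gw n (-((k:ℤ)+1))
        ≤ (1/4) * ((harmonic n : ℝ)/n) + ((harmonic n : ℝ)/(2*n) + (1/4) * ((harmonic n : ℝ)/n)) :=
          add_le_add hfpT hfmT
      _ = (harmonic n : ℝ)/n := by field_simp; ring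

private lemma harm_le_log (n : ℕ) (hn : 1 ≤ n) :
    (harmonic n : ℝ)/n ≤ 2 * Real.log (6*n) / n := by
  have hn' : (0:ℝ) < n := by exact_mod_cast hn
  have h6 : (1:ℝ) ≤ Real.log 6 := by
    rw [Real.le_log_iff_exp_le (by norm_num : (0:ℝ) < 6)]
    exact le_trans Real.exp_one_lt_d9.le (by norm_num)
  have hlogn : 0 ≤ Real.log n := Real.log_nonneg (by exact_mod_cast hn)
  have hmul : Real.log (6*n) = Real.log 6 + Real.log n :=
    Real.log_mul (by norm_num) (by positivity)
  have hH : (harmonic n : ℝ) ≤ 1 + Real.log n := harmonic_le_one_add_log n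
  have : (harmonic n : ℝ) ≤ 2 * Real.log (6*n) := by
    rw [hmul]; linarith
  exact (div_le_div_iff_of_pos_right hn').mpr this

private lemma key_weight (n : ℕ) (hn : 1 ≤ n) (J : Finset ℤ)
    (hJ : ∀ j ∈ J, j % 2 = (n:ℤ) % 2 ∧ j ≠ (n:ℤ) ∧ j ≠ -(n:ℤ)) :
    ∑ j ∈ J, 1/|(n:ℝ)^2 - (j:ℝ)^2| ≤ 2 * Real.log (6*n) / n := by
  have hrec : ∀ j ∈ J, j = (n:ℤ) + 2*((j - n)/2) := by
    intro j hj
    have hpar := (hJ j hj).1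
    omega
  set e : ℤ → ℤ := fun j => (j - n)/2 with he
  have hinj : ∀ x ∈ J, ∀ y ∈ J, e x = e y → x = y := by
    intro x hx y hy hxy
    have h1 := hrec x hx
    have h2 := hrec y hy
    simp only [he] at hxy
    omega
  have himg : ∑ t ∈ J.image e, gw n t = ∑ j ∈ J, gw n (e j) := Finset.sum_image hinj
  have hval : ∀ j ∈ J, 1/|(n:ℝ)^2 - (j:ℝ)^2| = gw n (e j) := by
    intro j hj
    obtain ⟨hpar, hn1, hn2⟩ := hJ j hj
    have hj' := hrec j hj
    simp only [he]
    unfold gw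
    rw [if_neg (by push_neg; constructor <;> omega)]
    have hcast : (j:ℝ) = (n:ℝ) + 2*(((j - (n:ℤ))/2 : ℤ):ℝ) := by exact_mod_cast hj'
    have : (n:ℝ)^2 - (j:ℝ)^2
        = -(4*((((j - (n:ℤ))/2 : ℤ):ℝ)*((n:ℝ)+(((j - (n:ℤ))/2 : ℤ):ℝ)))) := by
      rw [hcast]; ring
    rw [this, abs_neg, abs_mul, abs_mul, abs_of_nonneg (by norm_num : (0:ℝ) ≤ 4), mul_assoc]
  calc ∑ j ∈ J, 1/|(n:ℝ)^2 - (j:ℝ)^2| = ∑ j ∈ J, gw n (e j) := Finset.sum_congr rfl hval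
    _ = ∑ t ∈ J.image e, gw n t := himg.symm
    _ ≤ ∑' t : ℤ, gw n t :=
        Summable.sum_le_tsum _ (fun t _ => gw_nonneg n t) (gw_summable_tsum n hn).1
    _ ≤ (harmonic n : ℝ)/n := (gw_summable_tsum n hn).2
    _ ≤ 2 * Real.log (6*n) / n := harm_le_log n hn


/-- `σ₂(n,2;m) = ∑_{j₁,j₂ ∈ (n+2ℤ)\{±n}} r(m+j₁) r(j₁+j₂)/|n² - j₂²| ≤ ‖r‖²·(2 log 6n)/n`. -/
theorem stmt7 (r : ℤ → ℝ) (hr : ∀ m, 0 ≤ r m) (hsum : Summable fun m => (r m) ^ 2)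
    (n : ℕ) (hn : 1 ≤ n) (m : ℤ) (hm : m % 2 = (n : ℤ) % 2) :
    ∑' p : {p : ℤ × ℤ //
        (p.1 % 2 = (n : ℤ) % 2 ∧ p.1 ≠ (n : ℤ) ∧ p.1 ≠ -(n : ℤ)) ∧
        (p.2 % 2 = (n : ℤ) % 2 ∧ p.2 ≠ (n : ℤ) ∧ p.2 ≠ -(n : ℤ))},
      r (m + p.1.1) * r (p.1.1 + p.1.2) / |(n : ℝ) ^ 2 - (p.1.2 : ℝ) ^ 2| ≤
      (∑' k : ℤ, (r k) ^ 2) * (2 * Real.log (6 * n) / n) := by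
  have hn' : (0:ℝ) < n := by exact_mod_cast hn
  set C := ∑' k : ℤ, (r k)^2 with hC
  have hC0 : 0 ≤ C := tsum_nonneg fun k => sq_nonneg _
  have hlog : (0:ℝ) ≤ 2 * Real.log (6*n) / n := by
    have h1n : (1:ℝ) ≤ n := by exact_mod_cast hn
    have h1 : (1:ℝ) ≤ 6*n := by nlinarith
    have := Real.log_nonneg h1
    positivity
  apply tsum_le_of_sum_le' (mul_nonneg hC0 hlog)
  intro s
  set F : ℤ×ℤ → ℝ := fun q => r (m + q.1) * r (q.1 + q.2) / |(n:ℝ)^2 - (q.2:ℝ)^2| with hF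
  set G : ℤ×ℤ → ℝ := fun q =>
    ((r (m + q.1))^2 + (r (q.1 + q.2))^2)/2 / |(n:ℝ)^2 - (q.2:ℝ)^2| with hG
  have hFG : ∀ q : ℤ×ℤ, F q ≤ G q := by
    intro q
    simp only [hF, hG]
    rw [div_eq_mul_inv, div_eq_mul_inv]
    apply mul_le_mul_of_nonneg_right _ (inv_nonneg.mpr (abs_nonneg _))
    nlinarith [sq_nonneg (r (m + q.1) - r (q.1 + q.2)), hr (m + q.1), hr (q.1 + q.2)]
  have hGnn : ∀ q : ℤ×ℤ, 0 ≤ G q := by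
    intro q
    simp only [hG]
    positivity
  set s' : Finset (ℤ×ℤ) := s.image Subtype.val with hs'
  have hsum_eq : (∑ p ∈ s, F p.val) = ∑ q ∈ s', F q :=
    (Finset.sum_image (fun a _ b _ h => Subtype.val_injective h)).symm
  have hs'prop : ∀ q ∈ s', (q.1 % 2 = (n:ℤ) % 2 ∧ q.1 ≠ (n:ℤ) ∧ q.1 ≠ -(n:ℤ)) ∧
      (q.2 % 2 = (n:ℤ) % 2 ∧ q.2 ≠ (n:ℤ) ∧ q.2 ≠ -(n:ℤ)) := by
    intro q hq
    obtain ⟨p, _, rfl⟩ := Finset.mem_image.mp hq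
    exact p.2
  set A : Finset ℤ := s'.image Prod.fst with hA
  set B : Finset ℤ := s'.image Prod.snd with hB
  have hBval : ∀ b ∈ B, b % 2 = (n:ℤ) % 2 ∧ b ≠ (n:ℤ) ∧ b ≠ -(n:ℤ) := by
    intro b hb
    obtain ⟨q, hq, rfl⟩ := Finset.mem_image.mp hb
    exact (hs'prop q hq).2
  -- inner sums bound
  have hinner : ∀ b : ℤ, ∑ a ∈ A, ((r (m + a))^2 + (r (a + b))^2)/2 ≤ C := by
    intro b
    have h1 : ∑ a ∈ A, (r (m + a))^2 ≤ C := by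
      have : ∑ a ∈ A, (r (m + a))^2 = ∑ k ∈ A.image (fun a => m + a), (r k)^2 :=
        (Finset.sum_image (g := fun a => m + a) (f := fun k => (r k)^2)
          (fun a _ c _ h => add_left_cancel h)).symm
      rw [this, hC]
      exact Summable.sum_le_tsum _ (fun k _ => sq_nonneg _) hsum
    have h2 : ∑ a ∈ A, (r (a + b))^2 ≤ C := by
      have : ∑ a ∈ A, (r (a + b))^2 = ∑ k ∈ A.image (fun a => a + b), (r k)^2 :=
        (Finset.sum_image (g := fun a => a + b) (f := fun k => (r k)^2)
          (fun a _ c _ h => add_right_cancel h)).symm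
      rw [this, hC]
      exact Summable.sum_le_tsum _ (fun k _ => sq_nonneg _) hsum
    calc ∑ a ∈ A, ((r (m + a))^2 + (r (a + b))^2)/2
        = ((∑ a ∈ A, (r (m + a))^2) + ∑ a ∈ A, (r (a + b))^2)/2 := by
          rw [← Finset.sum_add_distrib, Finset.sum_div]
      _ ≤ C := by linarith
  calc ∑ p ∈ s, F p.val = ∑ q ∈ s', F q := hsum_eq
    _ ≤ ∑ q ∈ s', G q := Finset.sum_le_sum fun q _ => hFG q
    _ ≤ ∑ q ∈ A ×ˢ B, G q := by
        apply Finset.sum_le_sum_of_subset_of_nonneg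
        · intro q hq
          exact Finset.mem_product.mpr ⟨Finset.mem_image_of_mem _ hq, Finset.mem_image_of_mem _ hq⟩
        · exact fun q _ _ => hGnn q
    _ = ∑ b ∈ B, ∑ a ∈ A, G (a, b) := by
        rw [Finset.sum_product]
        exact Finset.sum_comm
    _ ≤ ∑ b ∈ B, C * (1/|(n:ℝ)^2 - (b:ℝ)^2|) := by
        apply Finset.sum_le_sum
        intro b _
        have : ∑ a ∈ A, G (a, b)
            = (∑ a ∈ A, ((r (m + a))^2 + (r (a + b))^2)/2) * (1/|(n:ℝ)^2 - (b:ℝ)^2|) := by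
          rw [Finset.sum_mul]
          apply Finset.sum_congr rfl
          intro a _
          simp only [hG]
          rw [div_eq_mul_inv, one_div]
        rw [this]
        apply mul_le_mul_of_nonneg_right (hinner b) (by positivity)
    _ = C * ∑ b ∈ B, 1/|(n:ℝ)^2 - (b:ℝ)^2| := by rw [Finset.mul_sum]
    _ ≤ C * (2 * Real.log (6*n) / n) :=
        mul_le_mul_of_nonneg_left (key_weight n hn B hBval) hC0
end

section
/- Let V(m) = m·w(m) where w ∈ ℓ²(2ℤ), and set r(m) = max(|w(m)|, |w(-m)|). Then for each n ≥ 4, the sum ∑_{k ∈ (n+2ℤ), k ≠ ±n} |V(k-n)|/|n²-k²| is at most ‖r‖/√n + E_n(r), where E_n(r) = (∑_{|m| ≥ n} r(m)²)^{1/2} and ‖r‖ is the ℓ²-norm of r. -/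
open Finset in
private lemma aux_tail (i₀ : ℕ) (hi₀ : 1 ≤ i₀) (t : Finset ℕ) (ht : ∀ i ∈ t, i₀ ≤ i) :
    ∑ i ∈ t, ((i : ℝ) ^ 2)⁻¹ ≤ 2 / i₀ := by
  have hsub : t ⊆ Finset.Ioo (i₀ - 1) (t.sup id + 1) := by
    intro i hi
    simp only [Finset.mem_Ioo]
    refine ⟨by have := ht i hi; omega, Nat.lt_succ_of_le (Finset.le_sup (f := id) hi)⟩
  calc ∑ i ∈ t, ((i : ℝ) ^ 2)⁻¹
      ≤ ∑ i ∈ Finset.Ioo (i₀ - 1) (t.sup id + 1), ((i : ℝ) ^ 2)⁻¹ :=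
        Finset.sum_le_sum_of_subset_of_nonneg hsub (fun i _ _ => by positivity)
    _ ≤ 2 / ((i₀ - 1 : ℕ) + 1) := sum_Ioo_inv_sq_le _ _
    _ = 2 / i₀ := by
        congr 1
        have h : (i₀ - 1) + 1 = i₀ := by omega
        calc ((i₀ - 1 : ℕ) : ℝ) + 1 = (((i₀ - 1) + 1 : ℕ) : ℝ) := by push_cast; ring
          _ = i₀ := by rw [h]

private lemma aux_nat (i₀ : ℕ) (hi₀ : 1 ≤ i₀) (t : Finset ℕ)
    (ht : ∀ i ∈ t, i = 0 ∨ i₀ ≤ i) : ∑ i ∈ t, ((i : ℝ) ^ 2)⁻¹ ≤ 2 / i₀ := by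
  classical
  rw [← Finset.sum_erase t (f := fun i : ℕ => ((i : ℝ) ^ 2)⁻¹) (a := 0) (by simp)]
  refine aux_tail i₀ hi₀ _ (fun i hi => ?_)
  have h1 := ht i (Finset.mem_of_mem_erase hi)
  have h2 := Finset.ne_of_mem_erase hi
  omega

private lemma aux_int (t : Finset ℤ) : ∑ i ∈ t, ((i : ℝ) ^ 2)⁻¹ ≤ 4 := by
  classical
  have key : ∀ u : Finset ℤ, (∀ i ∈ u, ∀ j ∈ u, i.natAbs = j.natAbs → i = j) →
      ∑ i ∈ u, ((i : ℝ) ^ 2)⁻¹ ≤ 2 := by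
    intro u hu
    have heq : ∑ i ∈ u, ((i : ℝ) ^ 2)⁻¹
        = ∑ j ∈ u.image Int.natAbs, ((j : ℝ) ^ 2)⁻¹ := by
      rw [Finset.sum_image hu]
      refine Finset.sum_congr rfl (fun i _ => ?_)
      rw [Nat.cast_natAbs, Int.cast_abs, sq_abs]
    rw [heq]
    have := aux_nat 1 le_rfl (u.image Int.natAbs) (fun i _ => by omega)
    simpa using this
  rw [← Finset.sum_filter_add_sum_filter_not t (fun i => 0 ≤ i)]
  have h1 : ∑ i ∈ t.filter (fun i => 0 ≤ i), ((i : ℝ) ^ 2)⁻¹ ≤ 2 := by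
    refine key _ (fun i hi j hj h => ?_)
    simp only [Finset.mem_filter] at hi hj
    omega
  have h2 : ∑ i ∈ t.filter (fun i => ¬ 0 ≤ i), ((i : ℝ) ^ 2)⁻¹ ≤ 2 := by
    refine key _ (fun i hi j hj h => ?_)
    simp only [Finset.mem_filter] at hi hj
    omega
  linarith

private lemma aux_cs_s10 {ι : Type*} (s : Finset ι) (a b : ι → ℝ) (ha : ∀ i ∈ s, 0 ≤ a i)
    (hb : ∀ i ∈ s, 0 ≤ b i) {A B : ℝ} (hA : ∑ i ∈ s, a i ^ 2 ≤ A)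
    (hB : ∑ i ∈ s, b i ^ 2 ≤ B) :
    ∑ i ∈ s, a i * b i ≤ Real.sqrt A * Real.sqrt B := by
  have hA0 : 0 ≤ A := le_trans (Finset.sum_nonneg fun i _ => sq_nonneg _) hA
  have hB0 : 0 ≤ B := le_trans (Finset.sum_nonneg fun i _ => sq_nonneg _) hB
  rw [← Real.sqrt_mul hA0]
  refine (Real.le_sqrt (Finset.sum_nonneg fun i hi => mul_nonneg (ha i hi) (hb i hi))
    (mul_nonneg hA0 hB0)).2 ?_
  exact le_trans (Finset.sum_mul_sq_le_sq_mul_sq s a b)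
    (mul_le_mul hA hB (Finset.sum_nonneg fun i _ => sq_nonneg _) hA0)

/-- With `V(m) = m·w(m)` and `r(m) = max(|w(m)|,|w(-m)|)`, for `n ≥ 4`,
`∑_{k ∈ (n+2ℤ), k ≠ ±n} |V(k-n)|/|n² - k²| ≤ ‖r‖/√n + E_n(r)`. -/
theorem stmt10 (w : ℤ → ℝ) (hw : Summable fun m => (w m) ^ 2) (n : ℕ) (hn : 4 ≤ n) :
    ∑' k : {k : ℤ // k % 2 = (n : ℤ) % 2 ∧ k ≠ (n : ℤ) ∧ k ≠ -(n : ℤ)},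
        |((k.1 - (n : ℤ) : ℤ) : ℝ) * w (k.1 - (n : ℤ))| / |(n : ℝ) ^ 2 - (k.1 : ℝ) ^ 2| ≤
      Real.sqrt (∑' m : ℤ, (max |w m| |w (-m)|) ^ 2) / Real.sqrt n +
        Real.sqrt (∑' m : {m : ℤ // (n : ℤ) ≤ |m|}, (max |w m.1| |w (-m.1)|) ^ 2) := by
  classical
  set r : ℤ → ℝ := fun m => max |w m| |w (-m)| with hrdef
  have hr0 : ∀ m : ℤ, 0 ≤ r m := fun m => le_trans (abs_nonneg _) (le_max_left _ _)
  have hr2 : Summable fun m : ℤ => r m ^ 2 := by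
    have h1 : Summable fun m : ℤ => w m ^ 2 + w (-m) ^ 2 :=
      hw.add (hw.comp_injective neg_injective)
    refine h1.of_nonneg_of_le (fun m => sq_nonneg _) (fun m => ?_)
    show (max |w m| |w (-m)|) ^ 2 ≤ w m ^ 2 + w (-m) ^ 2
    rcases max_choice |w m| |w (-m)| with h | h <;> rw [h, sq_abs] <;>
      nlinarith [sq_nonneg (w m), sq_nonneg (w (-m))]
  set T := ∑' m : ℤ, r m ^ 2 with hT
  set E2 := ∑' m : {m : ℤ // (n : ℤ) ≤ |m|}, r m.1 ^ 2 with hE2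
  have hsumInd : Summable (Set.indicator {m : ℤ | (n : ℤ) ≤ |m|} (fun m => r m ^ 2)) :=
    hr2.indicator _
  have hE2' : E2 = ∑' m : ℤ, Set.indicator {m : ℤ | (n : ℤ) ≤ |m|} (fun m => r m ^ 2) m := by
    rw [hE2]
    exact tsum_subtype {m : ℤ | (n : ℤ) ≤ |m|} (fun m => r m ^ 2)
  have hT0 : 0 ≤ T := tsum_nonneg (fun m => sq_nonneg _)
  have hE20 : 0 ≤ E2 := tsum_nonneg (fun m => sq_nonneg _)
  set S := {k : ℤ // k % 2 = (n : ℤ) % 2 ∧ k ≠ (n : ℤ) ∧ k ≠ -(n : ℤ)}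
  refine tsum_le_of_sum_le' (by positivity) fun s => ?_
  set g : S → ℝ := fun x => r (x.1 - (n : ℤ)) * |(n : ℝ) + (x.1 : ℝ)|⁻¹ with hg
  have key : ∀ x ∈ s, |((x.1 - (n : ℤ) : ℤ) : ℝ) * w (x.1 - (n : ℤ))| /
      |(n : ℝ) ^ 2 - (x.1 : ℝ) ^ 2| ≤ g x := by
    intro x _
    obtain ⟨h1, h2, h3⟩ := x.2
    have hne : |(n : ℝ) - (x.1 : ℝ)| ≠ 0 := by
      rw [abs_ne_zero, sub_ne_zero]
      intro h
      exact h2 (by exact_mod_cast h.symm)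
    have e1 : |((x.1 - (n : ℤ) : ℤ) : ℝ) * w (x.1 - (n : ℤ))|
        = |(n : ℝ) - (x.1 : ℝ)| * |w (x.1 - (n : ℤ))| := by
      rw [abs_mul]
      congr 1
      have : ((x.1 - (n : ℤ) : ℤ) : ℝ) = (x.1 : ℝ) - (n : ℝ) := by push_cast; ring
      rw [this, abs_sub_comm]
    have e2 : |(n : ℝ) ^ 2 - (x.1 : ℝ) ^ 2|
        = |(n : ℝ) - (x.1 : ℝ)| * |(n : ℝ) + (x.1 : ℝ)| := by
      rw [← abs_mul]
      congr 1
      ring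
    rw [e1, e2, mul_div_mul_left _ _ hne, div_eq_mul_inv]
    exact mul_le_mul_of_nonneg_right (le_max_left _ _) (inv_nonneg.2 (abs_nonneg _))
  have hsplit := Finset.sum_filter_add_sum_filter_not s (fun x : S => 0 < x.1) g
  set s₁ := s.filter (fun x : S => 0 < x.1) with hs₁
  set s₂ := s.filter (fun x : S => ¬ 0 < x.1) with hs₂
  -- sums of r² over shifted indices
  have hinjsub : ∀ u : Finset S, ∀ x ∈ u, ∀ y ∈ u,
      x.1 - (n : ℤ) = y.1 - (n : ℤ) → x = y := by
    intro u x _ y _ h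
    exact Subtype.ext (by omega)
  have hA1 : ∑ x ∈ s₁, r (x.1 - (n : ℤ)) ^ 2 ≤ T := by
    have h := Summable.sum_le_tsum (s₁.image (fun x : S => x.1 - (n : ℤ)))
      (fun m _ => sq_nonneg (r m)) hr2
    rw [Finset.sum_image (hinjsub s₁)] at h
    exact h
  have hA2 : ∑ x ∈ s₂, r (x.1 - (n : ℤ)) ^ 2 ≤ E2 := by
    rw [hE2']
    have h := Summable.sum_le_tsum (s₂.image (fun x : S => x.1 - (n : ℤ)))
      (fun m _ => Set.indicator_nonneg (fun m _ => sq_nonneg (r m)) m) hsumInd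
    rw [Finset.sum_image (hinjsub s₂)] at h
    refine le_trans (le_of_eq ?_) h
    refine Finset.sum_congr rfl (fun x hx => ?_)
    rw [Set.indicator_of_mem]
    have hx0 : ¬ 0 < x.1 := (Finset.mem_filter.1 hx).2
    have hmem : (n : ℤ) ≤ |x.1 - (n : ℤ)| := by
      have hle : x.1 - (n : ℤ) ≤ 0 := by omega
      rw [abs_of_nonpos hle]
      omega
    exact hmem
  -- sums of inverse squares
  have habs : ∀ x : S, (|(n : ℝ) + (x.1 : ℝ)|⁻¹) ^ 2 = (((n : ℝ) + (x.1 : ℝ)) ^ 2)⁻¹ := by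
    intro x
    rw [← abs_inv, sq_abs, inv_pow]
  have hB1 : ∑ x ∈ s₁, (|(n : ℝ) + (x.1 : ℝ)|⁻¹) ^ 2 ≤ ((n : ℝ))⁻¹ := by
    set φ : S → ℕ := fun x => ((n : ℤ) + x.1).toNat / 2 with hφ
    have hphi : ∀ x ∈ s₁, ((n : ℤ) + x.1) = 2 * (φ x : ℤ) ∧ n / 2 + 1 ≤ φ x := by
      intro x hx
      have hx0 : 0 < x.1 := (Finset.mem_filter.1 hx).2
      have hpar := x.2.1
      have hn' := hn
      refine ⟨?_, ?_⟩ <;> simp only [hφ] <;> omega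
    have hterm : ∀ x ∈ s₁, (|(n : ℝ) + (x.1 : ℝ)|⁻¹) ^ 2 = (((φ x : ℕ) : ℝ) ^ 2)⁻¹ / 4 := by
      intro x hx
      rw [habs x]
      have h := (hphi x hx).1
      have hcast : (n : ℝ) + (x.1 : ℝ) = 2 * ((φ x : ℕ) : ℝ) := by
        have h2 : (((n : ℤ) + x.1 : ℤ) : ℝ) = ((2 * (φ x : ℤ) : ℤ) : ℝ) := by rw [h]
        push_cast at h2 ⊢
        linarith
      rw [hcast]
      have hφ0 : (0:ℝ) ≤ ((φ x : ℕ) : ℝ) := by positivity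
      rw [mul_pow]
      rw [mul_inv]
      norm_num
      ring
    rw [Finset.sum_congr rfl hterm]
    rw [← Finset.sum_div]
    have hinj : ∀ x ∈ s₁, ∀ y ∈ s₁, φ x = φ y → x = y := by
      intro x hx y hy h
      have h1 := (hphi x hx).1
      have h2 := (hphi y hy).1
      refine Subtype.ext ?_
      have : (2 : ℤ) * (φ x : ℤ) = 2 * (φ y : ℤ) := by rw [h]
      omega
    have himg : ∑ i ∈ s₁, (((φ i : ℕ) : ℝ) ^ 2)⁻¹ = ∑ i ∈ s₁.image φ, ((i : ℝ) ^ 2)⁻¹ :=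
      (Finset.sum_image (f := fun j : ℕ => ((j : ℝ) ^ 2)⁻¹) hinj).symm
    rw [himg]
    have htail := aux_tail (n / 2 + 1) (by omega) (s₁.image φ) (fun i hi => by
      obtain ⟨x, hx, rfl⟩ := Finset.mem_image.1 hi
      exact (hphi x hx).2)
    have hn2 : (n : ℝ) ≤ 2 * ((n / 2 + 1 : ℕ) : ℝ) := by
      have : n ≤ 2 * (n / 2 + 1) := by omega
      exact_mod_cast this
    have hpos : (0 : ℝ) < ((n / 2 + 1 : ℕ) : ℝ) := by positivity
    have hnpos : (0 : ℝ) < (n : ℝ) := by positivity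
    calc (∑ i ∈ s₁.image φ, ((i : ℝ) ^ 2)⁻¹) / 4
        ≤ (2 / ((n / 2 + 1 : ℕ) : ℝ)) / 4 := by
          apply div_le_div_of_nonneg_right htail; norm_num
      _ ≤ ((n : ℝ))⁻¹ := by
          rw [div_div, inv_eq_one_div]
          rw [div_le_div_iff₀ (by positivity) hnpos]
          nlinarith
  have hB2 : ∑ x ∈ s₂, (|(n : ℝ) + (x.1 : ℝ)|⁻¹) ^ 2 ≤ 1 := by
    set ψ : S → ℤ := fun x => ((n : ℤ) + x.1) / 2 with hψ
    have hpsi : ∀ x : S, ((n : ℤ) + x.1) = 2 * ψ x := by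
      intro x
      have hpar := x.2.1
      simp only [hψ]; omega
    have hterm : ∀ x ∈ s₂, (|(n : ℝ) + (x.1 : ℝ)|⁻¹) ^ 2 = ((ψ x : ℝ) ^ 2)⁻¹ / 4 := by
      intro x _
      rw [habs x]
      have h := hpsi x
      have hcast : (n : ℝ) + (x.1 : ℝ) = 2 * (ψ x : ℝ) := by
        have h2 : (((n : ℤ) + x.1 : ℤ) : ℝ) = ((2 * ψ x : ℤ) : ℝ) := by rw [h]
        push_cast at h2 ⊢
        linarith
      rw [hcast, mul_pow, mul_inv]
      norm_num
      ring
    rw [Finset.sum_congr rfl hterm, ← Finset.sum_div]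
    have hinj : ∀ x ∈ s₂, ∀ y ∈ s₂, ψ x = ψ y → x = y := by
      intro x _ y _ h
      have h1 := hpsi x
      have h2 := hpsi y
      refine Subtype.ext ?_
      rw [h] at h1
      omega
    have himg : ∑ i ∈ s₂, ((ψ i : ℝ) ^ 2)⁻¹ = ∑ i ∈ s₂.image ψ, ((i : ℝ) ^ 2)⁻¹ :=
      (Finset.sum_image (f := fun j : ℤ => ((j : ℝ) ^ 2)⁻¹) hinj).symm
    rw [himg]
    have := aux_int (s₂.image ψ)
    linarith
  -- assemble
  calc ∑ x ∈ s, |((x.1 - (n : ℤ) : ℤ) : ℝ) * w (x.1 - (n : ℤ))| /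
          |(n : ℝ) ^ 2 - (x.1 : ℝ) ^ 2|
      ≤ ∑ x ∈ s, g x := Finset.sum_le_sum key
    _ = ∑ x ∈ s₁, g x + ∑ x ∈ s₂, g x := hsplit.symm
    _ ≤ Real.sqrt T * Real.sqrt ((n : ℝ))⁻¹ + Real.sqrt E2 * Real.sqrt 1 := by
        refine add_le_add ?_ ?_
        · exact aux_cs_s10 s₁ (fun x => r (x.1 - (n : ℤ))) (fun x => |(n : ℝ) + (x.1 : ℝ)|⁻¹)
            (fun x _ => hr0 _) (fun x _ => inv_nonneg.2 (abs_nonneg _)) hA1 hB1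
        · exact aux_cs_s10 s₂ (fun x => r (x.1 - (n : ℤ))) (fun x => |(n : ℝ) + (x.1 : ℝ)|⁻¹)
            (fun x _ => hr0 _) (fun x _ => inv_nonneg.2 (abs_nonneg _)) hA2 hB2
    _ = Real.sqrt T / Real.sqrt n + Real.sqrt E2 := by
        rw [Real.sqrt_inv, Real.sqrt_one, mul_one, div_eq_mul_inv]
end

section
/- Let H, N ≥ 2 with H = N². Consider the function α(λ) = ∑_{k ∈ ℤ} 1/|λ - k²| on the boundary of the rectangle Π = {z ∈ ℂ : -H ≤ Re z ≤ N² + N, |Im z| ≤ H}. If there is an absolute constant C₁ such that ∑_k 1/(|n² - k²| + b) ≤ C₁ (log b)/√b for all n ∈ ℕ and b ≥ 2, then the contour integral ∫_{∂Π} α(λ) |dλ| is at most C·N log N for some absolute constant C. -/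
/-- `α(λ) = ∑_{k ∈ ℤ} 1/|λ - k²|`. -/
noncomputable def alpha16 (lam : ℂ) : ℝ := ∑' k : ℤ, 1 / ‖lam - (k : ℂ) ^ 2‖


open MeasureTheory

lemma sq_add_one_summable : Summable (fun k : ℤ => 1 / ((k:ℝ)^2 + 1)) := by
  have h2 : Summable (fun n : ℕ => 1 / ((n:ℝ)+1)^2) := by
    have := (summable_nat_add_iff (f := fun n : ℕ => 1 / (n:ℝ)^2) 1).2
      (Real.summable_one_div_nat_pow.2 one_lt_two)
    exact this.congr (by intro n; push_cast; ring_nf)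
  have hnat : Summable (fun n : ℕ => 1 / ((n:ℝ)^2 + 1)) := by
    rw [← summable_nat_add_iff 1]
    apply h2.of_nonneg_of_le (fun n => by positivity)
    intro n
    apply one_div_le_one_div_of_le (by positivity)
    push_cast; nlinarith [Nat.cast_nonneg (α := ℝ) n]
  apply Summable.of_nat_of_neg
  · exact hnat.congr (by intro n; norm_num)
  · exact hnat.congr (by intro n; push_cast; norm_num)

lemma summable_aux (A b : ℝ) (hb : 0 < b) :
    Summable (fun k : ℤ => 1 / (|A - (k:ℝ)^2| + b)) := by
  have h1 : Summable (fun k : ℤ => (1 + (|A| + 1)/b) * (1 / ((k:ℝ)^2 + 1))) :=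
    sq_add_one_summable.mul_left _
  apply h1.of_nonneg_of_le (fun k => by positivity)
  intro k
  rw [mul_one_div, div_le_div_iff₀ (by positivity) (by positivity), one_mul]
  have h3 : (k:ℝ)^2 - A ≤ |A - (k:ℝ)^2| := by
    rw [abs_sub_comm]; exact le_abs_self _
  have h4 : A ≤ |A| := le_abs_self A
  have h5 : (0:ℝ) ≤ (|A|+1)/b * |A - (k:ℝ)^2| := by positivity
  have expand : (1 + (|A|+1)/b) * (|A - (k:ℝ)^2| + b)
      = |A - (k:ℝ)^2| + b + (|A|+1)/b * |A - (k:ℝ)^2| + (|A|+1) := by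
    field_simp; ring
  rw [expand]; linarith

lemma alpha_le (C₁ : ℝ)
    (hC₁ : ∀ (n : ℕ) (b : ℝ), 2 ≤ b →
      (∑' k : ℤ, 1 / (|(n : ℝ) ^ 2 - (k : ℝ) ^ 2| + b)) ≤ C₁ * Real.log b / Real.sqrt b)
    (lam : ℂ) (n : ℕ) (b c : ℝ) (hb : 2 ≤ b) (hc : 0 < c)
    (h : ∀ k : ℤ, |(n:ℝ)^2 - (k:ℝ)^2| + b ≤ c * ‖lam - (k:ℂ)^2‖) :
    alpha16 lam ≤ c * (C₁ * Real.log b / Real.sqrt b) := by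
  have hg : Summable (fun k : ℤ => 1 / (|(n:ℝ)^2 - (k:ℝ)^2| + b)) :=
    summable_aux _ _ (by linarith)
  have hcg : Summable (fun k : ℤ => c * (1 / (|(n:ℝ)^2 - (k:ℝ)^2| + b))) := hg.mul_left c
  have hbound : ∀ k : ℤ, 1 / ‖lam - (k:ℂ)^2‖
      ≤ c * (1 / (|(n:ℝ)^2 - (k:ℝ)^2| + b)) := by
    intro k
    have hden : (0:ℝ) < |(n:ℝ)^2 - (k:ℝ)^2| + b := by positivity
    have habs : (0:ℝ) < ‖lam - (k:ℂ)^2‖ := by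
      by_contra hcon
      push_neg at hcon
      have := h k
      have h0 : ‖lam - (k:ℂ)^2‖ = 0 :=
        le_antisymm hcon (norm_nonneg _)
      rw [h0, mul_zero] at this
      linarith
    rw [mul_one_div, div_le_div_iff₀ habs hden, one_mul]
    exact h k
  have hf : Summable (fun k : ℤ => 1 / ‖lam - (k:ℂ)^2‖) :=
    hcg.of_nonneg_of_le (fun k => by positivity) hbound
  calc alpha16 lam ≤ ∑' k : ℤ, c * (1 / (|(n:ℝ)^2 - (k:ℝ)^2| + b)) :=
        Summable.tsum_le_tsum hbound hf hcg
    _ = c * ∑' k : ℤ, 1 / (|(n:ℝ)^2 - (k:ℝ)^2| + b) := tsum_mul_left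
    _ ≤ c * (C₁ * Real.log b / Real.sqrt b) :=
        mul_le_mul_of_nonneg_left (hC₁ n b hb) hc.le

lemma abs_ge (lam : ℂ) (k : ℤ) :
    |lam.re - (k:ℝ)^2| ≤ ‖lam - (k:ℂ)^2‖ ∧
    |lam.im| ≤ ‖lam - (k:ℂ)^2‖ := by
  have h1 := Complex.abs_re_le_norm (lam - (k:ℂ)^2)
  have h2 := Complex.abs_im_le_norm (lam - (k:ℂ)^2)
  have hre : (lam - (k:ℂ)^2).re = lam.re - (k:ℝ)^2 := by
    simp [pow_two, Complex.mul_re]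
  have him : (lam - (k:ℂ)^2).im = lam.im := by
    simp [pow_two, Complex.mul_im]
  rw [hre] at h1; rw [him] at h2; exact ⟨h1, h2⟩

lemma log_div_sqrt_le (C₁ b B d : ℝ) (hC₁ : 0 ≤ C₁) (h1 : 1 ≤ b) (hbB : b ≤ B)
    (hd : 0 < d) (hdb : d ≤ Real.sqrt b) :
    C₁ * Real.log b / Real.sqrt b ≤ C₁ * Real.log B / d := by
  have hlB : 0 ≤ C₁ * Real.log B := by
    have : (0:ℝ) ≤ Real.log B := Real.log_nonneg (h1.trans hbB)
    positivity
  have hnum : C₁ * Real.log b ≤ C₁ * Real.log B :=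
    mul_le_mul_of_nonneg_left (Real.log_le_log (by linarith) hbB) hC₁
  exact div_le_div₀ hlB hnum hd hdb

lemma interval_integral_le' (a b : ℝ) (hab : a ≤ b) (f g : ℝ → ℝ)
    (hg : IntervalIntegrable g volume a b) (hg0 : ∀ x ∈ Set.Icc a b, 0 ≤ g x)
    (h : ∀ x ∈ Set.Icc a b, f x ≤ g x) :
    (∫ x in a..b, f x) ≤ ∫ x in a..b, g x := by
  by_cases hint : IntervalIntegrable f volume a b
  · exact intervalIntegral.integral_mono_on hab hint hg h
  · rw [intervalIntegral.integral_undef hint]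
    exact intervalIntegral.integral_nonneg hab hg0

lemma cont_on_sqrt_inv (c : ℝ) (s : Set ℝ) (h : ∀ y ∈ s, (0:ℝ) < c + y) :
    ContinuousOn (fun y : ℝ => 1 / Real.sqrt (c + y)) s := by
  apply ContinuousOn.div continuousOn_const
  · exact (Real.continuous_sqrt.comp (continuous_const.add continuous_id)).continuousOn
  · intro y hy
    exact (Real.sqrt_pos.2 (h y hy)).ne'

lemma int_sqrt_right (Hh : ℝ) (h : 0 ≤ Hh) :
    ∫ y in (0:ℝ)..Hh, 1 / Real.sqrt (2 + y) = 2 * Real.sqrt (2 + Hh) - 2 * Real.sqrt 2 := by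
  have hderiv : ∀ y ∈ Set.uIcc (0:ℝ) Hh,
      HasDerivAt (fun t => 2 * Real.sqrt (2 + t)) (1 / Real.sqrt (2 + y)) y := by
    intro y hy
    rw [Set.uIcc_of_le h] at hy
    have hpos : (0:ℝ) < 2 + y := by have := hy.1; linarith
    have h1 : HasDerivAt (fun t : ℝ => 2 + t) 1 y := (hasDerivAt_id y).const_add 2
    have h2 : HasDerivAt Real.sqrt (1 / (2 * Real.sqrt (2 + y))) (2 + y) :=
      Real.hasDerivAt_sqrt hpos.ne'
    have h3 := (h2.comp y h1).const_mul 2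
    refine h3.congr_deriv ?_
    have : Real.sqrt (2 + y) ≠ 0 := (Real.sqrt_pos.2 hpos).ne'
    field_simp
  have hint : IntervalIntegrable (fun y => 1 / Real.sqrt (2 + y)) volume 0 Hh := by
    apply ContinuousOn.intervalIntegrable
    apply cont_on_sqrt_inv
    intro y hy
    rw [Set.uIcc_of_le h] at hy
    linarith [hy.1]
  have := intervalIntegral.integral_eq_sub_of_hasDerivAt hderiv hint
  rw [this]
  norm_num

lemma fabs_cont : Continuous (fun y : ℝ => 1 / Real.sqrt (2 + |y|)) := by
  apply Continuous.div continuous_const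
  · exact Real.continuous_sqrt.comp (continuous_const.add continuous_abs)
  · intro y
    have : (0:ℝ) < 2 + |y| := by positivity
    exact (Real.sqrt_pos.2 this).ne'

lemma int_sqrt_abs (Hh : ℝ) (h : 0 ≤ Hh) :
    ∫ y in (-Hh)..Hh, 1 / Real.sqrt (2 + |y|) ≤ 4 * Real.sqrt (2 + Hh) := by
  have hint1 : IntervalIntegrable (fun y => 1 / Real.sqrt (2 + |y|)) volume (-Hh) 0 :=
    fabs_cont.intervalIntegrable _ _
  have hint2 : IntervalIntegrable (fun y => 1 / Real.sqrt (2 + |y|)) volume 0 Hh :=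
    fabs_cont.intervalIntegrable _ _
  rw [← intervalIntegral.integral_add_adjacent_intervals hint1 hint2]
  have hright : (∫ y in (0:ℝ)..Hh, 1 / Real.sqrt (2 + |y|))
      = 2 * Real.sqrt (2 + Hh) - 2 * Real.sqrt 2 := by
    rw [← int_sqrt_right Hh h]
    apply intervalIntegral.integral_congr
    intro y hy
    rw [Set.uIcc_of_le h] at hy
    simp only []
    rw [abs_of_nonneg hy.1]
  have hleft : (∫ y in (-Hh)..(0:ℝ), 1 / Real.sqrt (2 + |y|))
      = 2 * Real.sqrt (2 + Hh) - 2 * Real.sqrt 2 := by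
    have := intervalIntegral.integral_comp_neg (a := 0) (b := Hh)
      (fun y => 1 / Real.sqrt (2 + |y|))
    simp only [abs_neg, neg_zero] at this
    rw [← this, hright]
  rw [hright, hleft]
  have : (0:ℝ) ≤ Real.sqrt 2 := Real.sqrt_nonneg 2
  linarith

section Sides
variable {C₁ : ℝ}
  (hC₁ : ∀ (n : ℕ) (b : ℝ), 2 ≤ b →
    (∑' k : ℤ, 1 / (|(n : ℝ) ^ 2 - (k : ℝ) ^ 2| + b)) ≤ C₁ * Real.log b / Real.sqrt b)
  (hC₁0 : 0 ≤ C₁)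
include hC₁ hC₁0

lemma left_bound (N : ℕ) (hN : (2:ℝ) ≤ N) (y : ℝ) (hy : |y| ≤ (N:ℝ)^2) :
    alpha16 ((-(N : ℝ) ^ 2 : ℂ) + y * Complex.I)
      ≤ 6 * (C₁ * Real.log (2*(N:ℝ)^2) / N) := by
  set H := (N:ℝ)^2 with hHdef
  have hH4 : (4:ℝ) ≤ H := by nlinarith
  have hy0 : 0 ≤ |y| := abs_nonneg y
  have hb : (2:ℝ) ≤ H + |y| := by linarith
  have h : ∀ k : ℤ, |((0:ℕ):ℝ)^2 - (k:ℝ)^2| + (H + |y|)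
      ≤ 6 * ‖((-(N : ℝ) ^ 2 : ℂ) + y * Complex.I) - (k:ℂ)^2‖ := by
    intro k
    obtain ⟨h1, h2⟩ := abs_ge ((-(N : ℝ) ^ 2 : ℂ) + y * Complex.I) k
    have hre : ((-(N : ℝ) ^ 2 : ℂ) + y * Complex.I).re = -H := by
      simp [hHdef, pow_two, Complex.mul_re]
    have him : ((-(N : ℝ) ^ 2 : ℂ) + y * Complex.I).im = y := by
      simp [pow_two, Complex.mul_im]
    rw [hre] at h1; rw [him] at h2
    have e1 : |((0:ℕ):ℝ)^2 - (k:ℝ)^2| = (k:ℝ)^2 := by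
      rw [abs_sub_comm]; simp [abs_of_nonneg (sq_nonneg ((k:ℝ)))]
    have e2 : H + (k:ℝ)^2 ≤ |(-H) - (k:ℝ)^2| := by
      have := neg_le_abs ((-H) - (k:ℝ)^2); linarith
    have habs : (0:ℝ) ≤ ‖((-(N : ℝ) ^ 2 : ℂ) + y * Complex.I) - (k:ℂ)^2‖ :=
      norm_nonneg _
    rw [e1]
    linarith
  have halpha := alpha_le C₁ hC₁ _ 0 (H + |y|) 6 hb (by norm_num) h
  refine halpha.trans (mul_le_mul_of_nonneg_left ?_ (by norm_num))
  apply log_div_sqrt_le _ _ _ _ hC₁0 (by linarith) (by linarith) (by linarith)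
  have : Real.sqrt H ≤ Real.sqrt (H + |y|) := Real.sqrt_le_sqrt (by linarith)
  rw [hHdef, Real.sqrt_sq (by linarith)] at this
  exact this

lemma horiz_bound (N : ℕ) (hN : (2:ℝ) ≤ N) (lam : ℂ)
    (hre1 : -((N:ℝ)^2) ≤ lam.re) (hre2 : lam.re ≤ (N:ℝ)^2 + N)
    (him : |lam.im| = (N:ℝ)^2) :
    alpha16 lam ≤ 6 * (C₁ * Real.log (2*(N:ℝ)^2) / N) := by
  set H := (N:ℝ)^2 with hHdef
  set x := lam.re with hxdef
  have hH4 : (4:ℝ) ≤ H := by nlinarith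
  have hsqrtH : Real.sqrt H = N := by rw [hHdef, Real.sqrt_sq (by linarith)]
  rcases le_or_gt x 0 with hx | hx
  · -- x ≤ 0 : use n = 0, b = H + |x|
    have hxabs : |x| = -x := abs_of_nonpos hx
    have hb : (2:ℝ) ≤ H + |x| := by linarith [abs_nonneg x]
    have h : ∀ k : ℤ, |((0:ℕ):ℝ)^2 - (k:ℝ)^2| + (H + |x|)
        ≤ 6 * ‖lam - (k:ℂ)^2‖ := by
      intro k
      obtain ⟨h1, h2⟩ := abs_ge lam k
      rw [him] at h2
      have e1 : |((0:ℕ):ℝ)^2 - (k:ℝ)^2| = (k:ℝ)^2 := by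
        rw [abs_sub_comm]; simp [abs_of_nonneg (sq_nonneg ((k:ℝ)))]
      have e2 : (k:ℝ)^2 - x ≤ |x - (k:ℝ)^2| := by
        have := neg_le_abs (x - (k:ℝ)^2); linarith
      have habs : (0:ℝ) ≤ ‖lam - (k:ℂ)^2‖ := norm_nonneg _
      rw [e1]
      linarith
    have halpha := alpha_le C₁ hC₁ _ 0 (H + |x|) 6 hb (by norm_num) h
    refine halpha.trans (mul_le_mul_of_nonneg_left ?_ (by norm_num))
    apply log_div_sqrt_le _ _ _ _ hC₁0 (by linarith) (by rw [hxabs]; linarith) (by linarith)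
    have : Real.sqrt H ≤ Real.sqrt (H + |x|) := Real.sqrt_le_sqrt (by linarith [abs_nonneg x])
    rw [hsqrtH] at this
    exact this
  · -- 0 < x : use n = Nat.sqrt ⌊x⌋₊, b = H
    set n : ℕ := Nat.sqrt ⌊x⌋₊ with hndef
    have hfl : ((⌊x⌋₊:ℕ):ℝ) ≤ x := Nat.floor_le hx.le
    have hfl2 : x < (⌊x⌋₊:ℝ) + 1 := Nat.lt_floor_add_one x
    have hn1 : (n:ℝ)^2 ≤ x := by
      have : (n^2 : ℕ) ≤ ⌊x⌋₊ := Nat.sqrt_le' _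
      calc ((n:ℝ))^2 = ((n^2 : ℕ):ℝ) := by push_cast; ring
        _ ≤ (⌊x⌋₊:ℝ) := by exact_mod_cast this
        _ ≤ x := hfl
    have hn2 : x < ((n:ℝ) + 1)^2 := by
      have : ⌊x⌋₊ < (n+1)^2 := Nat.lt_succ_sqrt' _
      have hcast : (⌊x⌋₊:ℝ) + 1 ≤ (((n+1)^2 : ℕ):ℝ) := by
        exact_mod_cast this
      calc x < (⌊x⌋₊:ℝ) + 1 := hfl2
        _ ≤ (((n+1)^2 : ℕ):ℝ) := hcast
        _ = ((n:ℝ)+1)^2 := by push_cast; ring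
    have hnN : (n:ℝ) ≤ N := by
      by_contra hcon
      push_neg at hcon
      have : (N:ℝ) + 1 ≤ n := by
        have : (N:ℕ) < n := by exact_mod_cast hcon
        exact_mod_cast this
      nlinarith
    have hxn : x - (n:ℝ)^2 ≤ 2*N + 1 := by nlinarith
    have h : ∀ k : ℤ, |(n:ℝ)^2 - (k:ℝ)^2| + H ≤ 6 * ‖lam - (k:ℂ)^2‖ := by
      intro k
      obtain ⟨h1, h2⟩ := abs_ge lam k
      rw [him] at h2
      have e2 : |(n:ℝ)^2 - (k:ℝ)^2| ≤ |(n:ℝ)^2 - x| + |x - (k:ℝ)^2| := abs_sub_le _ _ _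
      have e3 : |(n:ℝ)^2 - x| = x - (n:ℝ)^2 := by
        rw [abs_sub_comm]; exact abs_of_nonneg (by linarith)
      have habs : (0:ℝ) ≤ ‖lam - (k:ℂ)^2‖ := norm_nonneg _
      -- 2N+1 ≤ 2H since N ≥ 2
      have h2N : 2*(N:ℝ) + 1 ≤ 2*H := by nlinarith
      linarith
    have halpha := alpha_le C₁ hC₁ _ n H 6 (by linarith) (by norm_num) h
    refine halpha.trans (mul_le_mul_of_nonneg_left ?_ (by norm_num))
    apply log_div_sqrt_le _ _ _ _ hC₁0 (by linarith) (by linarith) (by linarith)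
    rw [hsqrtH]

lemma right_bound (N : ℕ) (hN : (2:ℝ) ≤ N) (y : ℝ) (hy : |y| ≤ (N:ℝ)^2) :
    alpha16 ((((N : ℝ) ^ 2 + N : ℝ) : ℂ) + y * Complex.I)
      ≤ 6 * C₁ * Real.log (2*(N:ℝ)^2) * (1 / Real.sqrt (2 + |y|)) := by
  set H := (N:ℝ)^2 with hHdef
  have hH4 : (4:ℝ) ≤ H := by nlinarith
  have hy0 : 0 ≤ |y| := abs_nonneg y
  have hb : (2:ℝ) ≤ (N:ℝ) + |y| := by linarith
  set lam : ℂ := (((N : ℝ) ^ 2 + N : ℝ) : ℂ) + y * Complex.I with hlam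
  have h : ∀ k : ℤ, |(N:ℝ)^2 - (k:ℝ)^2| + ((N:ℝ) + |y|)
      ≤ 6 * ‖lam - (k:ℂ)^2‖ := by
    intro k
    obtain ⟨h1, h2⟩ := abs_ge lam k
    have hre : lam.re = H + N := by
      simp [hlam, hHdef, pow_two, Complex.mul_re]
    have him : lam.im = y := by
      simp [hlam, pow_two, Complex.mul_im]
    rw [hre] at h1; rw [him] at h2
    have habs : (0:ℝ) ≤ ‖lam - (k:ℂ)^2‖ := norm_nonneg _
    have key : |(N:ℝ)^2 - (k:ℝ)^2| + N ≤ 3 * |H + (N:ℝ) - (k:ℝ)^2| := by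
      rcases le_or_gt (k^2) ((N:ℤ)^2) with hk | hk
      · have hkr : (k:ℝ)^2 ≤ (N:ℝ)^2 := by exact_mod_cast hk
        have e1 : |(N:ℝ)^2 - (k:ℝ)^2| = (N:ℝ)^2 - (k:ℝ)^2 := abs_of_nonneg (by linarith)
        have e2 : H + (N:ℝ) - (k:ℝ)^2 ≤ |H + (N:ℝ) - (k:ℝ)^2| := le_abs_self _
        rw [e1]; rw [hHdef] at e2 ⊢; linarith
      · have hkabs : (N:ℤ) < |k| := by
          nlinarith [sq_abs k, abs_nonneg k, Int.natCast_nonneg N]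
        have hk1 : ((N:ℤ) + 1)^2 ≤ k^2 := by
          have h' : (N:ℤ) + 1 ≤ |k| := hkabs
          calc ((N:ℤ)+1)^2 ≤ |k|^2 := by nlinarith [abs_nonneg k]
            _ = k^2 := sq_abs k
        have hkr : ((N:ℝ)+1)^2 ≤ (k:ℝ)^2 := by exact_mod_cast hk1
        have e1 : |(N:ℝ)^2 - (k:ℝ)^2| = (k:ℝ)^2 - (N:ℝ)^2 := by
          rw [abs_sub_comm]; exact abs_of_nonneg (by nlinarith)
        have e2 : (k:ℝ)^2 - (H + (N:ℝ)) ≤ |H + (N:ℝ) - (k:ℝ)^2| := by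
          have := neg_le_abs (H + (N:ℝ) - (k:ℝ)^2); linarith
        rw [e1]; rw [hHdef] at e2 ⊢; nlinarith
    linarith [abs_nonneg y]
  have halpha := alpha_le C₁ hC₁ _ N ((N:ℝ) + |y|) 6 hb (by norm_num) h
  calc alpha16 lam ≤ 6 * (C₁ * Real.log ((N:ℝ) + |y|) / Real.sqrt ((N:ℝ) + |y|)) := halpha
    _ ≤ 6 * (C₁ * Real.log (2*H) / Real.sqrt (2 + |y|)) := by
        refine mul_le_mul_of_nonneg_left ?_ (by norm_num)
        have hNH : (N:ℝ) ≤ H := by nlinarith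
        apply log_div_sqrt_le _ _ _ _ hC₁0 (by linarith) (by linarith)
          (Real.sqrt_pos.2 (by linarith))
        exact Real.sqrt_le_sqrt (by linarith)
    _ = 6 * C₁ * Real.log (2*H) * (1 / Real.sqrt (2 + |y|)) := by ring

end Sides


/-- If `∑_k 1/(|n²-k²|+b) ≤ C₁ (log b)/√b` for all `n ∈ ℕ`, `b ≥ 2`, then the integral of
`α` over the boundary of the rectangle `Π = {-H ≤ Re z ≤ N²+N, |Im z| ≤ H}` with `H = N²`
is at most `C·N·log N` for an absolute constant `C`. -/
theorem stmt16 (C₁ : ℝ)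
    (hC₁ : ∀ (n : ℕ) (b : ℝ), 2 ≤ b →
      (∑' k : ℤ, 1 / (|(n : ℝ) ^ 2 - (k : ℝ) ^ 2| + b)) ≤ C₁ * Real.log b / Real.sqrt b) :
    ∃ C : ℝ, ∀ N : ℕ, 2 ≤ N →
      (∫ y in (-(N : ℝ) ^ 2)..((N : ℝ) ^ 2),
          alpha16 ((-(N : ℝ) ^ 2 : ℂ) + y * Complex.I)) +
      (∫ x in (-(N : ℝ) ^ 2)..((N : ℝ) ^ 2 + N),
          alpha16 ((x : ℂ) + ((N : ℝ) ^ 2 : ℝ) * Complex.I)) +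
      (∫ x in (-(N : ℝ) ^ 2)..((N : ℝ) ^ 2 + N),
          alpha16 ((x : ℂ) - ((N : ℝ) ^ 2 : ℝ) * Complex.I)) +
      (∫ y in (-(N : ℝ) ^ 2)..((N : ℝ) ^ 2),
          alpha16 (((N : ℝ) ^ 2 + N : ℝ) + y * Complex.I)) ≤
      C * N * Real.log N := by
  -- C₁ is nonnegative
  have hC₁0 : 0 ≤ C₁ := by
    have ht := hC₁ 0 2 le_rfl
    have hts : (0:ℝ) ≤ ∑' k : ℤ, 1 / (|((0:ℕ):ℝ)^2 - (k:ℝ)^2| + 2) :=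
      tsum_nonneg (fun k => by positivity)
    have h0 : (0:ℝ) ≤ C₁ * Real.log 2 / Real.sqrt 2 := le_trans hts ht
    have hlog2 : (0:ℝ) < Real.log 2 := Real.log_pos one_lt_two
    have hs2 : (0:ℝ) < Real.sqrt 2 := Real.sqrt_pos.2 two_pos
    rcases le_or_gt 0 C₁ with h | h
    · exact h
    · exfalso
      have : C₁ * Real.log 2 / Real.sqrt 2 < 0 :=
        div_neg_of_neg_of_pos (mul_neg_of_neg_of_pos h hlog2) hs2
      linarith
  refine ⟨252 * C₁, ?_⟩
  intro N hN
  have hN2 : (2:ℝ) ≤ N := by exact_mod_cast hN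
  have hNpos : (0:ℝ) < N := by linarith
  set H : ℝ := (N:ℝ)^2 with hHdef
  have hH4 : (4:ℝ) ≤ H := by nlinarith
  have hNH : (N:ℝ) ≤ H := by nlinarith
  set L : ℝ := Real.log (2*H) with hLdef
  have hL0 : (0:ℝ) ≤ L := Real.log_nonneg (by nlinarith)
  set M : ℝ := 6 * (C₁ * L / N) with hMdef
  have hM0 : 0 ≤ M := by
    have : (0:ℝ) ≤ C₁ * L / N := by positivity
    linarith
  have hlogN0 : (0:ℝ) ≤ Real.log N := Real.log_nonneg (by linarith)
  -- L ≤ 3 log N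
  have hL3 : L ≤ 3 * Real.log N := by
    rw [hLdef, hHdef, Real.log_mul (by norm_num) (by positivity), Real.log_pow]
    have : Real.log 2 ≤ Real.log N := Real.log_le_log (by norm_num) hN2
    push_cast
    linarith
  -- bound 1 : left side
  have hI1 : (∫ y in (-(N : ℝ) ^ 2)..((N : ℝ) ^ 2),
      alpha16 ((-(N : ℝ) ^ 2 : ℂ) + y * Complex.I)) ≤ (H - (-H)) * M := by
    have := interval_integral_le' (-H) H (by linarith)
      (fun y => alpha16 ((-(N : ℝ) ^ 2 : ℂ) + y * Complex.I)) (fun _ => M)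
      intervalIntegrable_const (fun x _ => hM0)
      (fun y hy => left_bound hC₁ hC₁0 N hN2 y (abs_le.2 ⟨hy.1, hy.2⟩))
    rw [intervalIntegral.integral_const, smul_eq_mul] at this
    exact this
  -- bound 2 : top side
  have hI2 : (∫ x in (-(N : ℝ) ^ 2)..((N : ℝ) ^ 2 + N),
      alpha16 ((x : ℂ) + ((N : ℝ) ^ 2 : ℝ) * Complex.I)) ≤ (H + N - (-H)) * M := by
    have := interval_integral_le' (-H) (H + N) (by linarith)
      (fun x => alpha16 ((x : ℂ) + ((N : ℝ) ^ 2 : ℝ) * Complex.I)) (fun _ => M)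
      intervalIntegrable_const (fun x _ => hM0) ?_
    · rw [intervalIntegral.integral_const, smul_eq_mul] at this
      exact this
    · intro x hx
      have hre : ((x:ℂ) + (((N:ℝ)^2 : ℝ):ℂ) * Complex.I).re = x := by
        simp [pow_two, Complex.mul_re, Complex.mul_im]
      have him : ((x:ℂ) + (((N:ℝ)^2 : ℝ):ℂ) * Complex.I).im = (N:ℝ)^2 := by
        simp [pow_two, Complex.mul_re, Complex.mul_im]
      apply horiz_bound hC₁ hC₁0 N hN2
      · rw [hre, ← hHdef]; exact hx.1
      · rw [hre, ← hHdef]; exact hx.2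
      · rw [him]; exact abs_of_nonneg (by positivity)
  -- bound 3 : bottom side
  have hI3 : (∫ x in (-(N : ℝ) ^ 2)..((N : ℝ) ^ 2 + N),
      alpha16 ((x : ℂ) - ((N : ℝ) ^ 2 : ℝ) * Complex.I)) ≤ (H + N - (-H)) * M := by
    have := interval_integral_le' (-H) (H + N) (by linarith)
      (fun x => alpha16 ((x : ℂ) - ((N : ℝ) ^ 2 : ℝ) * Complex.I)) (fun _ => M)
      intervalIntegrable_const (fun x _ => hM0) ?_
    · rw [intervalIntegral.integral_const, smul_eq_mul] at this
      exact this
    · intro x hx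
      have hre : ((x:ℂ) - (((N:ℝ)^2 : ℝ):ℂ) * Complex.I).re = x := by
        simp [pow_two, Complex.mul_re, Complex.mul_im]
      have him : ((x:ℂ) - (((N:ℝ)^2 : ℝ):ℂ) * Complex.I).im = -((N:ℝ)^2) := by
        simp [pow_two, Complex.mul_re, Complex.mul_im]
      apply horiz_bound hC₁ hC₁0 N hN2
      · rw [hre, ← hHdef]; exact hx.1
      · rw [hre, ← hHdef]; exact hx.2
      · rw [him, abs_neg]; exact abs_of_nonneg (by positivity)
  -- bound 4 : right side
  have hI4 : (∫ y in (-(N : ℝ) ^ 2)..((N : ℝ) ^ 2),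
      alpha16 (((N : ℝ) ^ 2 + N : ℝ) + y * Complex.I))
      ≤ 6 * C₁ * L * (4 * Real.sqrt (2 + H)) := by
    have hg : IntervalIntegrable
        (fun y => 6 * C₁ * L * (1 / Real.sqrt (2 + |y|))) volume (-H) H :=
      (continuous_const.mul fabs_cont).intervalIntegrable _ _
    have hstep := interval_integral_le' (-H) H (by linarith)
      (fun y => alpha16 (((N : ℝ) ^ 2 + N : ℝ) + y * Complex.I))
      (fun y => 6 * C₁ * L * (1 / Real.sqrt (2 + |y|))) hg
      (fun y _ => by
        apply mul_nonneg (mul_nonneg (mul_nonneg (by norm_num) hC₁0) hL0) (by positivity))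
      (fun y hy => right_bound hC₁ hC₁0 N hN2 y (abs_le.2 ⟨hy.1, hy.2⟩))
    refine hstep.trans ?_
    rw [intervalIntegral.integral_const_mul]
    apply mul_le_mul_of_nonneg_left (int_sqrt_abs H (by linarith))
    exact mul_nonneg (mul_nonneg (by norm_num) hC₁0) hL0
  -- numeric assembly
  have hsqrt : Real.sqrt (2 + H) ≤ 1.5 * N := by
    have h1 : Real.sqrt (2 + H) ≤ Real.sqrt ((1.5 * N)^2) :=
      Real.sqrt_le_sqrt (by nlinarith)
    rwa [Real.sqrt_sq (by positivity)] at h1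
  have e1 : (H - (-H)) * M = 12 * C₁ * L * (N:ℝ) := by
    rw [hMdef, hHdef]; field_simp; ring
  have e2 : (H + N - (-H)) * M ≤ 18 * C₁ * L * (N:ℝ) := by
    have h23 : H + (N:ℝ) - (-H) ≤ 3 * H := by linarith
    have := mul_le_mul_of_nonneg_right h23 hM0
    have e3 : 3 * H * M = 18 * C₁ * L * (N:ℝ) := by
      rw [hMdef, hHdef]; field_simp; ring
    linarith
  have e4 : 6 * C₁ * L * (4 * Real.sqrt (2 + H)) ≤ 36 * C₁ * L * (N:ℝ) := by
    have hc : (0:ℝ) ≤ 6 * C₁ * L := by positivity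
    have := mul_le_mul_of_nonneg_left
      (mul_le_mul_of_nonneg_left hsqrt (by norm_num : (0:ℝ) ≤ 4)) hc
    calc 6 * C₁ * L * (4 * Real.sqrt (2 + H)) ≤ 6 * C₁ * L * (4 * (1.5 * N)) := this
      _ = 36 * C₁ * L * (N:ℝ) := by ring
  have hfin : C₁ * L * (N:ℝ) ≤ C₁ * (3 * Real.log N) * (N:ℝ) := by
    apply mul_le_mul_of_nonneg_right _ (by linarith)
    exact mul_le_mul_of_nonneg_left hL3 hC₁0
  have hring : 84 * (C₁ * (3 * Real.log N) * (N:ℝ)) = 252 * C₁ * (N:ℝ) * Real.log N := by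
    ring
  nlinarith [hI1, hI2, hI3, hI4, e1, e2, e4, hfin, hring]
end
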